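/- arXiv:2210.00309 — 7 statements merged into one kernel-verified Lean document; each statement's English description precedes it below -/
import Mathlib

section
/- Let z ∈ ℂ with Im z ≤ 0, let f be locally integrable, let 0 ≤ t₁ ≤ t₂, and let G, H : [t₁, t₂] → ℂ be differentiable functions solving the Dirac-type system G'(t) = -i z G(t) + conj(f(t)) H(t), H'(t) = i z H(t) + f(t) G(t). Assume |G(t)| ≤ |H(t)| for all t ∈ [t₁, t₂] (the Hermite–Biehler property of E in the closed lower half-plane). Then the scattering function 𝓔(t) := e^{i t z} G(t) satisfies |𝓔(t₂) − 𝓔(t₁)| ≤ |H(t₁)| · exp( (2 t₂ − t₁) |Im z| + ∫_{t₁}^{t₂} |f(s)| ds ) · ∫_{t₁}^{t₂} |f(s)| ds. -/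
open MeasureTheory Set intervalIntegral

private lemma one_le_fac {ε Δ : ℝ} (hε : 0 < ε) (hε2 : ε ≤ 1/2) (hΔ0 : 0 ≤ Δ)
    (hΔ : Δ ≤ ε/2) : 1 ≤ (1 - Δ) * Real.exp ((1+ε)*Δ) := by
  have h1 : (1+ε)*Δ + 1 ≤ Real.exp ((1+ε)*Δ) := Real.add_one_le_exp _
  have h3 : (1+ε)*Δ ≤ 3/2 * (ε/2) :=
    mul_le_mul (by linarith) hΔ hΔ0 (by linarith)
  have h4 : (0:ℝ) ≤ 1 - Δ := by linarith
  have h2 : (1-Δ)*((1+ε)*Δ+1) ≤ (1-Δ) * Real.exp ((1+ε)*Δ) :=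
    mul_le_mul_of_nonneg_left h1 h4
  nlinarith [mul_nonneg hΔ0 (show (0:ℝ) ≤ ε - (1+ε)*Δ by linarith)]

lemma gronwall_int {a b : ℝ} (hab : a ≤ b) {g w : ℝ → ℝ}
    (hg : IntegrableOn g (Icc a b)) (hg0 : ∀ u, 0 ≤ g u)
    (hw : ContinuousOn w (Icc a b)) (hw0 : ∀ u, 0 ≤ w u)
    {c : ℝ} (hc : 0 ≤ c)
    (hineq : ∀ s ∈ Icc a b, w s ≤ c + ∫ u in a..s, g u * w u) :
    ∀ s ∈ Icc a b, w s ≤ c * Real.exp (∫ u in a..b, g u) := by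
  have hgw : IntegrableOn (fun u => g u * w u) (Icc a b) :=
    hg.mul_continuousOn hw isCompact_Icc
  have hii : ∀ s₁ ∈ Icc a b, ∀ s₂ ∈ Icc a b, s₁ ≤ s₂ →
      IntervalIntegrable (fun u => g u * w u) volume s₁ s₂ := fun s₁ h₁ s₂ h₂ h12 =>
    (intervalIntegrable_iff_integrableOn_Icc_of_le h12).2
      (hgw.mono_set (Icc_subset_Icc h₁.1 h₂.2))
  have hgii : ∀ s₁ ∈ Icc a b, ∀ s₂ ∈ Icc a b, s₁ ≤ s₂ →
      IntervalIntegrable g volume s₁ s₂ := fun s₁ h₁ s₂ h₂ h12 =>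
    (intervalIntegrable_iff_integrableOn_Icc_of_le h12).2
      (hg.mono_set (Icc_subset_Icc h₁.1 h₂.2))
  set y : ℝ → ℝ := fun s => c + ∫ u in a..s, g u * w u with hy
  set F : ℝ → ℝ := fun s => ∫ u in a..s, g u with hF
  have hysub : ∀ s₁ ∈ Icc a b, ∀ s₂ ∈ Icc a b, s₁ ≤ s₂ →
      y s₂ - y s₁ = ∫ u in s₁..s₂, g u * w u := by
    intro s₁ h₁ s₂ h₂ h12
    have := integral_add_adjacent_intervals (hii a (left_mem_Icc.2 hab) s₁ h₁ h₁.1)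
      (hii s₁ h₁ s₂ h₂ h12)
    simp only [hy]; linarith
  have hFsub : ∀ s₁ ∈ Icc a b, ∀ s₂ ∈ Icc a b, s₁ ≤ s₂ →
      F s₂ - F s₁ = ∫ u in s₁..s₂, g u := by
    intro s₁ h₁ s₂ h₂ h12
    have := integral_add_adjacent_intervals (hgii a (left_mem_Icc.2 hab) s₁ h₁ h₁.1)
      (hgii s₁ h₁ s₂ h₂ h12)
    simp only [hF]; linarith
  have hymono : ∀ s₁ ∈ Icc a b, ∀ s₂ ∈ Icc a b, s₁ ≤ s₂ → y s₁ ≤ y s₂ := by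
    intro s₁ h₁ s₂ h₂ h12
    have h := hysub s₁ h₁ s₂ h₂ h12
    have : (0:ℝ) ≤ ∫ u in s₁..s₂, g u * w u :=
      intervalIntegral.integral_nonneg h12 (fun u _ => mul_nonneg (hg0 u) (hw0 u))
    linarith
  have hFmono : ∀ s₁ ∈ Icc a b, ∀ s₂ ∈ Icc a b, s₁ ≤ s₂ → F s₁ ≤ F s₂ := by
    intro s₁ h₁ s₂ h₂ h12
    have h := hFsub s₁ h₁ s₂ h₂ h12
    have : (0:ℝ) ≤ ∫ u in s₁..s₂, g u := intervalIntegral.integral_nonneg h12 (fun u _ => hg0 u)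
    linarith
  have hy0 : ∀ s ∈ Icc a b, 0 ≤ y s := by
    intro s hs
    have : (0:ℝ) ≤ ∫ u in a..s, g u * w u :=
      intervalIntegral.integral_nonneg hs.1 (fun u _ => mul_nonneg (hg0 u) (hw0 u))
    simp only [hy]; linarith
  have hwy : ∀ s ∈ Icc a b, w s ≤ y s := hineq
  -- key piece inequality
  have hkey : ∀ s₁ ∈ Icc a b, ∀ s₂ ∈ Icc a b, s₁ ≤ s₂ →
      y s₂ - y s₁ ≤ (F s₂ - F s₁) * y s₂ := by
    intro s₁ h₁ s₂ h₂ h12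
    rw [hysub s₁ h₁ s₂ h₂ h12, hFsub s₁ h₁ s₂ h₂ h12]
    have hmono : ∫ u in s₁..s₂, g u * w u ≤ ∫ u in s₁..s₂, g u * y s₂ := by
      apply intervalIntegral.integral_mono_on h12 (hii s₁ h₁ s₂ h₂ h12)
        ((hgii s₁ h₁ s₂ h₂ h12).mul_const _)
      intro u hu
      have hu' : u ∈ Icc a b := ⟨le_trans h₁.1 hu.1, le_trans hu.2 h₂.2⟩
      exact mul_le_mul_of_nonneg_left
        (le_trans (hwy u hu') (hymono u hu' s₂ h₂ hu.2)) (hg0 u)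
    calc ∫ u in s₁..s₂, g u * w u ≤ ∫ u in s₁..s₂, g u * y s₂ := hmono
      _ = (∫ u in s₁..s₂, g u) * y s₂ := intervalIntegral.integral_mul_const _ _
  -- Continuity and uniform continuity of F
  have hFcont : ContinuousOn F (Icc a b) := by
    have := continuousOn_primitive_interval (μ := volume) (f := g) (a := a) (b := b)
      (by rwa [uIcc_of_le hab])
    rwa [uIcc_of_le hab] at this
  -- the ε-approximate bound at b
  have hεbound : ∀ ε : ℝ, 0 < ε → ε ≤ 1/2 → y b ≤ c * Real.exp ((1+ε) * F b) := by
    intro ε hε hε2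
    obtain ⟨δ, hδ, hδ'⟩ := (Metric.uniformContinuousOn_iff.1
      (isCompact_Icc.uniformContinuousOn_of_continuous hFcont)) (ε/2) (by linarith)
    obtain ⟨n, hn⟩ := exists_nat_gt ((b - a) / δ)
    set N : ℕ := max n 1 with hN
    have hN1 : 1 ≤ N := le_max_right _ _
    have hNpos : (0:ℝ) < N := by positivity
    have hstep : b - a < δ * N := by
      have h1 : (b - a) / δ < N := lt_of_lt_of_le hn (by exact_mod_cast le_max_left n 1)
      calc b - a = (b - a)/δ * δ := by field_simp
        _ < N * δ := by apply mul_lt_mul_of_pos_right h1 hδ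
        _ = δ * N := mul_comm _ _
    set x : ℕ → ℝ := fun i => a + i * ((b - a)/N) with hx
    have hxmono : ∀ i j : ℕ, i ≤ j → x i ≤ x j := by
      intro i j hij
      have : (i:ℝ) ≤ j := by exact_mod_cast hij
      have hba : 0 ≤ (b - a)/N := div_nonneg (by linarith) hNpos.le
      simp only [hx]; nlinarith
    have hx0 : x 0 = a := by simp [hx]
    have hxN : x N = b := by
      simp only [hx]; field_simp; ring
    have hxmem : ∀ i : ℕ, i ≤ N → x i ∈ Icc a b := by
      intro i hi
      constructor
      · rw [← hx0]; exact hxmono 0 i (Nat.zero_le _)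
      · rw [← hxN]; exact hxmono i N hi
    have hdist : ∀ i : ℕ, dist (x (i+1)) (x i) < δ := by
      intro i
      have : x (i+1) - x i = (b-a)/N := by simp only [hx]; push_cast; ring
      rw [Real.dist_eq, this, abs_of_nonneg (div_nonneg (by linarith) hNpos.le)]
      rw [div_lt_iff₀ hNpos]; linarith
    have main : ∀ i : ℕ, i ≤ N → y (x i) ≤ c * Real.exp ((1+ε) * F (x i)) := by
      intro i
      induction i with
      | zero =>
        intro _
        simp only [hx0, hy, hF, intervalIntegral.integral_same, add_zero, mul_zero,
          Real.exp_zero, mul_one, le_refl]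
      | succ i ih =>
        intro hiN
        have hiN' : i ≤ N := Nat.le_of_succ_le hiN
        have hmem1 : x i ∈ Icc a b := hxmem i hiN'
        have hmem2 : x (i+1) ∈ Icc a b := hxmem (i+1) hiN
        have h12 : x i ≤ x (i+1) := hxmono i (i+1) (Nat.le_succ _)
        set Δ : ℝ := F (x (i+1)) - F (x i) with hΔdef
        have hΔ0 : 0 ≤ Δ := by
          have := hFmono (x i) hmem1 (x (i+1)) hmem2 h12
          simp only [hΔdef]; linarith
        have hΔle : Δ ≤ ε/2 := by
          have := hδ' (x (i+1)) hmem2 (x i) hmem1 (hdist i)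
          rw [Real.dist_eq] at this
          calc Δ ≤ |Δ| := le_abs_self _
            _ ≤ ε/2 := le_of_lt this
        have hpiece := hkey (x i) hmem1 (x (i+1)) hmem2 h12
        have hy2 : 0 ≤ y (x (i+1)) := hy0 _ hmem2
        have hfac : 1 ≤ (1 - Δ) * Real.exp ((1+ε)*Δ) := one_le_fac hε hε2 hΔ0 hΔle
        have h1 : y (x (i+1)) * (1 - Δ) ≤ y (x i) := by nlinarith
        calc y (x (i+1)) = y (x (i+1)) * 1 := by ring
          _ ≤ y (x (i+1)) * ((1 - Δ) * Real.exp ((1+ε)*Δ)) :=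
              mul_le_mul_of_nonneg_left hfac hy2
          _ = (y (x (i+1)) * (1 - Δ)) * Real.exp ((1+ε)*Δ) := by ring
          _ ≤ y (x i) * Real.exp ((1+ε)*Δ) :=
              mul_le_mul_of_nonneg_right h1 (Real.exp_pos _).le
          _ ≤ (c * Real.exp ((1+ε) * F (x i))) * Real.exp ((1+ε)*Δ) :=
              mul_le_mul_of_nonneg_right (ih hiN') (Real.exp_pos _).le
          _ = c * Real.exp ((1+ε) * F (x (i+1))) := by
              rw [mul_assoc, ← Real.exp_add, hΔdef]; ring_nf
    have := main N le_rfl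
    rwa [hxN] at this
  -- pass to the limit ε → 0⁺
  have hyb : y b ≤ c * Real.exp (F b) := by
    have htend : Filter.Tendsto (fun ε : ℝ => c * Real.exp ((1+ε) * F b))
        (nhdsWithin 0 (Ioi 0)) (nhds (c * Real.exp ((1+(0:ℝ)) * F b))) := by
      apply Filter.Tendsto.mono_left _ nhdsWithin_le_nhds
      have hcont : Continuous fun ε : ℝ => c * Real.exp ((1+ε) * F b) :=
        continuous_const.mul
          (Real.continuous_exp.comp ((continuous_const.add continuous_id).mul continuous_const))
      exact hcont.tendsto 0
    have heq : c * Real.exp ((1+(0:ℝ)) * F b) = c * Real.exp (F b) := by norm_num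
    rw [heq] at htend
    refine ge_of_tendsto htend ?_
    filter_upwards [Ioc_mem_nhdsGT_of_mem (Set.left_mem_Ico.2 one_half_pos)] with ε hε
    exact hεbound ε hε.1 hε.2
  intro s hs
  calc w s ≤ y s := hwy s hs
    _ ≤ y b := hymono s hs b (right_mem_Icc.2 hab) hs.2
    _ ≤ c * Real.exp (F b) := hyb

open MeasureTheory Set intervalIntegral

/-- Gronwall-type bound for the scattering function
`𝓔(t) = e^{itz} G(t)` of the Dirac-type system in the closed lower half-plane. -/
theorem gronwall_for_scattering_function
    (z : ℂ) (hz : z.im ≤ 0) (f G H : ℝ → ℂ)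
    (hf : LocallyIntegrableOn f (Set.Ici 0))
    (t₁ t₂ : ℝ) (ht₁ : 0 ≤ t₁) (ht : t₁ ≤ t₂)
    (hG : ∀ t ∈ Set.Icc t₁ t₂,
      HasDerivAt G (-Complex.I * z * G t + (starRingEnd ℂ) (f t) * H t) t)
    (hH : ∀ t ∈ Set.Icc t₁ t₂,
      HasDerivAt H (Complex.I * z * H t + f t * G t) t)
    (hHB : ∀ t ∈ Set.Icc t₁ t₂, ‖G t‖ ≤ ‖H t‖) :
    ‖Complex.exp (Complex.I * t₂ * z) * G t₂ -
        Complex.exp (Complex.I * t₁ * z) * G t₁‖ ≤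
      ‖H t₁‖ *
        Real.exp ((2 * t₂ - t₁) * |z.im| + ∫ s in t₁..t₂, ‖f s‖) *
        ∫ s in t₁..t₂, ‖f s‖ := by
  -- abbreviations
  set g : ℝ → ℝ := fun u => ‖f u‖ with hgdef
  have hg0 : ∀ u, 0 ≤ g u := fun u => norm_nonneg _
  have hIcc : Set.Icc t₁ t₂ ⊆ Set.Ici (0:ℝ) := fun x hx => le_trans ht₁ hx.1
  have hfi : IntegrableOn f (Set.Icc t₁ t₂) :=
    hf.integrableOn_compact_subset hIcc isCompact_Icc
  have hgi : IntegrableOn g (Set.Icc t₁ t₂) := by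
    exact hfi.norm
  have hGc : ContinuousOn G (Set.Icc t₁ t₂) :=
    fun t htt => ((hG t htt).continuousAt).continuousWithinAt
  have hHc : ContinuousOn H (Set.Icc t₁ t₂) :=
    fun t htt => ((hH t htt).continuousAt).continuousWithinAt
  -- absolute values of the exponentials
  have habs_exp : ∀ s : ℝ, ‖Complex.exp (Complex.I * s * z)‖
      = Real.exp (s * |z.im|) := by
    intro s
    rw [Complex.norm_exp, abs_of_nonpos hz]
    congr 1
    simp [Complex.mul_re, Complex.mul_im]
  have habs_exp' : ∀ s : ℝ, ‖Complex.exp (-(Complex.I * s * z))‖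
      = Real.exp (-(s * |z.im|)) := by
    intro s
    rw [Complex.norm_exp, abs_of_nonpos hz]
    congr 1
    simp [Complex.mul_re, Complex.mul_im]
  -- derivatives of the exponentials
  have hexp_deriv : ∀ s : ℝ, HasDerivAt (fun u : ℝ => Complex.exp (-(Complex.I * u * z)))
      (Complex.exp (-(Complex.I * s * z)) * (-(Complex.I * z))) s := by
    intro s
    apply HasDerivAt.cexp
    have h1 : HasDerivAt (fun u : ℝ => (u:ℂ)) 1 s := by
      simpa using (hasDerivAt_id s).ofReal_comp
    have := h1.mul_const (-(Complex.I * z))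
    have heq : (fun u : ℝ => (u:ℂ) * (-(Complex.I * z))) = fun u : ℝ => -(Complex.I * u * z) := by
      funext u; ring
    rw [heq] at this
    simpa using this
  have hexp_deriv' : ∀ s : ℝ, HasDerivAt (fun u : ℝ => Complex.exp (Complex.I * u * z))
      (Complex.exp (Complex.I * s * z) * (Complex.I * z)) s := by
    intro s
    apply HasDerivAt.cexp
    have h1 : HasDerivAt (fun u : ℝ => (u:ℂ)) 1 s := by
      simpa using (hasDerivAt_id s).ofReal_comp
    have := h1.mul_const (Complex.I * z)
    have heq : (fun u : ℝ => (u:ℂ) * (Complex.I * z)) = fun u : ℝ => Complex.I * u * z := by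
      funext u; ring
    rw [heq] at this
    simpa using this
  -- the functions 𝓗 and 𝓔 and their derivatives
  set 𝓗 : ℝ → ℂ := fun s => Complex.exp (-(Complex.I * s * z)) * H s with h𝓗def
  set 𝓔 : ℝ → ℂ := fun s => Complex.exp (Complex.I * s * z) * G s with h𝓔def
  have h𝓗d : ∀ s ∈ Set.Icc t₁ t₂,
      HasDerivAt 𝓗 (Complex.exp (-(Complex.I * s * z)) * (f s * G s)) s := by
    intro s hs
    have := (hexp_deriv s).mul (hH s hs)
    exact this.congr_deriv (by ring)
  have h𝓔d : ∀ s ∈ Set.Icc t₁ t₂,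
      HasDerivAt 𝓔 (Complex.exp (Complex.I * s * z) * ((starRingEnd ℂ) (f s) * H s)) s := by
    intro s hs
    have := (hexp_deriv' s).mul (hG s hs)
    exact this.congr_deriv (by ring)
  -- continuity facts
  have hce : Continuous (fun s : ℝ => Complex.exp (Complex.I * s * z)) :=
    Complex.continuous_exp.comp ((continuous_const.mul Complex.continuous_ofReal).mul
      continuous_const)
  have hce' : Continuous (fun s : ℝ => Complex.exp (-(Complex.I * s * z))) :=
    Complex.continuous_exp.comp (((continuous_const.mul Complex.continuous_ofReal).mul
      continuous_const).neg)
  have h𝓗c : ContinuousOn 𝓗 (Set.Icc t₁ t₂) := hce'.continuousOn.mul hHc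
  set w : ℝ → ℝ := fun s => ‖𝓗 s‖ with hwdef
  have hwc : ContinuousOn w (Set.Icc t₁ t₂) := continuous_norm.comp_continuousOn h𝓗c
  have hw0 : ∀ u, 0 ≤ w u := fun u => norm_nonneg _
  -- integrability of the derivatives
  have h𝓗int : IntegrableOn (fun s : ℝ => Complex.exp (-(Complex.I * s * z)) * (f s * G s))
      (Set.Icc t₁ t₂) := by
    have heq : (fun s : ℝ => Complex.exp (-(Complex.I * s * z)) * (f s * G s))
        = fun s : ℝ => f s * (Complex.exp (-(Complex.I * s * z)) * G s) := by
      funext s; ring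
    rw [heq]
    exact hfi.mul_continuousOn (hce'.continuousOn.mul hGc) isCompact_Icc
  have hfconj : IntegrableOn (fun s => (starRingEnd ℂ) (f s)) (Set.Icc t₁ t₂) :=
    Complex.conjCLE.toContinuousLinearMap.integrable_comp hfi
  have h𝓔int : IntegrableOn
      (fun s : ℝ => Complex.exp (Complex.I * s * z) * ((starRingEnd ℂ) (f s) * H s))
      (Set.Icc t₁ t₂) := by
    have heq : (fun s : ℝ => Complex.exp (Complex.I * s * z) * ((starRingEnd ℂ) (f s) * H s))
        = fun s : ℝ => (starRingEnd ℂ) (f s) * (Complex.exp (Complex.I * s * z) * H s) := by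
      funext s; ring
    rw [heq]
    exact hfconj.mul_continuousOn (hce.continuousOn.mul hHc) isCompact_Icc
  -- the integral inequality for w
  have hgw_int : IntegrableOn (fun u => g u * w u) (Set.Icc t₁ t₂) :=
    hgi.mul_continuousOn hwc isCompact_Icc
  have hineq : ∀ s ∈ Set.Icc t₁ t₂, w s ≤ w t₁ + ∫ u in t₁..s, g u * w u := by
    intro s hs
    have hsub : Set.Icc t₁ s ⊆ Set.Icc t₁ t₂ := Set.Icc_subset_Icc le_rfl hs.2
    have hftc : ∫ u in t₁..s, Complex.exp (-(Complex.I * u * z)) * (f u * G u)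
        = 𝓗 s - 𝓗 t₁ := by
      apply intervalIntegral.integral_eq_sub_of_hasDerivAt
      · intro u hu
        rw [Set.uIcc_of_le hs.1] at hu
        exact h𝓗d u (hsub hu)
      · exact (intervalIntegrable_iff_integrableOn_Icc_of_le hs.1 (ha := enorm_ne_top)).2 (h𝓗int.mono_set hsub)
    have htri : w s ≤ w t₁ + ‖𝓗 s - 𝓗 t₁‖ := by
      have := norm_add_le (𝓗 t₁) (𝓗 s - 𝓗 t₁)
      simpa [hwdef] using this
    have hnorm : ‖𝓗 s - 𝓗 t₁‖
        ≤ ∫ u in t₁..s, ‖Complex.exp (-(Complex.I * u * z)) * (f u * G u)‖ := by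
      rw [← hftc]
      exact intervalIntegral.norm_integral_le_integral_norm hs.1
    have hmono : (∫ u in t₁..s, ‖Complex.exp (-(Complex.I * u * z)) * (f u * G u)‖)
        ≤ ∫ u in t₁..s, g u * w u := by
      apply intervalIntegral.integral_mono_on hs.1
      · exact (intervalIntegrable_iff_integrableOn_Icc_of_le hs.1 (ha := enorm_ne_top)).2
          ((h𝓗int.mono_set hsub).norm)
      · exact (intervalIntegrable_iff_integrableOn_Icc_of_le hs.1 (ha := enorm_ne_top)).2
          (hgw_int.mono_set hsub)
      · intro u hu
        have hu' := hsub hu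
        simp only [norm_mul, hwdef, h𝓗def, hgdef]
        calc ‖Complex.exp (-(Complex.I * u * z))‖ * (‖f u‖ *
              ‖G u‖)
            ≤ ‖Complex.exp (-(Complex.I * u * z))‖ * (‖f u‖ *
              ‖H u‖) := by
              apply mul_le_mul_of_nonneg_left _ (norm_nonneg _)
              exact mul_le_mul_of_nonneg_left (hHB u hu') (norm_nonneg _)
          _ = ‖f u‖ *
              (‖Complex.exp (-(Complex.I * u * z))‖ * ‖H u‖) := by ring
    linarith
  -- Gronwall
  have hgron := gronwall_int ht hgi hg0 hwc hw0 (hw0 t₁) hineq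
  set Fb : ℝ := ∫ u in t₁..t₂, g u with hFbdef
  have hFb0 : 0 ≤ Fb := intervalIntegral.integral_nonneg ht (fun u _ => hg0 u)
  -- FTC for 𝓔
  have hE_ftc : ∫ s in t₁..t₂, Complex.exp (Complex.I * s * z) * ((starRingEnd ℂ) (f s) * H s)
      = 𝓔 t₂ - 𝓔 t₁ := by
    apply intervalIntegral.integral_eq_sub_of_hasDerivAt
    · intro u hu
      rw [Set.uIcc_of_le ht] at hu
      exact h𝓔d u hu
    · exact (intervalIntegrable_iff_integrableOn_Icc_of_le ht (ha := enorm_ne_top)).2 h𝓔int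
  -- the constant
  set C : ℝ := ‖H t₁‖ * Real.exp ((2 * t₂ - t₁) * |z.im| + Fb) with hCdef
  -- pointwise bound for the integrand
  have hw1 : w t₁ = Real.exp (-(t₁ * |z.im|)) * ‖H t₁‖ := by
    simp only [hwdef, h𝓗def, norm_mul, habs_exp']
  have hpoint : ∀ s ∈ Set.Icc t₁ t₂,
      ‖Complex.exp (Complex.I * s * z) * ((starRingEnd ℂ) (f s) * H s)‖ ≤ g s * C := by
    intro s hs
    have hHs : ‖H s‖ = Real.exp (s * |z.im|) * w s := by
      have : H s = Complex.exp (Complex.I * s * z) * 𝓗 s := by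
        simp only [h𝓗def]
        rw [← mul_assoc, ← Complex.exp_add]
        simp
      rw [this, norm_mul, habs_exp]
    have hws : w s ≤ w t₁ * Real.exp Fb := hgron s hs
    simp only [norm_mul, habs_exp, Complex.norm_conj]
    have him : (0:ℝ) ≤ |z.im| := abs_nonneg _
    have hsle : s ≤ t₂ := hs.2
    calc Real.exp (s * |z.im|) * (‖f s‖ * ‖H s‖)
        = ‖f s‖ * (Real.exp (s * |z.im|) * Real.exp (s * |z.im|) * w s) := by
          rw [hHs]; ring
      _ ≤ ‖f s‖ * (Real.exp (t₂ * |z.im|) * Real.exp (t₂ * |z.im|) *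
            (w t₁ * Real.exp Fb)) := by
          apply mul_le_mul_of_nonneg_left _ (norm_nonneg _)
          have he : Real.exp (s * |z.im|) ≤ Real.exp (t₂ * |z.im|) :=
            Real.exp_le_exp.2 (mul_le_mul_of_nonneg_right hsle him)
          have h1 : Real.exp (s * |z.im|) * Real.exp (s * |z.im|)
              ≤ Real.exp (t₂ * |z.im|) * Real.exp (t₂ * |z.im|) :=
            mul_le_mul he he (Real.exp_pos _).le (Real.exp_pos _).le
          have h2 : w s ≤ w t₁ * Real.exp Fb := hws
          have h3 : 0 ≤ w t₁ * Real.exp Fb := mul_nonneg (hw0 t₁) (Real.exp_pos _).le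
          nlinarith [Real.exp_pos (s * |z.im|), Real.exp_pos (t₂ * |z.im|), hw0 s]
      _ = g s * C := by
          rw [hCdef, hw1, hgdef]
          rw [show (2 * t₂ - t₁) * |z.im| + Fb = t₂ * |z.im| + (t₂ * |z.im|
            + (-(t₁ * |z.im|) + Fb)) by ring]
          rw [Real.exp_add, Real.exp_add, Real.exp_add]
          ring
  -- final computation
  have hC0 : 0 ≤ C := mul_nonneg (norm_nonneg _) (Real.exp_pos _).le
  calc ‖Complex.exp (Complex.I * t₂ * z) * G t₂ -
        Complex.exp (Complex.I * t₁ * z) * G t₁‖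
      = ‖𝓔 t₂ - 𝓔 t₁‖ := by push_cast; rfl
    _ = ‖∫ s in t₁..t₂, Complex.exp (Complex.I * s * z) * ((starRingEnd ℂ) (f s) * H s)‖ := by
        rw [hE_ftc]
    _ ≤ ∫ s in t₁..t₂, ‖Complex.exp (Complex.I * s * z) * ((starRingEnd ℂ) (f s) * H s)‖ :=
        intervalIntegral.norm_integral_le_integral_norm ht
    _ ≤ ∫ s in t₁..t₂, g s * C := by
        apply intervalIntegral.integral_mono_on ht
        · exact (intervalIntegrable_iff_integrableOn_Icc_of_le ht (ha := enorm_ne_top)).2 h𝓔int.norm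
        · exact ((intervalIntegrable_iff_integrableOn_Icc_of_le ht (ha := enorm_ne_top)).2 hgi).mul_const _
        · exact hpoint
    _ = C * Fb := by rw [intervalIntegral.integral_mul_const]; ring
    _ = ‖H t₁‖ * Real.exp ((2 * t₂ - t₁) * |z.im| + Fb) * Fb := by rw [hCdef]
end

section
/- (Zero-free region for the de Branges function.) Let z ∈ ℂ with Im z ≤ 0, let T > 0 with T |Im z| ≤ 1, let f be locally integrable on [0, T], and let G, H : [0, T] → ℂ be differentiable functions solving the Dirac-type system G'(t) = -i z G(t) + conj(f(t)) H(t), H'(t) = i z H(t) + f(t) G(t), with G(0) = H(0) = 1 and |G(t)| ≤ |H(t)| for all t ∈ [0, T]. If G(T) = 0, then (∫_0^T |f(s)| ds) · exp(∫_0^T |f(s)| ds) ≥ e^{−2}; in particular, if ∫_0^T |f(s)| ds ≤ 1/10 then G(T) ≠ 0, i.e. E(T, ·) has no zero z with |Im z| ≤ 1/T in the closed lower half-plane. -/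
open MeasureTheory Complex

private lemma hasDerivAt_normSq_comp' {h : ℝ → ℂ} {h' : ℂ} {t : ℝ}
    (hh : HasDerivAt h h' t) :
    HasDerivAt (fun s => Complex.normSq (h s))
      (2 * ((starRingEnd ℂ) (h t) * h').re) t := by
  have hre : HasDerivAt (fun s => (h s).re) h'.re t := by
    exact Complex.reCLM.hasFDerivAt.comp_hasDerivAt t hh
  have him : HasDerivAt (fun s => (h s).im) h'.im t := by
    exact Complex.imCLM.hasFDerivAt.comp_hasDerivAt t hh
  have H2 := (hre.mul hre).add (him.mul him)
  have heq : (((fun s => (h s).re) * fun s => (h s).re) + (fun s => (h s).im) * fun s => (h s).im)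
      = fun s => Complex.normSq (h s) := by
    funext s; simp [Complex.normSq_apply]
  rw [heq] at H2
  refine H2.congr_deriv ?_
  simp [Complex.mul_re, Complex.conj_re, Complex.conj_im]
  ring


set_option maxHeartbeats 1000000 in
/-- zero-free region for the de Branges function: if `E(T,z) = G(T) = 0`
for a point `z` of the closed lower half-plane with `T|Im z| ≤ 1`, then the `L¹` norm of
the potential cannot be small; in particular `∫₀ᵀ |f| ≤ 1/10` forces `G(T) ≠ 0`. -/
theorem zero_free_region_for_E
    (z : ℂ) (hz : z.im ≤ 0) (T : ℝ) (hT : 0 < T) (hTz : T * |z.im| ≤ 1)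
    (f G H : ℝ → ℂ)
    (hf : LocallyIntegrableOn f (Set.Icc 0 T))
    (hG : ∀ t ∈ Set.Icc (0:ℝ) T,
      HasDerivAt G (-Complex.I * z * G t + (starRingEnd ℂ) (f t) * H t) t)
    (hH : ∀ t ∈ Set.Icc (0:ℝ) T,
      HasDerivAt H (Complex.I * z * H t + f t * G t) t)
    (hG0 : G 0 = 1) (hH0 : H 0 = 1)
    (hHB : ∀ t ∈ Set.Icc (0:ℝ) T, ‖G t‖ ≤ ‖H t‖) :
    (G T = 0 →
      Real.exp (-2) ≤ (∫ s in (0:ℝ)..T, ‖f s‖) *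
        Real.exp (∫ s in (0:ℝ)..T, ‖f s‖)) ∧
    ((∫ s in (0:ℝ)..T, ‖f s‖) ≤ 1/10 → G T ≠ 0) := by
  have hzim : -z.im = |z.im| := (abs_of_nonpos hz).symm
  set b : ℝ := -z.im with hbdef
  have hb : 0 ≤ b := by rw [hbdef]; linarith
  have hbT : T * b ≤ 1 := by rw [hzim]; exact hTz
  set F : ℝ → ℝ := fun s => ‖f s‖ with hFdef
  have hFnonneg : ∀ s, 0 ≤ F s := fun s => norm_nonneg _
  have hfInt : IntegrableOn f (Set.Icc 0 T) := hf.integrableOn_isCompact isCompact_Icc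
  have hFIntIcc : IntegrableOn F (Set.Icc 0 T) := by
    have := hfInt.norm
    exact this
  have hFInt : IntervalIntegrable F volume 0 T := by
    rw [intervalIntegrable_iff_integrableOn_Ioc_of_le hT.le]
    exact hFIntIcc.mono_set Set.Ioc_subset_Icc_self
  set A : ℝ := ∫ s in (0:ℝ)..T, F s with hAdef
  have hA0 : 0 ≤ A := intervalIntegral.integral_nonneg hT.le (fun s _ => hFnonneg s)
  -- exponential norms
  have hreIz : ∀ s : ℝ, (Complex.I * z * (s:ℂ)).re = b * s := by
    intro s
    simp [Complex.mul_re, Complex.mul_im, hbdef]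
    try ring
  have habs1 : ∀ s : ℝ, ‖Complex.exp (Complex.I * z * s)‖ = Real.exp (b * s) := by
    intro s; rw [Complex.norm_exp, hreIz]
  have habs2 : ∀ s : ℝ, ‖Complex.exp (-(Complex.I * z * s))‖ = Real.exp (-(b * s)) := by
    intro s; rw [Complex.norm_exp, Complex.neg_re, hreIz]
  -- the rotated solutions
  set g : ℝ → ℂ := fun s => Complex.exp (Complex.I * z * s) * G s with hgdef
  set h : ℝ → ℂ := fun s => Complex.exp (-(Complex.I * z * s)) * H s with hhdef
  have hh0 : h 0 = 1 := by simp [hhdef, hH0]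
  have hlin : ∀ t : ℝ, HasDerivAt (fun s : ℝ => Complex.I * z * (s:ℂ)) (Complex.I * z) t := by
    intro t
    simpa using (Complex.ofRealCLM.hasDerivAt (x := t)).const_mul (Complex.I * z)
  set D : ℝ → ℂ := fun s => Complex.exp (-(Complex.I * z * s)) * (f s * G s) with hDdef
  set Dg : ℝ → ℂ := fun s => Complex.exp (Complex.I * z * s) * ((starRingEnd ℂ) (f s) * H s)
    with hDgdef
  have hgd : ∀ t ∈ Set.Icc (0:ℝ) T, HasDerivAt g (Dg t) t := by
    intro t ht
    have he : HasDerivAt (fun s : ℝ => Complex.exp (Complex.I * z * s))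
        (Complex.exp (Complex.I * z * t) * (Complex.I * z)) t := (hlin t).cexp
    have h2 := he.mul (hG t ht)
    have : Dg t = Complex.exp (Complex.I * z * t) * (Complex.I * z) * G t +
        Complex.exp (Complex.I * z * t) * (-Complex.I * z * G t + (starRingEnd ℂ) (f t) * H t) := by
      rw [hDgdef]; ring
    rw [this]
    exact h2
  have hhd : ∀ t ∈ Set.Icc (0:ℝ) T, HasDerivAt h (D t) t := by
    intro t ht
    have he : HasDerivAt (fun s : ℝ => Complex.exp (-(Complex.I * z * s)))
        (Complex.exp (-(Complex.I * z * t)) * (-(Complex.I * z))) t := ((hlin t).neg).cexp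
    have h2 := he.mul (hH t ht)
    have : D t = Complex.exp (-(Complex.I * z * t)) * (-(Complex.I * z)) * H t +
        Complex.exp (-(Complex.I * z * t)) * (Complex.I * z * H t + f t * G t) := by
      rw [hDdef]; ring
    rw [this]
    exact h2
  -- continuity
  have hGcont : ContinuousOn G (Set.Icc 0 T) := fun t ht => ((hG t ht).continuousAt).continuousWithinAt
  have hHcont : ContinuousOn H (Set.Icc 0 T) := fun t ht => ((hH t ht).continuousAt).continuousWithinAt
  have hcexp1 : Continuous (fun s : ℝ => Complex.exp (Complex.I * z * s)) :=
    Complex.continuous_exp.comp (continuous_const.mul Complex.continuous_ofReal)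
  have hcexp2 : Continuous (fun s : ℝ => Complex.exp (-(Complex.I * z * s))) :=
    Complex.continuous_exp.comp ((continuous_const.mul Complex.continuous_ofReal).neg)
  have hhcont : ContinuousOn h (Set.Icc 0 T) := hcexp2.continuousOn.mul hHcont
  -- norm relations
  have habsh : ∀ s : ℝ, ‖h s‖ = Real.exp (-(b*s)) * ‖H s‖ := by
    intro s; rw [hhdef]; rw [norm_mul, habs2]
  have habsH : ∀ s : ℝ, ‖H s‖ = Real.exp (b*s) * ‖h s‖ := by
    intro s; rw [habsh s, ← mul_assoc, ← Real.exp_add]; simp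
  have hDbound : ∀ t ∈ Set.Icc (0:ℝ) T, ‖D t‖ ≤ F t * ‖h t‖ := by
    intro t ht
    rw [hDdef]
    rw [norm_mul, norm_mul, habs2, habsh]
    calc Real.exp (-(b*t)) * (F t * ‖G t‖)
        ≤ Real.exp (-(b*t)) * (F t * ‖H t‖) := by
          apply mul_le_mul_of_nonneg_left
            (mul_le_mul_of_nonneg_left (hHB t ht) (hFnonneg t)) (Real.exp_nonneg _)
      _ = F t * (Real.exp (-(b*t)) * ‖H t‖) := by ring
  -- measurability toolbox
  have hfmeas : AEStronglyMeasurable f (volume.restrict (Set.Icc 0 T)) := hfInt.aestronglyMeasurable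
  have hGaesm : AEStronglyMeasurable G (volume.restrict (Set.Icc 0 T)) :=
    hGcont.aestronglyMeasurable measurableSet_Icc
  have hHaesm : AEStronglyMeasurable H (volume.restrict (Set.Icc 0 T)) :=
    hHcont.aestronglyMeasurable measurableSet_Icc
  have hhaesm : AEStronglyMeasurable h (volume.restrict (Set.Icc 0 T)) :=
    hhcont.aestronglyMeasurable measurableSet_Icc
  have hDaesm : AEStronglyMeasurable D (volume.restrict (Set.Icc 0 T)) := by
    apply AEStronglyMeasurable.mul (hcexp2.aestronglyMeasurable)
    exact hfmeas.mul hGaesm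
  have hDgaesm : AEStronglyMeasurable Dg (volume.restrict (Set.Icc 0 T)) := by
    apply AEStronglyMeasurable.mul (hcexp1.aestronglyMeasurable)
    apply AEStronglyMeasurable.mul _ hHaesm
    exact Complex.continuous_conj.comp_aestronglyMeasurable hfmeas
  -- the logarithmic derivative
  set φ' : ℝ → ℝ := (fun s => 2 * ((starRingEnd ℂ) (h s) * D s).re) /
    (fun s => Complex.normSq (h s)) with hφdef
  have hφaesm : AEStronglyMeasurable φ' (volume.restrict (Set.Icc 0 T)) := by
    have hnum : AEStronglyMeasurable (fun s => 2 * ((starRingEnd ℂ) (h s) * D s).re)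
        (volume.restrict (Set.Icc 0 T)) := by
      apply AEStronglyMeasurable.const_mul
      apply Complex.continuous_re.comp_aestronglyMeasurable
      exact (Complex.continuous_conj.comp_aestronglyMeasurable hhaesm).mul hDaesm
    have hden : AEStronglyMeasurable (fun s => Complex.normSq (h s))
        (volume.restrict (Set.Icc 0 T)) :=
      Complex.continuous_normSq.comp_aestronglyMeasurable hhaesm
    exact ((hnum.aemeasurable.div hden.aemeasurable).aestronglyMeasurable)
  -- the key FTC estimate
  have key : ∀ τ, τ ∈ Set.Icc (0:ℝ) T → (∀ s ∈ Set.Icc (0:ℝ) τ, h s ≠ 0) →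
      |Real.log (Complex.normSq (h τ))| ≤ 2 * A := by
    intro τ hτ hne
    have hτ0 : 0 ≤ τ := hτ.1
    have hsub : Set.Icc (0:ℝ) τ ⊆ Set.Icc 0 T := Set.Icc_subset_Icc le_rfl hτ.2
    have hφbound : ∀ s ∈ Set.Icc (0:ℝ) τ, |φ' s| ≤ 2 * F s := by
      intro s hs
      have hden : 0 < Complex.normSq (h s) := Complex.normSq_pos.mpr (hne s hs)
      have h1 : |((starRingEnd ℂ) (h s) * D s).re| ≤ ‖(starRingEnd ℂ) (h s) * D s‖ :=
        Complex.abs_re_le_norm _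
      have h2 : ‖(starRingEnd ℂ) (h s) * D s‖
          ≤ ‖h s‖ * (F s * ‖h s‖) := by
        rw [norm_mul, Complex.norm_conj]
        exact mul_le_mul_of_nonneg_left (hDbound s (hsub hs)) (norm_nonneg _)
      have hnum : |2 * ((starRingEnd ℂ) (h s) * D s).re| ≤ 2 * F s * Complex.normSq (h s) := by
        rw [abs_mul]
        have : Complex.normSq (h s) = ‖h s‖ ^ 2 := (Complex.sq_norm _).symm
        rw [this]
        have := h1.trans h2
        calc |(2:ℝ)| * |((starRingEnd ℂ) (h s) * D s).re|
            ≤ |(2:ℝ)| * (‖h s‖ * (F s * ‖h s‖)) := by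
              apply mul_le_mul_of_nonneg_left this (abs_nonneg _)
          _ = 2 * F s * ‖h s‖ ^ 2 := by
              rw [abs_of_pos (by norm_num : (0:ℝ) < 2)]; ring
      rw [hφdef]
      simp only [Pi.div_apply]
      rw [abs_div, abs_of_pos hden, div_le_iff₀ hden]
      exact hnum
    have hderiv : ∀ s ∈ Set.uIcc (0:ℝ) τ,
        HasDerivAt (fun x => Real.log (Complex.normSq (h x))) (φ' s) s := by
      intro s hs
      rw [Set.uIcc_of_le hτ0] at hs
      have h1 : HasDerivAt h (D s) s := hhd s (hsub hs)
      have h2 := hasDerivAt_normSq_comp' h1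
      have h3 : Complex.normSq (h s) ≠ 0 := (Complex.normSq_pos.mpr (hne s hs)).ne'
      have h4 := h2.log h3
      rw [hφdef]
      simpa using h4
    have hmle : volume.restrict (Set.Ioc (0:ℝ) τ) ≤ volume.restrict (Set.Icc (0:ℝ) T) :=
      Measure.restrict_mono (Set.Ioc_subset_Icc_self.trans (Set.Icc_subset_Icc le_rfl hτ.2)) le_rfl
    have hint : IntervalIntegrable φ' volume 0 τ := by
      rw [intervalIntegrable_iff_integrableOn_Ioc_of_le hτ0]
      apply Integrable.mono' ((hFInt.1.mono_set (Set.Ioc_subset_Ioc_right hτ.2)).const_mul 2)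
        (hφaesm.mono_measure hmle)
      refine (ae_restrict_iff' measurableSet_Ioc).2 (Filter.Eventually.of_forall fun s hs => ?_)
      simpa [Real.norm_eq_abs] using hφbound s ⟨hs.1.le, hs.2⟩
    have hFTC := intervalIntegral.integral_eq_sub_of_hasDerivAt hderiv hint
    have hlog0 : Real.log (Complex.normSq (h 0)) = 0 := by rw [hh0]; simp
    have h2F : IntervalIntegrable (fun s => 2 * F s) volume 0 τ :=
      (hFInt.mono_set (by rw [Set.uIcc_of_le hτ0, Set.uIcc_of_le hT.le]; exact Set.Icc_subset_Icc le_rfl hτ.2)).const_mul 2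
    calc |Real.log (Complex.normSq (h τ))| = |∫ s in (0:ℝ)..τ, φ' s| := by
          rw [hFTC, hlog0, sub_zero]
      _ ≤ ∫ s in (0:ℝ)..τ, 2 * F s := by
          have hb : ∀ᵐ t ∂volume.restrict (Set.uIoc (0:ℝ) τ), ‖φ' t‖ ≤ 2 * F t := by
            rw [Set.uIoc_of_le hτ0]
            refine (ae_restrict_iff' measurableSet_Ioc).2 (Filter.Eventually.of_forall fun s hs => ?_)
            simpa [Real.norm_eq_abs] using hφbound s ⟨hs.1.le, hs.2⟩
          have hthis := (intervalIntegral.norm_integral_le_of_norm_le hτ0 (by rw [← Set.uIoc_of_le hτ0]; exact (ae_restrict_iff' measurableSet_uIoc).1 hb) h2F).trans (le_abs_self _)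
          have habs : |∫ s in (0:ℝ)..τ, 2 * F s| = ∫ s in (0:ℝ)..τ, 2 * F s :=
            abs_of_nonneg (intervalIntegral.integral_nonneg hτ0 (fun s _ => by positivity))
          calc |∫ s in (0:ℝ)..τ, φ' s| = ‖∫ s in (0:ℝ)..τ, φ' s‖ := (Real.norm_eq_abs _).symm
            _ ≤ |∫ s in (0:ℝ)..τ, 2 * F s| := hthis
            _ = ∫ s in (0:ℝ)..τ, 2 * F s := habs
      _ = 2 * ∫ s in (0:ℝ)..τ, F s := by rw [intervalIntegral.integral_const_mul]
      _ ≤ 2 * A := by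
          rw [hAdef]
          apply mul_le_mul_of_nonneg_left _ (by norm_num)
          exact intervalIntegral.integral_mono_interval le_rfl hτ0 hτ.2
            (Filter.Eventually.of_forall fun s => hFnonneg s) hFInt
  -- h never vanishes on [0, T]
  have hHne : ∀ t ∈ Set.Icc (0:ℝ) T, h t ≠ 0 := by
    by_contra hcon
    push_neg at hcon
    obtain ⟨t₀, ht₀, ht₀0⟩ := hcon
    set Z := {t | t ∈ Set.Icc (0:ℝ) T ∧ h t = 0} with hZ
    have hZne : Z.Nonempty := ⟨t₀, ht₀, ht₀0⟩
    have hZclosed : IsClosed Z := by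
      have : Z = Set.Icc 0 T ∩ h ⁻¹' {0} := by ext t; simp [hZ]
      rw [this]
      exact hhcont.preimage_isClosed_of_isClosed isClosed_Icc isClosed_singleton
    have hZbdd : BddBelow Z := ⟨0, fun t ht => ht.1.1⟩
    set t₁ := sInf Z with ht₁def
    have ht₁Z : t₁ ∈ Z := hZclosed.csInf_mem hZne hZbdd
    have ht₁Icc : t₁ ∈ Set.Icc (0:ℝ) T := ht₁Z.1
    have ht₁pos : 0 < t₁ := by
      rcases lt_or_eq_of_le ht₁Icc.1 with hlt | heq
      · exact hlt
      · exfalso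
        have h0 := ht₁Z.2
        rw [← heq, hh0] at h0
        exact one_ne_zero h0
    have hlt : ∀ s, 0 ≤ s → s < t₁ → h s ≠ 0 := by
      intro s hs0 hst hhs
      have hsZ : s ∈ Z := ⟨⟨hs0, hst.le.trans ht₁Icc.2⟩, hhs⟩
      exact absurd (csInf_le hZbdd hsZ) (not_le.mpr hst)
    have hlow : ∀ τ ∈ Set.Ico (0:ℝ) t₁, Real.exp (-(2*A)) ≤ Complex.normSq (h τ) := by
      intro τ hτ
      have hτT : τ ∈ Set.Icc (0:ℝ) T := ⟨hτ.1, hτ.2.le.trans ht₁Icc.2⟩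
      have hk := key τ hτT (fun s hs => hlt s hs.1 (lt_of_le_of_lt hs.2 hτ.2))
      have hpos : 0 < Complex.normSq (h τ) := Complex.normSq_pos.mpr (hlt τ hτ.1 hτ.2)
      have hge := (abs_le.mp hk).1
      calc Real.exp (-(2*A)) ≤ Real.exp (Real.log (Complex.normSq (h τ))) :=
            Real.exp_le_exp.mpr (by linarith)
        _ = Complex.normSq (h τ) := Real.exp_log hpos
    have hcontu : ContinuousAt (fun s => Complex.normSq (h s)) t₁ :=
      Complex.continuous_normSq.continuousAt.comp (hhd t₁ ht₁Icc).continuousAt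
    have htend : Filter.Tendsto (fun s => Complex.normSq (h s))
        (nhdsWithin t₁ (Set.Iio t₁)) (nhds (Complex.normSq (h t₁))) :=
      hcontu.continuousWithinAt
    have hev : ∀ᶠ s in nhdsWithin t₁ (Set.Iio t₁),
        Real.exp (-(2*A)) ≤ Complex.normSq (h s) := by
      have hmem : Set.Ioo (0:ℝ) t₁ ∈ nhdsWithin t₁ (Set.Iio t₁) :=
        Ioo_mem_nhdsLT_of_mem ⟨ht₁pos, le_rfl⟩
      filter_upwards [hmem] with s hs
      exact hlow s ⟨hs.1.le, hs.2⟩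
    have hfin : Real.exp (-(2*A)) ≤ Complex.normSq (h t₁) := ge_of_tendsto htend hev
    rw [ht₁Z.2] at hfin
    simp at hfin
    exact absurd hfin (not_le.mpr (Real.exp_pos _))
  -- upper bound on |h|
  have hupper : ∀ t ∈ Set.Icc (0:ℝ) T, ‖h t‖ ≤ Real.exp A := by
    intro t ht
    have hk := key t ht (fun s hs => hHne s (Set.Icc_subset_Icc le_rfl ht.2 hs))
    have hpos : 0 < Complex.normSq (h t) := Complex.normSq_pos.mpr (hHne t ht)
    have h2 : Complex.normSq (h t) ≤ Real.exp (2*A) := by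
      have hle := (abs_le.mp hk).2
      calc Complex.normSq (h t) = Real.exp (Real.log (Complex.normSq (h t))) :=
            (Real.exp_log hpos).symm
        _ ≤ Real.exp (2*A) := Real.exp_le_exp.mpr hle
    have hsq : ‖h t‖ ^ 2 ≤ Real.exp A ^ 2 := by
      rw [Complex.sq_norm]
      calc Complex.normSq (h t) ≤ Real.exp (2*A) := h2
        _ = Real.exp A ^ 2 := by rw [← Real.exp_nat_mul]; norm_num
    exact (pow_le_pow_iff_left₀ (norm_nonneg _) (Real.exp_nonneg A) two_ne_zero).mp hsq
  -- main estimate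
  have main : G T = 0 → Real.exp (-2) ≤ A * Real.exp A := by
    intro hGT
    have hgT : g T = 0 := by rw [hgdef]; simp [hGT]
    have hg0 : g 0 = 1 := by rw [hgdef]; simp [hG0]
    have hDgbound : ∀ s ∈ Set.Icc (0:ℝ) T,
        ‖Dg s‖ ≤ Real.exp 2 * Real.exp A * F s := by
      intro s hs
      rw [hDgdef]
      rw [norm_mul, norm_mul, habs1, Complex.norm_conj, habsH]
      have hbs : Real.exp (b*s) * Real.exp (b*s) ≤ Real.exp 2 := by
        rw [← Real.exp_add]
        apply Real.exp_le_exp.mpr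
        have h1 : b * s ≤ b * T := mul_le_mul_of_nonneg_left hs.2 hb
        have h2 : b * T ≤ 1 := by linarith [hbT, mul_comm T b]
        nlinarith
      have hhs : ‖h s‖ ≤ Real.exp A := hupper s hs
      calc Real.exp (b*s) * (F s * (Real.exp (b*s) * ‖h s‖))
          = (Real.exp (b*s) * Real.exp (b*s)) * (‖h s‖) * F s := by ring
        _ ≤ Real.exp 2 * Real.exp A * F s := by
            apply mul_le_mul_of_nonneg_right _ (hFnonneg s)
            apply mul_le_mul hbs hhs (norm_nonneg _) (Real.exp_nonneg _)
    have hmle : volume.restrict (Set.Ioc (0:ℝ) T) ≤ volume.restrict (Set.Icc (0:ℝ) T) :=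
      Measure.restrict_mono Set.Ioc_subset_Icc_self le_rfl
    have hDgInt : IntervalIntegrable Dg volume 0 T := by
      rw [intervalIntegrable_iff_integrableOn_Ioc_of_le hT.le]
      apply Integrable.mono' (hFInt.1.const_mul (Real.exp 2 * Real.exp A))
        (hDgaesm.mono_measure hmle)
      refine (ae_restrict_iff' measurableSet_Ioc).2 (Filter.Eventually.of_forall fun s hs => ?_)
      simpa using hDgbound s ⟨hs.1.le, hs.2⟩
    have hderivg : ∀ s ∈ Set.uIcc (0:ℝ) T, HasDerivAt g (Dg s) s := by
      intro s hs
      rw [Set.uIcc_of_le hT.le] at hs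
      exact hgd s hs
    have hFTCg := intervalIntegral.integral_eq_sub_of_hasDerivAt hderivg hDgInt
    have hgcst : IntervalIntegrable (fun s => Real.exp 2 * Real.exp A * F s) volume 0 T :=
      hFInt.const_mul _
    have h1 : (1:ℝ) ≤ ∫ s in (0:ℝ)..T, Real.exp 2 * Real.exp A * F s := by
      have hb : ∀ᵐ t ∂volume.restrict (Set.uIoc (0:ℝ) T),
          ‖Dg t‖ ≤ Real.exp 2 * Real.exp A * F t := by
        rw [Set.uIoc_of_le hT.le]
        refine (ae_restrict_iff' measurableSet_Ioc).2 (Filter.Eventually.of_forall fun s hs => ?_)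
        simpa using hDgbound s ⟨hs.1.le, hs.2⟩
      have hthis := (intervalIntegral.norm_integral_le_of_norm_le hT.le (by rw [← Set.uIoc_of_le hT.le]; exact (ae_restrict_iff' measurableSet_uIoc).1 hb) hgcst).trans (le_abs_self _)
      have habs : |∫ s in (0:ℝ)..T, Real.exp 2 * Real.exp A * F s|
          = ∫ s in (0:ℝ)..T, Real.exp 2 * Real.exp A * F s :=
        abs_of_nonneg (intervalIntegral.integral_nonneg hT.le
          (fun s _ => by positivity))
      have hnorm : ‖∫ s in (0:ℝ)..T, Dg s‖ ≤ ∫ s in (0:ℝ)..T, Real.exp 2 * Real.exp A * F s := by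
        rw [habs] at hthis; exact hthis
      have : ‖∫ s in (0:ℝ)..T, Dg s‖ = 1 := by
        rw [hFTCg, hgT, hg0]
        simp
      linarith [hnorm, this.symm.le]
    have h2 : (∫ s in (0:ℝ)..T, Real.exp 2 * Real.exp A * F s)
        = Real.exp 2 * Real.exp A * A := by
      rw [hAdef, intervalIntegral.integral_const_mul]
    have hee : Real.exp (-2) * Real.exp 2 = 1 := by
      rw [← Real.exp_add]; norm_num
    have h3 : Real.exp (-2) * 1 ≤ Real.exp (-2) * (Real.exp 2 * Real.exp A * A) :=
      mul_le_mul_of_nonneg_left (by rw [← h2]; exact h1) (Real.exp_pos (-2)).le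
    calc Real.exp (-2) = Real.exp (-2) * 1 := (mul_one _).symm
      _ ≤ Real.exp (-2) * (Real.exp 2 * Real.exp A * A) := h3
      _ = (Real.exp (-2) * Real.exp 2) * (Real.exp A * A) := by ring
      _ = A * Real.exp A := by rw [hee]; ring
  refine ⟨main, ?_⟩
  intro hsmall hGT
  have h1 := main hGT
  have e1 : Real.exp 1 < 2.7182818286 := Real.exp_one_lt_d9
  have h10 : Real.exp (1/10) < 1.11 := by
    by_contra hcon
    push_neg at hcon
    have hp : (1.11:ℝ)^(10:ℕ) ≤ Real.exp (1/10)^(10:ℕ) :=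
      pow_le_pow_left₀ (by norm_num) hcon 10
    have hexp : Real.exp (1/10:ℝ)^(10:ℕ) = Real.exp 1 := by
      rw [← Real.exp_nat_mul]; norm_num
    rw [hexp] at hp
    norm_num at hp
    linarith
  have hup : A * Real.exp A ≤ (1/10) * Real.exp (1/10) :=
    mul_le_mul hsmall (Real.exp_le_exp.mpr hsmall) (Real.exp_nonneg A) (by norm_num)
  have h2 : Real.exp 2 < 9 := by
    have he2 : Real.exp 2 = Real.exp 1 * Real.exp 1 := by rw [← Real.exp_add]; norm_num
    nlinarith [Real.exp_pos 1]
  have hee : Real.exp (-2) * Real.exp 2 = 1 := by rw [← Real.exp_add]; norm_num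
  have hneg2 : (1:ℝ)/9 < Real.exp (-2) := by
    nlinarith [Real.exp_pos (-2), Real.exp_pos 2]
  have hfin : (1/10:ℝ) * Real.exp (1/10) < (1/10) * 1.11 :=
    mul_lt_mul_of_pos_left h10 (by norm_num)
  have : Real.exp (-2) < Real.exp (-2) := by
    calc Real.exp (-2) ≤ A * Real.exp A := h1
      _ ≤ (1/10) * Real.exp (1/10) := hup
      _ < (1/10) * 1.11 := hfin
      _ < 1/9 := by norm_num
      _ < Real.exp (-2) := hneg2
  exact absurd this (lt_irrefl _)
end

section
/- (Direction concentration on σ-intervals.) Let σ > 0, let I ⊂ ℝ be an interval, and let f : I → ℂ be integrable with |∫_I f(t) dt| ≥ (1 − σ) ∫_I |f(t)| dt. Then there exists φ ∈ [0, 2π] such that | ∫_I f(t) · 1_{S_φ}(t) dt | ≥ (1 − 3·10⁴ σ) ∫_I |f(t)| dt, where S_φ := { t ∈ I : f(t) ≠ 0 and the argument of e^{−iφ} f(t), taken in [0, 2π), lies in [0, π/4] }. -/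
open MeasureTheory Complex

lemma cos_pi8_le : Real.cos (Real.pi / 8) ≤ 15 / 16 := by
  have h1 : Real.cos (Real.pi / 8) ^ 2 = 1 / 2 + Real.cos (Real.pi / 4) / 2 := by
    rw [Real.cos_sq]; ring_nf
  have h2 : Real.cos (Real.pi / 4) = Real.sqrt 2 / 2 := Real.cos_pi_div_four
  have h3 : Real.sqrt 2 ≤ 3 / 2 := by
    nlinarith [Real.sq_sqrt (by norm_num : (2:ℝ) ≥ 0), Real.sqrt_nonneg 2]
  have h4 : 0 ≤ Real.cos (Real.pi / 8) := by
    apply Real.cos_nonneg_of_neg_pi_div_two_le_of_le <;> nlinarith [Real.pi_pos]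
  nlinarith

lemma cos_bound {x : ℝ} (hx1 : -Real.pi < x) (hx2 : x ≤ Real.pi)
    (hx : x ∉ Set.Icc (0:ℝ) (Real.pi / 4)) :
    Real.cos (x - Real.pi / 8) ≤ Real.cos (Real.pi / 8) := by
  have hpi := Real.pi_pos
  rcases lt_or_ge x 0 with hneg | h0
  · 
    rw [← Real.cos_neg]
    rcases le_or_gt (-(x - Real.pi / 8)) Real.pi with hle | hgt
    · exact Real.cos_le_cos_of_nonneg_of_le_pi (by positivity) hle (by linarith)
    · have : Real.cos (-(x - Real.pi / 8)) ≤ 0 := by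
        apply Real.cos_nonpos_of_pi_div_two_le_of_le <;> linarith
      have h4 : 0 ≤ Real.cos (Real.pi / 8) := by
        apply Real.cos_nonneg_of_neg_pi_div_two_le_of_le <;> linarith
      linarith
  · have hbig : Real.pi / 4 < x := by
      by_contra hc; push_neg at hc; exact hx ⟨h0, hc⟩
    exact Real.cos_le_cos_of_nonneg_of_le_pi (by positivity) (by linarith) (by linarith)

/-- on a `σ`-interval, a single angular sector of aperture `π/4` captures
almost the full `L¹` mass of `f`. The argument "taken in `[0, 2π)`" lies in `[0, π/4]`
exactly when `Complex.arg` (valued in `(-π, π]`) lies in `[0, π/4]`. -/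
theorem direction_concentration_on_sigma_interval
    (σ : ℝ) (hσ : 0 < σ) (I : Set ℝ) (hI : I.OrdConnected)
    (f : ℝ → ℂ) (hf : IntegrableOn f I)
    (h : (1 - σ) * (∫ t in I, ‖f t‖) ≤ ‖∫ t in I, f t‖) :
    ∃ φ ∈ Set.Icc (0 : ℝ) (2 * Real.pi),
      (1 - 3 * 10 ^ 4 * σ) * (∫ t in I, ‖f t‖) ≤
        ‖∫ t in I,
          Set.indicator {u : ℝ | f u ≠ 0 ∧
            Complex.arg (Complex.exp (-Complex.I * (φ : ℂ)) * f u) ∈ Set.Icc 0 (Real.pi / 4)}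
            f t‖ := by
  have hpi := Real.pi_pos
  set M : ℝ := ∫ t in I, ‖f t‖ with hM
  have hM0 : 0 ≤ M := by
    apply integral_nonneg; intro t; positivity
  -- trivial case
  by_cases htriv : 1 - 3 * 10 ^ 4 * σ ≤ 0
  · refine ⟨0, ⟨le_refl 0, by linarith⟩, ?_⟩
    have : (1 - 3 * 10 ^ 4 * σ) * M ≤ 0 := mul_nonpos_of_nonpos_of_nonneg htriv hM0
    exact this.trans (norm_nonneg _)
  push_neg at htriv
  set A : ℂ := ∫ t in I, f t with hA
  set θ : ℝ := Complex.arg A with hθ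
  set φ₀ : ℝ := θ - Real.pi / 8 with hφ₀
  have hθ1 : -Real.pi < θ := Complex.neg_pi_lt_arg A
  have hθ2 : θ ≤ Real.pi := Complex.arg_le_pi A
  set φ : ℝ := if 0 ≤ φ₀ then φ₀ else φ₀ + 2 * Real.pi with hφ
  have hφmem : φ ∈ Set.Icc (0:ℝ) (2 * Real.pi) := by
    rw [hφ]; split_ifs with h0 <;> constructor <;>
      simp only [hφ₀] at * <;> first | linarith | (push_neg at h0; linarith)
  have hexp : Complex.exp (-Complex.I * (φ : ℂ)) = Complex.exp ((-φ₀ : ℝ) * Complex.I) := by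
    rw [hφ]; split_ifs with h0
    · push_cast; ring_nf
    · push_cast
      rw [show -Complex.I * ((φ₀ : ℂ) + 2 * Real.pi) = -(φ₀:ℂ) * Complex.I + (-(2 * Real.pi * Complex.I)) by ring,
        Complex.exp_add, Complex.exp_neg, Complex.exp_two_pi_mul_I]
      simp
  refine ⟨φ, hφmem, ?_⟩
  set S : Set ℝ := {u : ℝ | f u ≠ 0 ∧
      Complex.arg (Complex.exp (-Complex.I * (φ : ℂ)) * f u) ∈ Set.Icc 0 (Real.pi / 4)} with hS
  -- integrability of indicator pieces
  have hfm : AEMeasurable f (volume.restrict I) := hf.aemeasurable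
  have hmeasP : MeasurableSet {z : ℂ | z ≠ 0 ∧
      Complex.arg (Complex.exp (-Complex.I * (φ : ℂ)) * z) ∈ Set.Icc 0 (Real.pi / 4)} := by
    apply MeasurableSet.inter
    · exact (measurableSet_singleton 0).compl
    · exact (Complex.measurable_arg.comp (measurable_id.const_mul _)) measurableSet_Icc
  have hcompS : ∀ t, Set.indicator S f t =
      (fun z : ℂ => if z ∈ {z : ℂ | z ≠ 0 ∧
        Complex.arg (Complex.exp (-Complex.I * (φ : ℂ)) * z) ∈ Set.Icc 0 (Real.pi / 4)}
        then z else 0) (f t) := by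
    intro t; simp only [Set.indicator, hS, Set.mem_setOf_eq]
  have hSint : IntegrableOn (Set.indicator S f) I := by
    apply Integrable.mono hf.norm
    · rw [funext hcompS]
      refine (aestronglyMeasurable_iff_aemeasurable).mpr ?_
      exact (Measurable.ite hmeasP measurable_id measurable_const).comp_aemeasurable hfm
    · filter_upwards with t
      exact (norm_indicator_le_norm_self f t).trans (le_abs_self _)
  have hScint : IntegrableOn (Set.indicator Sᶜ f) I := by
    have : Set.indicator Sᶜ f = f - Set.indicator S f := Set.indicator_compl S f
    rw [this]; exact hf.sub hSint
  have hfabs : IntegrableOn (fun t => ‖f t‖) I := by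
    exact hf.norm
  -- the rotated real part
  set g : ℝ → ℝ := fun t => (Complex.exp ((-θ : ℝ) * Complex.I) * f t).re with hg
  have hgint : IntegrableOn g I := (hf.const_mul _).re
  have hcA : Complex.exp ((-θ : ℝ) * Complex.I) * A = (‖A‖ : ℂ) := by
    conv_lhs => rw [← Complex.norm_mul_exp_arg_mul_I A]
    rw [← hθ, ← mul_assoc, mul_comm (Complex.exp _), mul_assoc, ← Complex.exp_add]
    push_cast; ring_nf
    simp
  have hgA : ∫ t in I, g t = ‖A‖ := by
    have h1 : ∫ t in I, g t = (Complex.exp ((-θ : ℝ) * Complex.I) * ∫ t in I, f t).re := by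
      rw [← MeasureTheory.integral_const_mul]
      simpa [hg, RCLike.re_to_complex] using
        (integral_re (hf.const_mul (Complex.exp ((-θ : ℝ) * Complex.I))))
    rw [h1, ← hA, hcA, Complex.ofReal_re]
  -- pointwise bound
  have hpoint : ∀ t, Set.indicator Sᶜ (fun t => (1/16) * ‖f t‖) t ≤
      ‖f t‖ - g t := by
    intro t
    have hgle : g t ≤ ‖f t‖ := by
      calc g t ≤ ‖Complex.exp ((-θ : ℝ) * Complex.I) * f t‖ := Complex.re_le_norm _
        _ = ‖f t‖ := by rw [norm_mul, Complex.norm_exp_ofReal_mul_I, one_mul]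
    by_cases ht : t ∈ S
    · rw [Set.indicator_of_notMem (by simpa using ht)]
      linarith
    · rw [Set.indicator_of_mem (by simpa using ht)]
      by_cases hft : f t = 0
      · simp [hg, hft]
      · have harg : Complex.arg (Complex.exp (-Complex.I * (φ : ℂ)) * f t) ∉
            Set.Icc (0:ℝ) (Real.pi / 4) := fun hc => ht ⟨hft, hc⟩
        set w : ℂ := Complex.exp ((-φ₀ : ℝ) * Complex.I) * f t with hw
        have hargw : Complex.arg w ∉ Set.Icc (0:ℝ) (Real.pi / 4) := by rwa [hexp] at harg
        have hwabs : ‖w‖ = ‖f t‖ := by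
          rw [hw, norm_mul, Complex.norm_exp_ofReal_mul_I, one_mul]
        have hwne : w ≠ 0 := mul_ne_zero (Complex.exp_ne_zero _) hft
        have hsplitexp : Complex.exp ((-θ : ℝ) * Complex.I) * f t =
            Complex.exp ((-(Real.pi/8) : ℝ) * Complex.I) * w := by
          rw [hw, ← mul_assoc, ← Complex.exp_add]
          congr 1
          rw [hφ₀]
          push_cast
          ring
        have hre : g t = Real.cos (Real.pi/8) * w.re + Real.sin (Real.pi/8) * w.im := by
          simp only [hg]
          rw [hsplitexp, Complex.mul_re, Complex.exp_ofReal_mul_I_re,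
            Complex.exp_ofReal_mul_I_im, Real.cos_neg, Real.sin_neg]
          ring
        have habsne : ‖w‖ ≠ 0 := norm_ne_zero_iff.mpr hwne
        have hcossin : ‖w‖ * Real.cos (Complex.arg w - Real.pi / 8) =
            Real.cos (Real.pi/8) * w.re + Real.sin (Real.pi/8) * w.im := by
          rw [Real.cos_sub, Complex.cos_arg hwne, Complex.sin_arg]
          field_simp
        have hcos : Real.cos (Complex.arg w - Real.pi / 8) ≤ Real.cos (Real.pi / 8) :=
          cos_bound (Complex.neg_pi_lt_arg w) (Complex.arg_le_pi w) hargw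
        have hc15 := cos_pi8_le
        have habs0 : 0 < ‖w‖ := (norm_pos_iff.mpr hwne)
        have : g t ≤ ‖w‖ * (15/16) := by
          rw [hre, ← hcossin]
          nlinarith
        rw [← hwabs]
        nlinarith
  -- integrability of the indicator of the norm
  have hnormind : IntegrableOn (Set.indicator Sᶜ (fun t => ‖f t‖)) I := by
    apply Integrable.mono hf.norm
    · have hc2 : ∀ t, Set.indicator Sᶜ (fun t => ‖f t‖) t =
          (fun z : ℂ => if z ∈ {z : ℂ | z ≠ 0 ∧
            Complex.arg (Complex.exp (-Complex.I * (φ : ℂ)) * z) ∈ Set.Icc 0 (Real.pi / 4)}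
            then 0 else ‖z‖) (f t) := by
        intro t
        by_cases ht : t ∈ S
        · rw [Set.indicator_of_notMem (by simpa using ht)]
          simp only [hS, Set.mem_setOf_eq] at ht
          simp only [Set.mem_setOf_eq]
          rw [if_pos ht]
        · rw [Set.indicator_of_mem (by simpa using ht)]
          simp only [hS, Set.mem_setOf_eq] at ht
          simp only [Set.mem_setOf_eq]
          rw [if_neg ht]
      rw [funext hc2]
      refine (aestronglyMeasurable_iff_aemeasurable).mpr ?_
      exact (Measurable.ite hmeasP measurable_const
        (continuous_norm.measurable)).comp_aemeasurable hfm
    · filter_upwards with t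
      refine (norm_indicator_le_norm_self (fun t => ‖f t‖) t).trans ?_
      exact le_rfl
  set B : ℝ := ∫ t in I, Set.indicator Sᶜ (fun t => ‖f t‖) t with hB
  have hB0 : 0 ≤ B := integral_nonneg fun t => Set.indicator_nonneg (fun s _ => by positivity) t
  -- B is small
  have hBsmall : (1/16) * B ≤ σ * M := by
    have hmono : ∫ t in I, (1/16) * Set.indicator Sᶜ (fun t => ‖f t‖) t ≤
        ∫ t in I, (‖f t‖ - g t) := by
      apply integral_mono (hnormind.const_mul _) (hfabs.sub hgint)
      intro t
      refine le_trans (le_of_eq ?_) (hpoint t)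
      simp only [Set.indicator]
      split_ifs <;> ring
    rw [MeasureTheory.integral_const_mul] at hmono
    rw [MeasureTheory.integral_sub hfabs hgint, hgA] at hmono
    have : M - ‖A‖ ≤ σ * M := by nlinarith
    rw [← hB] at hmono
    linarith
  -- splitting the integral
  have hsplit : ∫ t in I, Set.indicator S f t = A - ∫ t in I, Set.indicator Sᶜ f t := by
    have h1 : ∫ t in I, Set.indicator Sᶜ f t = A - ∫ t in I, Set.indicator S f t := by
      calc ∫ t in I, Set.indicator Sᶜ f t = ∫ t in I, (f t - Set.indicator S f t) := by
            refine integral_congr_ae (Filter.Eventually.of_forall fun t => ?_)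
            rw [Set.indicator_compl]; rfl
        _ = A - ∫ t in I, Set.indicator S f t := by
            rw [MeasureTheory.integral_sub hf hSint, hA]
    rw [h1]; ring
  have habs2 : ‖∫ t in I, Set.indicator Sᶜ f t‖ ≤ B := by
    calc ‖∫ t in I, Set.indicator Sᶜ f t‖ ≤ ∫ t in I, ‖Set.indicator Sᶜ f t‖ :=
          norm_integral_le_integral_norm _
      _ = B := by
          rw [hB]
          congr 1
          funext t
          rw [norm_indicator_eq_indicator_norm]
  have htri : ‖A‖ ≤ ‖∫ t in I, Set.indicator S f t‖ +
      ‖∫ t in I, Set.indicator Sᶜ f t‖ := by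
    rw [hsplit]
    calc ‖A‖ = ‖(A - ∫ t in I, Set.indicator Sᶜ f t) +
          ∫ t in I, Set.indicator Sᶜ f t‖ := by ring_nf
      _ ≤ _ := norm_add_le _ _
  have hfinal : (1 - σ) * M - B ≤ ‖∫ t in I, Set.indicator S f t‖ := by
    linarith
  calc (1 - 3 * 10 ^ 4 * σ) * M ≤ (1 - σ) * M - B := by nlinarith
    _ ≤ _ := hfinal
end

section
/- (Sinc-square kernel is dominated by the maximal function.) There exists an absolute constant C > 0 such that for every t > 0, every s ∈ ℝ, every λ ∈ ℂ, and every locally integrable g : ℝ → ℂ, ∫_ℝ | sinc(t,λ,x) |² |g(x)| dx ≤ C · 𝓥_{s,t}(λ) · M g (s), where M g is the Hardy–Littlewood maximal function of g. -/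
open MeasureTheory Complex
open scoped ENNReal NNReal

/-- The reproducing kernel of the Paley–Wiener space `PW_t`:
`sinc (t, λ, z) = sin (t (z - conj λ)) / (π (z - conj λ))`, with the
removable-singularity value `t / π` at `z = conj λ`. -/
noncomputable def pwSinc (t : ℝ) (l z : ℂ) : ℂ :=
  if z = (starRingEnd ℂ) l then ((t / Real.pi : ℝ) : ℂ)
  else Complex.sin (t * (z - (starRingEnd ℂ) l)) / (Real.pi * (z - (starRingEnd ℂ) l))

/-- `𝓧_{s,t}(λ) = max (1, t |Re λ - s| / (t |Im λ| + 1))`. -/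
noncomputable def XX (s t : ℝ) (l : ℂ) : ℝ :=
  max 1 (t * |l.re - s| / (t * |l.im| + 1))

/-- `𝓥_{s,t}(λ) = 𝓧_{s,t}(λ) · sinc (t, λ, λ)`. -/
noncomputable def VV (s t : ℝ) (l : ℂ) : ℝ :=
  XX s t l * (pwSinc t l l).re

/-- The Hardy–Littlewood maximal function
`M g (s) = sup_{r > 0} (2r)⁻¹ ∫_{s-r}^{s+r} |g|`. -/
noncomputable def HLMax (g : ℝ → ℂ) (s : ℝ) : ℝ≥0∞ :=
  ⨆ (r : ℝ) (_ : 0 < r),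
    (ENNReal.ofReal (2 * r))⁻¹ * ∫⁻ x in Set.Ioo (s - r) (s + r), (‖g x‖₊ : ℝ≥0∞)

lemma sinh_le_mul_cosh {x : ℝ} (hx : 0 ≤ x) : Real.sinh x ≤ x * Real.cosh x := by
  have key : MonotoneOn (fun x : ℝ => x * Real.cosh x - Real.sinh x) (Set.Ici 0) := by
    apply monotoneOn_of_deriv_nonneg (convex_Ici 0)
    · exact ((continuous_id.mul Real.continuous_cosh).sub Real.continuous_sinh).continuousOn
    · intro y hy
      exact (((hasDerivAt_id y).mul (Real.hasDerivAt_cosh y)).sub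
        (Real.hasDerivAt_sinh y)).differentiableAt.differentiableWithinAt
    · intro y hy
      rw [interior_Ici, Set.mem_Ioi] at hy
      have hd : HasDerivAt (fun x : ℝ => x * Real.cosh x - Real.sinh x)
          (1 * Real.cosh y + y * Real.sinh y - Real.cosh y) y :=
        ((hasDerivAt_id y).mul (Real.hasDerivAt_cosh y)).sub (Real.hasDerivAt_sinh y)
      rw [hd.deriv]
      nlinarith [Real.sinh_pos_iff.2 hy, hy]
  have h0 := key (Set.self_mem_Ici (a := (0:ℝ))) hx hx
  simp at h0
  linarith

lemma diamond {c v m : ℝ} (hc : 0 < c) (hm0 : 0 ≤ m) (hm1 : m ≤ 1) (hmv : m ≤ v^2)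
    (hsck : Real.sinh c ≤ c * Real.cosh c) :
    (m + Real.sinh c ^ 2) * (v^2 + (c+1)^2) * (2*c) ≤
      60 * Real.sinh (2*c) * (c+1) * (v^2 + c^2) := by
  set s := Real.sinh c with hs
  set k := Real.cosh c with hk
  have h2 : Real.sinh (2*c) = 2 * s * k := by rw [two_mul, Real.sinh_add]; ring
  have hcs : c ≤ s := Real.self_le_sinh_iff.2 hc.le
  have hsk : s ≤ k := (Real.sinh_lt_cosh c).le
  have hk1 : 1 ≤ k := Real.one_le_cosh c
  have hv : 0 ≤ v^2 := sq_nonneg v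
  have hspos : 0 < s := lt_of_lt_of_le hc hcs
  have h2k : c + 1 ≤ 2 * k := by nlinarith
  rw [h2]
  have B1 : m * v^2 * (2*c) ≤ 2 * s * k * (c+1) * v^2 := by
    nlinarith [mul_nonneg hv hspos.le, mul_nonneg hv hc.le,
      mul_nonneg (mul_nonneg hv hspos.le) hc.le]
  have B2 : m * (c+1)^2 * (2*c) ≤ 4 * s * k * (c+1) * v^2 := by
    have e1 : m * (c+1)^2 * (2*c) ≤ v^2 * (c+1)^2 * (2*c) := by
      have : 0 ≤ (c+1)^2 * (2*c) := by positivity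
      nlinarith [this]
    have e2 : v^2 * (c+1)^2 * (2*c) ≤ 4 * s * k * (c+1) * v^2 := by
      have h1 : 2 * c * (c+1) ≤ 4 * (s * k) := by nlinarith [mul_le_mul hcs h2k (by linarith) hspos.le]
      nlinarith [mul_nonneg hv (mul_nonneg hc.le (by linarith : (0:ℝ) ≤ c + 1))]
    linarith
  have B3 : s^2 * v^2 * (2*c) ≤ 2 * s * k * (c+1) * v^2 := by
    nlinarith [mul_nonneg hv hspos.le, mul_nonneg (mul_nonneg hv hspos.le) hc.le]
  have B4 : s^2 * (c+1)^2 * (2*c) ≤ 4 * s * k * (c+1) * c^2 := by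
    have h1 : s * (c+1) ≤ 2 * k * c := by nlinarith
    nlinarith [mul_nonneg (mul_nonneg hspos.le hc.le) (by linarith : (0:ℝ) ≤ c+1),
      mul_le_mul_of_nonneg_left h1 (mul_nonneg (mul_nonneg hspos.le hc.le) (by linarith : (0:ℝ) ≤ c+1))]
  have hpos : 0 ≤ s * k * (c+1) := by positivity
  nlinarith [B1, B2, B3, B4, mul_nonneg hpos hv, mul_nonneg hpos (sq_nonneg c)]

lemma transfer {h d X u w : ℝ} (hh : 0 < h) (hd : 0 ≤ d) (hX1 : 1 ≤ X) (hXh : d ≤ X*h)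
    (hw : w^2 ≤ 2*u^2 + 2*d^2) :
    h * (w^2 + (h+d)^2) ≤ 6 * X * (h+d) * (u^2 + h^2) := by
  have hX0 : 0 ≤ X := le_trans zero_le_one hX1
  have hhd : 0 ≤ h + d := by linarith
  have e0 : h * (w^2 + (h+d)^2) ≤ 2*h*u^2 + h^3 + 2*h^2*d + 3*h*d^2 := by nlinarith [hh.le]
  have c1 : 2*h*u^2 ≤ 2*X*(h+d)*u^2 := by nlinarith [sq_nonneg u, mul_nonneg hd (sq_nonneg u), mul_nonneg (sub_nonneg.2 hX1) (mul_nonneg hhd (sq_nonneg u))]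
  have c2 : h^3 ≤ X*(h+d)*h^2 := by nlinarith [mul_nonneg (sub_nonneg.2 hX1) (mul_nonneg hhd (sq_nonneg h)), mul_nonneg hd (sq_nonneg h)]
  have c3 : 2*h^2*d ≤ 2*X*(h+d)*h^2 := by nlinarith [mul_le_mul_of_nonneg_left hXh (mul_nonneg hh.le hh.le), mul_nonneg (mul_nonneg hX0 hd) (sq_nonneg h)]
  have c4 : 3*h*d^2 ≤ 3*X*(h+d)*h^2 := by
    have : d*d ≤ (X*h)*d := mul_le_mul_of_nonneg_right hXh hd
    nlinarith [mul_le_mul_of_nonneg_left this hh.le, mul_nonneg (mul_nonneg hX0 hd) (mul_nonneg hh.le hd), mul_nonneg (mul_nonneg hX0 hh.le) (mul_nonneg hh.le hd)]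
  have e1 : 2*X*(h+d)*u^2 + X*(h+d)*h^2 + 2*X*(h+d)*h^2 + 3*X*(h+d)*h^2 ≤ 6*X*(h+d)*(u^2+h^2) := by
    nlinarith [mul_nonneg (mul_nonneg hX0 hhd) (sq_nonneg u)]
  linarith
lemma pwSinc_self_zero (t : ℝ) {l : ℂ} (hb : l.im = 0) :
    (pwSinc t l l).re = t / Real.pi := by
  rw [pwSinc, if_pos (by rw [eq_comm, Complex.conj_eq_iff_im]; exact hb), Complex.ofReal_re]

lemma pwSinc_self_ne (t : ℝ) {l : ℂ} (hb : l.im ≠ 0) :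
    (pwSinc t l l).re = Real.sinh (2*(t*l.im)) / (2*Real.pi*l.im) := by
  have hne : l ≠ (starRingEnd ℂ) l := by
    rw [ne_eq, eq_comm, Complex.conj_eq_iff_im]; exact hb
  rw [pwSinc, if_neg hne, Complex.sub_conj]
  have h1 : (t:ℂ) * ((2*l.im : ℝ) * Complex.I) = ((2*(t*l.im) : ℝ) : ℂ) * Complex.I := by
    push_cast; ring
  rw [h1, Complex.sin_mul_I, ← Complex.ofReal_sinh]
  have h2 : ((Real.sinh (2*(t*l.im)) : ℝ):ℂ) * Complex.I /
      ((Real.pi:ℂ) * ((((2*l.im:ℝ)):ℂ) * Complex.I)) =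
      ((Real.sinh (2*(t*l.im)) / (2*Real.pi*l.im) : ℝ) : ℂ) := by
    have hI : (Complex.I : ℂ) ≠ 0 := Complex.I_ne_zero
    have hπ : ((Real.pi:ℝ):ℂ) ≠ 0 := by
      exact_mod_cast Complex.ofReal_ne_zero.2 Real.pi_ne_zero
    have him : ((l.im:ℝ):ℂ) ≠ 0 := Complex.ofReal_ne_zero.2 hb
    push_cast
    field_simp
  rw [h2, Complex.ofReal_re]

lemma norm_pwSinc_sq (t : ℝ) (l : ℂ) (x : ℝ) (hne : (x:ℂ) ≠ (starRingEnd ℂ) l) :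
    ‖pwSinc t l (x:ℂ)‖^2 =
      (Real.sin (t*(x - l.re))^2 + Real.sinh (t*l.im)^2) /
        (Real.pi^2 * ((x-l.re)^2 + l.im^2)) := by
  rw [pwSinc, if_neg hne, norm_div, div_pow]
  have hw : (x:ℂ) - (starRingEnd ℂ) l = ((x - l.re : ℝ):ℂ) + ((l.im : ℝ):ℂ) * Complex.I := by
    apply Complex.ext <;> simp
  have harg : (t:ℂ) * ((x:ℂ) - (starRingEnd ℂ) l)
      = ((t*(x - l.re) : ℝ):ℂ) + ((t*l.im : ℝ):ℂ) * Complex.I := by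
    rw [hw]; push_cast; ring
  have hnum : ‖Complex.sin ((t:ℂ) * ((x:ℂ) - (starRingEnd ℂ) l))‖^2
      = Real.sin (t*(x - l.re))^2 + Real.sinh (t*l.im)^2 := by
    rw [harg, Complex.sin_add_mul_I]
    rw [← Complex.ofReal_sin, ← Complex.ofReal_cos, ← Complex.ofReal_sinh, ← Complex.ofReal_cosh]
    rw [← Complex.ofReal_mul, ← Complex.ofReal_mul]
    rw [Complex.sq_norm, Complex.normSq_add_mul_I]
    have h1 := Real.sin_sq_add_cos_sq (t*(x - l.re))
    have h2 := Real.cosh_sq (t*l.im)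
    nlinarith [h1, h2]
  have hden : ‖(Real.pi:ℂ) * ((x:ℂ) - (starRingEnd ℂ) l)‖^2
      = Real.pi^2 * ((x-l.re)^2 + l.im^2) := by
    rw [norm_mul, mul_pow, hw, Complex.norm_real, Real.norm_eq_abs, _root_.sq_abs]
    congr 1
    rw [Complex.sq_norm, Complex.normSq_add_mul_I]
  rw [hnum, hden]

lemma pwSinc_self_re_nonneg (t : ℝ) (ht : 0 < t) (l : ℂ) : 0 ≤ (pwSinc t l l).re := by
  rcases eq_or_ne l.im 0 with hb | hb
  · rw [pwSinc_self_zero t hb]; positivity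
  · rw [pwSinc_self_ne t hb]
    rcases lt_or_gt_of_ne hb with h | h
    · rw [show Real.sinh (2*(t*l.im)) / (2*Real.pi*l.im)
          = (-Real.sinh (2*(t*l.im))) / (-(2*Real.pi*l.im)) from (neg_div_neg_eq _ _).symm]
      apply div_nonneg
      · simp only [neg_nonneg]
        exact Real.sinh_nonpos_iff.2 (by nlinarith)
      · nlinarith [Real.pi_pos]
    · apply div_nonneg
      · simpa using Real.sinh_nonneg_iff.2 (by positivity)
      · positivity

set_option maxHeartbeats 1000000 in
/-- Master pointwise bound. -/
lemma master (t : ℝ) (ht : 0 < t) (s : ℝ) (l : ℂ) (x : ℝ) :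
    ‖pwSinc t l (x:ℂ)‖^2 ≤
      120 * VV s t l *
        ((|l.im| + 1/t + |l.re - s|) /
          ((x - s)^2 + (|l.im| + 1/t + |l.re - s|)^2)) := by
  set a := l.re with ha
  set b := l.im with hbdef
  set u := x - a with hu
  set h := |b| + 1/t with hh'
  set d := |a - s| with hd'
  set H := h + d with hH'
  set X := XX s t l with hX'
  set S := (pwSinc t l l).re with hS'
  have hπ := Real.pi_pos
  have hh : 0 < h := by rw [hh']; positivity
  have hd0 : 0 ≤ d := by rw [hd']; exact abs_nonneg _
  clear_value a b u h d H X S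
  have hH : 0 < H := by rw [hH']; linarith
  have hX1 : 1 ≤ X := by rw [hX', XX, ← ha, ← hbdef]; exact le_max_left _ _
  have hXh : d ≤ X * h := by
    have h1 : t * d / (t * |b| + 1) ≤ X := by
      rw [hX', XX, ← ha, ← hbdef, ← hd']; exact le_max_right _ _
    have h2 : 0 < t * |b| + 1 := by positivity
    rw [div_le_iff₀ h2] at h1
    have h3 : t * h = t * |b| + 1 := by rw [hh']; field_simp
    nlinarith
  have hS0 : 0 ≤ S := hS' ▸ pwSinc_self_re_nonneg t ht l
  have h2 : (0:ℝ) < u^2 + h^2 := by nlinarith [sq_nonneg u, pow_pos hh 2]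
  have h1 : (0:ℝ) < (x-s)^2 + H^2 := by nlinarith [sq_nonneg (x-s), pow_pos hH 2]
  -- claim 1
  have claim1 : ‖pwSinc t l (x:ℂ)‖^2 ≤ 60/Real.pi * S * (h/(u^2+h^2)) := by
    by_cases hxc : (x:ℂ) = (starRingEnd ℂ) l
    · have hb0 : b = 0 := by
        have := congrArg Complex.im hxc
        simpa [hbdef] using this.symm
      have hxa : u = 0 := by
        have hre := congrArg Complex.re hxc
        simp only [Complex.ofReal_re, Complex.conj_re] at hre
        rw [hu, ha, ← hre]; ring
      have hSv : S = t / Real.pi := by rw [hS']; exact pwSinc_self_zero t (by rw [← hbdef]; exact hb0)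
      have hval : pwSinc t l (x:ℂ) = ((t / Real.pi : ℝ) : ℂ) := by rw [pwSinc, if_pos hxc]
      have hhv : h = 1/t := by rw [hh', hb0]; simp
      rw [hval, Complex.norm_real, Real.norm_eq_abs, _root_.sq_abs, hSv, hxa, hhv]
      have e1 : (0:ℝ)^2 + (1/t)^2 = 1/t^2 := by ring
      rw [e1, show (1/t) / (1/t^2) = t from by field_simp,
        show 60/Real.pi * (t/Real.pi) * t = 60*t^2/Real.pi^2 from by field_simp, div_pow]
      gcongr
      nlinarith [sq_nonneg t]
    · have hden : 0 < u^2 + b^2 := by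
        rcases eq_or_ne u 0 with hu0 | hu0
        · rcases eq_or_ne b 0 with hb0 | hb0
          · exfalso; apply hxc
            have hxa : x = a := by rw [hu] at hu0; linarith [sub_eq_zero.1 hu0]
            apply Complex.ext
            · simp [hxa, ha]
            · simp [← hbdef, hb0]
          · have : 0 < b^2 := by positivity
            nlinarith [sq_nonneg u]
        · have : 0 < u^2 := by positivity
          nlinarith [sq_nonneg b]
      have harg : t * (x - l.re) = t * u := by rw [hu, ha]
      rw [norm_pwSinc_sq t l x hxc, ← ha, ← hbdef, ← hu]
      have hsin1 : Real.sin (t*u)^2 ≤ 1 := Real.sin_sq_le_one _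
      have hsin2 : Real.sin (t*u)^2 ≤ (t*u)^2 := Real.sin_sq_le_sq
      have hsin0 : 0 ≤ Real.sin (t*u)^2 := sq_nonneg _
      have key : (Real.sin (t*u)^2 + Real.sinh (t*b)^2) * (u^2 + h^2)
          ≤ 60 * (Real.pi * S) * h * (u^2 + b^2) := by
        rcases eq_or_ne b 0 with hb0 | hb0
        · have hSv : S = t / Real.pi := by rw [hS']; exact pwSinc_self_zero t (by rw [← hbdef]; exact hb0)
          have hπS : Real.pi * S = t := by rw [hSv]; field_simp
          have hth : t * h = 1 := by rw [hh', hb0, abs_zero, zero_add]; field_simp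
          have hpos : (0:ℝ) < t^2 := by positivity
          have core : Real.sin (t*u)^2 * ((t*u)^2 + 1) ≤ 60 * ((t*u)^2) := by
            nlinarith [mul_nonneg (sub_nonneg.2 hsin1) (sq_nonneg (t*u)), hsin2]
          have e1 : (Real.sin (t*u)^2 + Real.sinh (t*b)^2) * (u^2 + h^2) * t^2
              = Real.sin (t*u)^2 * ((t*u)^2 + (t*h)^2) := by
            rw [hb0, mul_zero, Real.sinh_zero]; ring
          rw [hth, one_pow] at e1
          have e3 : 60 * (Real.pi * S) * h * (u^2 + b^2) * t^2 = 60 * ((t*u)^2) := by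
            calc 60 * (Real.pi * S) * h * (u^2 + b^2) * t^2
                = 60 * (t*h) * ((t*u)^2) := by rw [hπS, hb0]; ring
              _ = 60 * ((t*u)^2) := by rw [hth]; ring
          have final : (Real.sin (t*u)^2 + Real.sinh (t*b)^2) * (u^2 + h^2) * t^2
              ≤ 60 * (Real.pi * S) * h * (u^2 + b^2) * t^2 := by
            rw [e1, e3]; exact core
          exact le_of_mul_le_mul_right final hpos
        · set c := t * |b| with hc'
          have habs : 0 < |b| := abs_pos.2 hb0
          have hc : 0 < c := by rw [hc']; positivity
          clear_value c
          have hth : t * h = c + 1 := by rw [hh', hc']; field_simp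
          have htb : c^2 = t^2 * b^2 := by rw [hc', mul_pow, _root_.sq_abs]
          have hshb : Real.sinh (t*b)^2 = Real.sinh c ^2 := by
            rcases abs_cases b with ⟨he, _⟩ | ⟨he, _⟩
            · rw [hc', he]
            · rw [hc', he, show t * -b = -(t*b) from by ring, Real.sinh_neg]; ring
          have hπS : Real.pi * S = Real.sinh (2*c) / (2*c) * t := by
            rw [hS', pwSinc_self_ne t (by rw [← hbdef]; exact hb0)]
            rcases abs_cases b with ⟨he, hbpos⟩ | ⟨he, hbneg⟩
            · rw [hc', he, ← hbdef]
              have hb' : (0:ℝ) < b := lt_of_le_of_ne (by linarith [abs_nonneg b, he ▸ habs]) (Ne.symm hb0)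
              field_simp
            · rw [hc', he, ← hbdef, show 2*(t*b) = -(2*(t*(-b))) from by ring, Real.sinh_neg]
              have hb' : b < 0 := by cases lt_or_gt_of_ne hb0 with
                | inl h => exact h
                | inr h => exfalso; nlinarith
              have hb'' : b ≠ 0 := hb0
              field_simp
          have D := diamond hc hsin0 hsin1 (by rw [mul_pow] at hsin2 ⊢; exact hsin2)
            (sinh_le_mul_cosh hc.le)
          have hpos : (0:ℝ) < 2*c*t^2 := by positivity
          have e1 : (Real.sin (t*u)^2 + Real.sinh (t*b)^2) * (u^2 + h^2) * (2*c*t^2)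
              = (Real.sin (t*u)^2 + Real.sinh c ^2) * ((t*u)^2 + (c+1)^2) * (2*c) := by
            rw [hshb, ← hth]; ring
          have e2 : 60 * (Real.pi * S) * h * (u^2 + b^2) * (2*c*t^2)
              = 60 * Real.sinh (2*c) * (c+1) * ((t*u)^2 + c^2) := by
            rw [hπS, ← hth, htb]
            field_simp
          have final : (Real.sin (t*u)^2 + Real.sinh (t*b)^2) * (u^2 + h^2) * (2*c*t^2)
              ≤ 60 * (Real.pi * S) * h * (u^2 + b^2) * (2*c*t^2) := by
            rw [e1, e2]; exact D
          exact le_of_mul_le_mul_right final hpos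
      rw [div_le_iff₀ (by positivity : (0:ℝ) < Real.pi^2 * (u^2+b^2))]
      have e3 : 60/Real.pi * S * (h/(u^2+h^2)) * (Real.pi^2 * (u^2+b^2))
          = (60 * (Real.pi * S) * h * (u^2+b^2)) / (u^2+h^2) := by
        field_simp
      rw [e3, le_div_iff₀ h2]
      exact key
  -- transfer step
  have htr : h/(u^2+h^2) ≤ 6*X*(H/((x-s)^2+H^2)) := by
    have hw : (x-s)^2 ≤ 2*u^2 + 2*d^2 := by
      have hxs : x - s = u + (a - s) := by rw [hu]; ring
      have hdd : d^2 = (a-s)^2 := by rw [hd']; exact _root_.sq_abs _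
      rw [hxs]
      nlinarith [sq_nonneg (u - (a-s))]
    have T : h * ((x-s)^2 + H^2) ≤ 6 * X * H * (u^2 + h^2) := by
      rw [hH']; exact transfer hh hd0 hX1 hXh hw
    rw [show 6*X*(H/((x-s)^2+H^2)) = (6*X*H)/((x-s)^2+H^2) from by ring,
      div_le_div_iff₀ h2 h1]
    nlinarith [T]
  have hq : 0 ≤ H/((x-s)^2+H^2) := le_of_lt (div_pos hH h1)
  have hX0 : (0:ℝ) ≤ X := le_trans zero_le_one hX1
  calc ‖pwSinc t l (x:ℂ)‖^2 ≤ 60/Real.pi * S * (h/(u^2+h^2)) := claim1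
    _ ≤ 60/Real.pi * S * (6*X*(H/((x-s)^2+H^2))) := by
        apply mul_le_mul_of_nonneg_left htr
        apply mul_nonneg (by positivity) hS0
    _ = (60/Real.pi*6) * (X * S * (H/((x-s)^2+H^2))) := by ring
    _ ≤ 120 * (X * S * (H/((x-s)^2+H^2))) := by
        apply mul_le_mul_of_nonneg_right
        · rw [div_mul_eq_mul_div, div_le_iff₀ hπ]
          nlinarith [Real.pi_gt_three]
        · exact mul_nonneg (mul_nonneg hX0 hS0) hq
    _ = 120 * VV s t l * (H/((x-s)^2+H^2)) := by rw [VV, ← hX', ← hS']; ring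

lemma lintegral_poisson_le {H s : ℝ} (hH : 0 < H) (g : ℝ → ℂ)
    (hmeas : AEMeasurable (fun x => (‖g x‖₊ : ℝ≥0∞))) :
    ∫⁻ x : ℝ, ENNReal.ofReal (H / ((x - s)^2 + H^2)) * (‖g x‖₊ : ℝ≥0∞) ≤
      ENNReal.ofReal 16 * HLMax g s := by
  set c : ℕ → ℝ≥0∞ := fun k => ENNReal.ofReal (4 / (4^k * H)) with hc
  set I : ℕ → Set ℝ := fun k => Set.Ioo (s - 2^k*H) (s + 2^k*H) with hI
  -- pointwise domination
  have hpt : ∀ x : ℝ, ENNReal.ofReal (H / ((x - s)^2 + H^2)) ≤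
      ∑' k, c k * (I k).indicator (fun _ => (1:ℝ≥0∞)) x := by
    intro x
    have hex : ∃ n : ℕ, |x - s| < 2^n * H := by
      obtain ⟨n, hn⟩ := pow_unbounded_of_one_lt (|x - s|/H) (by norm_num : (1:ℝ) < 2)
      exact ⟨n, by rw [div_lt_iff₀ hH] at hn; linarith⟩
    set k := Nat.find hex with hk
    have hklt : |x - s| < 2^k * H := Nat.find_spec hex
    have hxI : x ∈ I k := by
      rw [hI]; simp only [Set.mem_Ioo]
      constructor <;> [nlinarith [abs_lt.1 hklt]; nlinarith [abs_lt.1 hklt]]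
    have hreal : H / ((x - s)^2 + H^2) ≤ 4 / (4^k * H) := by
      rcases Nat.eq_zero_or_pos k with hk0 | hkpos
      · rw [hk0]
        simp only [pow_zero, one_mul]
        rw [div_le_div_iff₀ (by positivity) hH]
        nlinarith [sq_nonneg (x - s)]
      · obtain ⟨m, hm⟩ := Nat.exists_eq_succ_of_ne_zero hkpos.ne'
        have hnot : ¬ (|x - s| < 2^m * H) := Nat.find_min hex (by omega)
        push_neg at hnot
        have h4 : (4:ℝ)^k = 4 * (2^m * 2^m) := by
          rw [hm, pow_succ]
          have : (4:ℝ)^m = 2^m * 2^m := by rw [← mul_pow]; norm_num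
          rw [this]; ring
        have hsq : 2^m * H * (2^m * H) ≤ (x-s)^2 := by
          have h0 : (0:ℝ) ≤ 2^m*H := by positivity
          have h1 := mul_self_le_mul_self h0 hnot
          nlinarith [h1, abs_mul_abs_self (x-s)]
        rw [div_le_div_iff₀ (by positivity) (by positivity)]
        have h2m : (0:ℝ) < 2^m * H := by positivity
        nlinarith [sq_nonneg (x-s), sq_nonneg H]
    calc ENNReal.ofReal (H / ((x - s)^2 + H^2)) ≤ c k * (I k).indicator (fun _ => (1:ℝ≥0∞)) x := by
          rw [Set.indicator_of_mem hxI, mul_one, hc]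
          exact ENNReal.ofReal_le_ofReal hreal
      _ ≤ ∑' k, c k * (I k).indicator (fun _ => (1:ℝ≥0∞)) x := ENNReal.le_tsum k
  calc ∫⁻ x : ℝ, ENNReal.ofReal (H / ((x - s)^2 + H^2)) * (‖g x‖₊ : ℝ≥0∞)
      ≤ ∫⁻ x : ℝ, (∑' k, c k * (I k).indicator (fun _ => (1:ℝ≥0∞)) x) * (‖g x‖₊ : ℝ≥0∞) := by
        apply lintegral_mono
        intro x
        exact mul_le_mul_left (hpt x) _
    _ = ∫⁻ x : ℝ, ∑' k, c k * ((I k).indicator (fun _ => (1:ℝ≥0∞)) x * (‖g x‖₊ : ℝ≥0∞)) := by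
        congr 1; funext x
        rw [← ENNReal.tsum_mul_right]
        exact tsum_congr fun k => mul_assoc _ _ _
    _ = ∑' k, ∫⁻ x : ℝ, c k * ((I k).indicator (fun _ => (1:ℝ≥0∞)) x * (‖g x‖₊ : ℝ≥0∞)) := by
        apply lintegral_tsum
        intro k
        exact (aemeasurable_const.mul
          (((measurable_const.indicator measurableSet_Ioo).aemeasurable).mul hmeas))
    _ ≤ ∑' k, (c k * ENNReal.ofReal (2 * (2^k * H))) * HLMax g s := by
        apply ENNReal.tsum_le_tsum
        intro k
        rw [lintegral_const_mul' _ _ ENNReal.ofReal_ne_top]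
        have hind : (fun x => (I k).indicator (fun _ => (1:ℝ≥0∞)) x * (‖g x‖₊ : ℝ≥0∞))
            = (I k).indicator (fun x => (‖g x‖₊ : ℝ≥0∞)) := by
          funext x
          by_cases hx : x ∈ I k
          · simp [hx]
          · simp [hx]
        rw [hind, lintegral_indicator measurableSet_Ioo]
        have hr : (0:ℝ) < 2^k * H := by positivity
        have hbound : ∫⁻ x in I k, (‖g x‖₊ : ℝ≥0∞) ≤ ENNReal.ofReal (2 * (2^k * H)) * HLMax g s := by
          have hle : (ENNReal.ofReal (2 * (2^k*H)))⁻¹ * ∫⁻ x in Set.Ioo (s - 2^k*H) (s + 2^k*H), (‖g x‖₊ : ℝ≥0∞)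
              ≤ HLMax g s := by
            rw [HLMax]
            exact le_iSup₂ (f := fun (r:ℝ) (_ : 0 < r) =>
              (ENNReal.ofReal (2 * r))⁻¹ * ∫⁻ x in Set.Ioo (s - r) (s + r), (‖g x‖₊ : ℝ≥0∞))
              (2^k*H) hr
          have hne : ENNReal.ofReal (2 * (2^k*H)) ≠ 0 := by
            simp only [ne_eq, ENNReal.ofReal_eq_zero, not_le]; positivity
          calc ∫⁻ x in I k, (‖g x‖₊ : ℝ≥0∞)
              = ENNReal.ofReal (2 * (2^k*H)) *
                ((ENNReal.ofReal (2 * (2^k*H)))⁻¹ * ∫⁻ x in I k, (‖g x‖₊ : ℝ≥0∞)) := by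
                rw [← mul_assoc, ENNReal.mul_inv_cancel hne ENNReal.ofReal_ne_top, one_mul]
            _ ≤ ENNReal.ofReal (2 * (2^k*H)) * HLMax g s := by
                exact mul_le_mul_right (by rw [hI] at *; exact hle) _
        calc c k * ∫⁻ x in I k, (‖g x‖₊ : ℝ≥0∞)
            ≤ c k * (ENNReal.ofReal (2 * (2^k * H)) * HLMax g s) := mul_le_mul_right hbound _
          _ = (c k * ENNReal.ofReal (2 * (2^k * H))) * HLMax g s := (mul_assoc _ _ _).symm
    _ = (∑' k, c k * ENNReal.ofReal (2 * (2^k * H))) * HLMax g s := ENNReal.tsum_mul_right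
    _ ≤ ENNReal.ofReal 16 * HLMax g s := by
        apply mul_le_mul_left
        have hterm : ∀ k : ℕ, c k * ENNReal.ofReal (2 * (2^k * H)) = ENNReal.ofReal 8 * (ENNReal.ofReal (1/2))^k := by
          intro k
          rw [hc, ← ENNReal.ofReal_mul (by positivity), ← ENNReal.ofReal_pow (by norm_num), ← ENNReal.ofReal_mul (by norm_num)]
          congr 1
          have h4 : (4:ℝ)^k = 2^k * 2^k := by rw [← mul_pow]; norm_num
          have h2 : (0:ℝ) < (2:ℝ)^k := by positivity
          field_simp [h4]
          have hh2 : (2:ℝ)^k * (1/2)^k = 1 := by rw [← mul_pow]; norm_num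
          linear_combination (-(8 * (2:ℝ)^k)) * hh2 + (-(8 * (1/2:ℝ)^k)) * h4
        rw [tsum_congr hterm, ENNReal.tsum_mul_left, ENNReal.tsum_geometric]
        have h12 : (1:ℝ≥0∞) - ENNReal.ofReal (1/2) = ENNReal.ofReal (1/2) := by
          rw [← ENNReal.ofReal_one, ← ENNReal.ofReal_sub _ (by norm_num)]
          norm_num
        rw [h12, ← ENNReal.ofReal_inv_of_pos (by norm_num)]
        rw [← ENNReal.ofReal_mul (by norm_num)]
        norm_num

/-- the sinc-square kernel is dominated by the Hardy–Littlewood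
maximal function. -/
theorem sinc_square_kernel_dominated_by_maximal :
    ∃ C : ℝ, 0 < C ∧
      ∀ (t : ℝ), 0 < t → ∀ (s : ℝ) (l : ℂ) (g : ℝ → ℂ),
      LocallyIntegrable g →
      (∫⁻ x : ℝ, (‖pwSinc t l (x : ℂ)‖₊ : ℝ≥0∞) ^ 2 * (‖g x‖₊ : ℝ≥0∞)) ≤
        ENNReal.ofReal (C * VV s t l) * HLMax g s := by
  refine ⟨1920, by norm_num, ?_⟩
  intro t ht s l g hg
  set Hc := |l.im| + 1/t + |l.re - s| with hHc'
  have hHc : 0 < Hc := by rw [hHc']; positivity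
  have hmeas : AEMeasurable (fun x => (‖g x‖₊ : ℝ≥0∞)) :=
    hg.aestronglyMeasurable.enorm
  have hVV0 : 0 ≤ VV s t l := by
    apply mul_nonneg
    · rw [XX]; exact le_trans zero_le_one (le_max_left _ _)
    · exact pwSinc_self_re_nonneg t ht l
  calc ∫⁻ x : ℝ, (‖pwSinc t l (x : ℂ)‖₊ : ℝ≥0∞) ^ 2 * (‖g x‖₊ : ℝ≥0∞)
      ≤ ∫⁻ x : ℝ, ENNReal.ofReal (120 * VV s t l) *
          (ENNReal.ofReal (Hc/((x-s)^2+Hc^2)) * (‖g x‖₊ : ℝ≥0∞)) := by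
        apply lintegral_mono
        intro x
        dsimp only
        rw [← mul_assoc]
        apply mul_le_mul_left
        have h1 : ((‖pwSinc t l (x:ℂ)‖₊ : ℝ≥0∞))^2 = ENNReal.ofReal (‖pwSinc t l (x:ℂ)‖^2) := by
          rw [← ENNReal.ofReal_coe_nnreal, coe_nnnorm, ← ENNReal.ofReal_pow (norm_nonneg _)]
        rw [h1, ← ENNReal.ofReal_mul (by linarith : (0:ℝ) ≤ 120 * VV s t l)]
        apply ENNReal.ofReal_le_ofReal
        refine le_trans (master t ht s l x) (le_of_eq ?_)
        rw [hHc']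
    _ = ENNReal.ofReal (120 * VV s t l) *
          ∫⁻ x : ℝ, ENNReal.ofReal (Hc/((x-s)^2+Hc^2)) * (‖g x‖₊ : ℝ≥0∞) :=
        lintegral_const_mul' _ _ ENNReal.ofReal_ne_top
    _ ≤ ENNReal.ofReal (120 * VV s t l) * (ENNReal.ofReal 16 * HLMax g s) :=
        mul_le_mul_right (lintegral_poisson_le hHc g hmeas) _
    _ = ENNReal.ofReal (1920 * VV s t l) * HLMax g s := by
        rw [← mul_assoc, ← ENNReal.ofReal_mul (by linarith : (0:ℝ) ≤ 120 * VV s t l)]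
        congr 2
        ring
end

section
/- (Bilinear sinc kernel bound by the maximal function.) There exists an absolute constant C > 0 such that for every t > 0, every s ∈ ℝ, every λ, z ∈ ℂ, and every locally integrable g : ℝ → ℂ, | ∫_ℝ sinc(t,λ,x) · conj(sinc(t,z,x)) · g(x) dx | ≤ C · sqrt( 𝓥_{s,t}(λ) · 𝓥_{s,t}(z) ) · M g (s), where M g is the Hardy–Littlewood maximal function of g. -/
open MeasureTheory Complex
open scoped ENNReal NNReal

/-! ### Auxiliary real/complex analysis lemmas -/

lemma aux_sinh_le_mul_cosh {v : ℝ} (hv : 0 ≤ v) : Real.sinh v ≤ v * Real.cosh v := by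
  have h : MonotoneOn (fun x : ℝ => x * Real.cosh x - Real.sinh x) (Set.Ici 0) := by
    apply monotoneOn_of_deriv_nonneg (convex_Ici 0)
    · exact ((continuous_id.mul Real.continuous_cosh).sub Real.continuous_sinh).continuousOn
    · exact ((differentiable_id.mul Real.differentiable_cosh).sub
        Real.differentiable_sinh).differentiableOn
    · intro x hx
      rw [interior_Ici, Set.mem_Ioi] at hx
      have h1 : HasDerivAt (fun x : ℝ => x * Real.cosh x - Real.sinh x)
          ((1 * Real.cosh x + x * Real.sinh x) - Real.cosh x) x :=
        ((hasDerivAt_id x).mul (Real.hasDerivAt_cosh x)).sub (Real.hasDerivAt_sinh x)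
      rw [h1.deriv]
      have : 0 ≤ Real.sinh x := Real.sinh_nonneg_iff.mpr hx.le
      nlinarith
  have := h Set.self_mem_Ici (Set.mem_Ici.mpr hv) hv
  simp at this
  linarith

lemma aux_sin_expand (u v : ℝ) : Complex.sin (↑u + ↑v * Complex.I) =
    ↑(Real.sin u) * ↑(Real.cosh v) + ↑(Real.cos u) * (↑(Real.sinh v) * Complex.I) := by
  rw [Complex.sin_add, Complex.cos_mul_I, Complex.sin_mul_I]
  push_cast
  ring

lemma aux_abs_sinh_le (v : ℝ) : |Real.sinh v| ≤ Real.cosh v := by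
  rw [Real.abs_sinh]
  nlinarith [Real.cosh_sub_sinh |v|, Real.exp_pos (-|v|), Real.cosh_abs v]

lemma aux_abs_sinh_le' (v : ℝ) : |Real.sinh v| ≤ |v| * Real.cosh v := by
  rw [Real.abs_sinh]
  calc Real.sinh |v| ≤ |v| * Real.cosh |v| := aux_sinh_le_mul_cosh (abs_nonneg v)
    _ = |v| * Real.cosh v := by rw [Real.cosh_abs]

lemma aux_sin_bound₁ (u v : ℝ) :
    ‖Complex.sin (↑u + ↑v * Complex.I)‖ ≤ 2 * Real.cosh v := by
  rw [aux_sin_expand]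
  have h1 := norm_add_le ((Real.sin u : ℂ) * (Real.cosh v : ℂ))
    (↑(Real.cos u) * (↑(Real.sinh v) * Complex.I))
  simp only [norm_mul, Complex.norm_real, Real.norm_eq_abs, Complex.norm_I, mul_one] at h1
  have hs : |Real.sin u| ≤ 1 := Real.abs_sin_le_one u
  have hc : |Real.cos u| ≤ 1 := Real.abs_cos_le_one u
  have hch : (0:ℝ) < Real.cosh v := Real.cosh_pos v
  have hsh := aux_abs_sinh_le v
  calc ‖_‖ ≤ |Real.sin u| * |Real.cosh v| + |Real.cos u| * |Real.sinh v| := h1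
    _ ≤ 2 * Real.cosh v := by
        rw [abs_of_pos hch]
        nlinarith [abs_nonneg (Real.sin u), abs_nonneg (Real.cos u), abs_nonneg (Real.sinh v)]

lemma aux_sin_bound₂ (u v : ℝ) :
    ‖Complex.sin (↑u + ↑v * Complex.I)‖ ≤ (|u| + |v|) * Real.cosh v := by
  rw [aux_sin_expand]
  have h1 := norm_add_le ((Real.sin u : ℂ) * (Real.cosh v : ℂ))
    (↑(Real.cos u) * (↑(Real.sinh v) * Complex.I))
  simp only [norm_mul, Complex.norm_real, Real.norm_eq_abs, Complex.norm_I, mul_one] at h1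
  have hs : |Real.sin u| ≤ |u| := Real.abs_sin_le_abs
  have hc : |Real.cos u| ≤ 1 := Real.abs_cos_le_one u
  have hch : (0:ℝ) < Real.cosh v := Real.cosh_pos v
  have hsh := aux_abs_sinh_le' v
  calc ‖_‖ ≤ |Real.sin u| * |Real.cosh v| + |Real.cos u| * |Real.sinh v| := h1
    _ ≤ (|u| + |v|) * Real.cosh v := by
        rw [abs_of_pos hch]
        nlinarith [abs_nonneg (Real.cos u), abs_nonneg (Real.sinh v), abs_nonneg v,
          abs_nonneg (Real.sin u)]

/-- Decomposition of the sinc argument at a real point. -/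
lemma aux_arg_decomp (t : ℝ) (l : ℂ) (x : ℝ) :
    t * (↑x - (starRingEnd ℂ) l) =
      ↑(t * (x - l.re)) + ↑(t * l.im) * Complex.I := by
  apply Complex.ext <;> simp [Complex.mul_re, Complex.mul_im] <;> ring

lemma aux_abs_arg (l : ℂ) (x : ℝ) :
    ‖↑x - (starRingEnd ℂ) l‖ ^ 2 = (x - l.re) ^ 2 + l.im ^ 2 := by
  rw [Complex.sq_norm, Complex.normSq_apply]
  simp
  ring

/-- Pointwise bound: `|pwSinc t l x| * |x - conj l| ≤ 2 cosh (t Im l) / π`. -/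
lemma pwSinc_abs_mul (t : ℝ) (ht : 0 < t) (l : ℂ) (x : ℝ) :
    ‖pwSinc t l ↑x‖ * ‖↑x - (starRingEnd ℂ) l‖ ≤
      2 * Real.cosh (t * l.im) / Real.pi := by
  have hπ : (0:ℝ) < Real.pi := Real.pi_pos
  have hch : (0:ℝ) < Real.cosh (t * l.im) := Real.cosh_pos _
  by_cases h : (↑x : ℂ) = (starRingEnd ℂ) l
  · rw [pwSinc, if_pos h, h]
    simp only [sub_self, map_zero, norm_zero, mul_zero]
    positivity
  · rw [pwSinc, if_neg h]
    set w : ℂ := ↑x - (starRingEnd ℂ) l with hw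
    have hw0 : w ≠ 0 := sub_ne_zero.mpr h
    have habs : ‖w‖ ≠ 0 := norm_ne_zero_iff.mpr hw0
    rw [norm_div, norm_mul, Complex.norm_real, Real.norm_eq_abs, abs_of_pos hπ]
    rw [div_mul_eq_mul_div, div_le_div_iff₀ (by positivity) hπ]
    have hb := aux_sin_bound₁ (t * (x - l.re)) (t * l.im)
    rw [← aux_arg_decomp] at hb
    nlinarith [norm_nonneg w, norm_nonneg (Complex.sin (↑t * w)),
      mul_le_mul_of_nonneg_right hb (norm_nonneg w)]


/-- Pointwise bound: `|pwSinc t l x| ≤ (2 cosh (t Im l) / π) * (2 t/(t|Im l|+1))`. -/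
lemma pwSinc_abs_le (t : ℝ) (ht : 0 < t) (l : ℂ) (x : ℝ) :
    ‖pwSinc t l ↑x‖ ≤
      (2 * Real.cosh (t * l.im) / Real.pi) * (2 * (t / (t * |l.im| + 1))) := by
  have hπ : (0:ℝ) < Real.pi := Real.pi_pos
  have hch : (0:ℝ) < Real.cosh (t * l.im) := Real.cosh_pos _
  have hden : (0:ℝ) < t * |l.im| + 1 := by positivity
  by_cases h : (↑x : ℂ) = (starRingEnd ℂ) l
  · have hl : l = (↑x : ℂ) := by
      have := congrArg (starRingEnd ℂ) h
      rwa [Complex.conj_conj, Complex.conj_ofReal, eq_comm] at this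
    rw [pwSinc, if_pos h]
    rw [Complex.norm_real, Real.norm_eq_abs, abs_of_pos (by positivity), hl]
    simp only [Complex.ofReal_im, mul_zero, abs_zero, Real.cosh_zero, zero_add, div_one]
    rw [show 2 * (1:ℝ) / Real.pi * (2 * t) = (4 * t) / Real.pi by ring,
      div_le_div_iff₀ hπ hπ]
    nlinarith
  · rw [pwSinc, if_neg h]
    set w : ℂ := ↑x - (starRingEnd ℂ) l with hw
    have hw0 : w ≠ 0 := sub_ne_zero.mpr h
    have habs : (0:ℝ) < ‖w‖ := norm_pos_iff.mpr hw0
    have hwre : w.re = x - l.re := by simp [hw]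
    have hwim : w.im = l.im := by simp [hw]
    have hre : |x - l.re| ≤ ‖w‖ := by rw [← hwre]; exact Complex.abs_re_le_norm w
    have him : |l.im| ≤ ‖w‖ := by rw [← hwim]; exact Complex.abs_im_le_norm w
    have key : ‖Complex.sin (↑t * w)‖ ≤
        4 * t * ‖w‖ * Real.cosh (t * l.im) / (t * |l.im| + 1) := by
      rcases le_or_gt (t * |l.im|) 1 with hc1 | hc1
      · have hb := aux_sin_bound₂ (t * (x - l.re)) (t * l.im)
        rw [← aux_arg_decomp] at hb
        have h1 : |t * (x - l.re)| + |t * l.im| ≤ 2 * t * ‖w‖ := by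
          rw [abs_mul, abs_mul, abs_of_pos ht]
          nlinarith
        rw [le_div_iff₀ hden]
        nlinarith [norm_nonneg (Complex.sin (↑t * w))]
      · have hb := aux_sin_bound₁ (t * (x - l.re)) (t * l.im)
        rw [← aux_arg_decomp] at hb
        rw [le_div_iff₀ hden]
        have h2 : t * |l.im| ≤ t * ‖w‖ := by nlinarith
        nlinarith
    rw [norm_div, norm_mul, Complex.norm_real, Real.norm_eq_abs, abs_of_pos hπ]
    rw [div_le_iff₀ (by positivity)]
    rw [le_div_iff₀ hden] at key
    -- goal : abs sin ≤ 2*cosh/π * (2*(t/(t|b|+1))) * (π * abs w)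
    have expand : 2 * Real.cosh (t * l.im) / Real.pi * (2 * (t / (t * |l.im| + 1))) *
        (Real.pi * ‖w‖) =
        4 * t * ‖w‖ * Real.cosh (t * l.im) / (t * |l.im| + 1) := by
      field_simp
      ring
    rw [expand, le_div_iff₀ hden]
    exact key


/-- Lower bound for the diagonal value of the sinc kernel. -/
lemma pwSinc_self_re_ge (t : ℝ) (ht : 0 < t) (l : ℂ) :
    Real.cosh (t * l.im) ^ 2 * (t / (t * |l.im| + 1)) / (2 * Real.pi) ≤
      (pwSinc t l l).re := by
  have hπ : (0:ℝ) < Real.pi := Real.pi_pos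
  by_cases hb : l.im = 0
  · have h : l = (starRingEnd ℂ) l := (Complex.conj_eq_iff_im.mpr hb).symm
    rw [pwSinc, if_pos h, Complex.ofReal_re, hb]
    simp only [mul_zero, abs_zero, zero_add, div_one, Real.cosh_zero, one_pow, one_mul]
    rw [div_le_div_iff₀ (by positivity) hπ]
    nlinarith
  · have h : l ≠ (starRingEnd ℂ) l := fun hc => hb (Complex.conj_eq_iff_im.mp hc.symm)
    rw [pwSinc, if_neg h]
    have hsub : l - (starRingEnd ℂ) l = ((2 * l.im : ℝ) : ℂ) * Complex.I :=
      Complex.sub_conj l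
    have harg : (t : ℂ) * (l - (starRingEnd ℂ) l) = ((2 * t * l.im : ℝ) : ℂ) * Complex.I := by
      rw [hsub]; push_cast; ring
    have hsin : Complex.sin ((t : ℂ) * (l - (starRingEnd ℂ) l)) =
        ((Real.sinh (2 * t * l.im) : ℝ) : ℂ) * Complex.I := by
      rw [harg, Complex.sin_mul_I, Complex.ofReal_sinh]
    have hval : Complex.sin ((t : ℂ) * (l - (starRingEnd ℂ) l)) /
        ((Real.pi : ℂ) * (l - (starRingEnd ℂ) l)) =
        ((Real.sinh (2 * t * l.im) / (Real.pi * (2 * l.im)) : ℝ) : ℂ) := by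
      have him : ((l.im : ℂ)) ≠ 0 := Complex.ofReal_ne_zero.mpr hb
      have hpc : ((Real.pi : ℂ)) ≠ 0 := Complex.ofReal_ne_zero.mpr hπ.ne'
      rw [hsin, hsub, div_eq_iff]
      · push_cast
        field_simp [him, hpc]
      · apply mul_ne_zero hpc
        apply mul_ne_zero _ Complex.I_ne_zero
        exact_mod_cast mul_ne_zero two_ne_zero hb
    rw [hval, Complex.ofReal_re]
    -- now the real inequality
    have hβ : (0:ℝ) < |l.im| := abs_pos.mpr hb
    have hsg : Real.sinh (2 * t * l.im) / (Real.pi * (2 * l.im)) =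
        Real.sinh (2 * t * |l.im|) / (Real.pi * (2 * |l.im|)) := by
      rcases abs_choice l.im with hh | hh
      · rw [hh]
      · rw [hh, show 2*t*(-l.im) = -(2*t*l.im) by ring, Real.sinh_neg]
        field_simp
    rw [hsg]
    have hcoshe : Real.cosh (t * l.im) = Real.cosh (t * |l.im|) := by
      rw [← Real.cosh_abs (t * l.im), abs_mul, abs_of_pos ht]
    rw [hcoshe]
    set u := t * |l.im| with hu
    have hu0 : 0 < u := by positivity
    have hkey : u * Real.cosh u ≤ (u + 1) * Real.sinh u := by
      nlinarith [Real.self_le_sinh_iff.mpr hu0.le, Real.cosh_sub_sinh u,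
        Real.exp_le_one_iff.mpr (by linarith : -u ≤ 0), Real.exp_pos (-u)]
    have h2 : Real.sinh (2 * u) = 2 * Real.sinh u * Real.cosh u := Real.sinh_two_mul u
    have e2 : 2 * t * |l.im| = 2 * u := by rw [hu]; ring
    rw [e2, h2]
    rw [div_le_div_iff₀ (by positivity) (by positivity)]
    have e3 : Real.cosh u ^ 2 * (t / (u + 1)) * (Real.pi * (2 * |l.im|)) =
        2 * Real.pi * (u * Real.cosh u ^ 2) / (u + 1) := by
      rw [hu]
      field_simp
    rw [e3, div_le_iff₀ (by positivity : (0:ℝ) < u + 1)]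
    have hsnn : (0:ℝ) ≤ Real.sinh u := Real.sinh_nonneg_iff.mpr hu0.le
    have hnn : (0:ℝ) ≤ 2 * Real.pi * Real.sinh u * Real.cosh u * (u + 1) := by
      have := (Real.cosh_pos u).le
      positivity
    linarith [mul_le_mul_of_nonneg_left hkey
      (by positivity : (0:ℝ) ≤ 2 * Real.pi * Real.cosh u)]


lemma VV_pos (s t : ℝ) (ht : 0 < t) (l : ℂ) : 0 < VV s t l := by
  have h1 : (0:ℝ) < Real.cosh (t * l.im) ^ 2 * (t / (t * |l.im| + 1)) / (2 * Real.pi) := by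
    have := Real.cosh_pos (t * l.im)
    have := Real.pi_pos
    positivity
  have h2 := pwSinc_self_re_ge t ht l
  have h3 : (1:ℝ) ≤ XX s t l := le_max_left _ _
  have : (0:ℝ) < (pwSinc t l l).re := lt_of_lt_of_le h1 h2
  unfold VV
  nlinarith


/-- The key maximal-function estimate for radially-dominated weights. -/
lemma maximal_bound (s a m : ℝ) (hm : 0 < m) (g : ℝ → ℂ) (W : ℝ → ℝ)
    (hW1 : ∀ x, W x ≤ 4 * m ^ 2) (hW2 : ∀ x, x ≠ a → W x ≤ ((x - a) ^ 2)⁻¹) :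
    ∫⁻ x : ℝ, ENNReal.ofReal (W x) * ‖g x‖₊ ≤
      ENNReal.ofReal (32 * m ^ 2 * |a - s| + 160 * m) * HLMax g s := by
  set d := |a - s| with hd
  have hd0 : 0 ≤ d := abs_nonneg _
  set R₀ := d + 1/m with hR₀def
  have hR₀ : 0 < R₀ := by positivity
  set T := 16 * m ^ 2 * R₀ + 64 / R₀ with hTdef
  have hT0 : 0 < T := by positivity
  set R : ℕ → ℝ := fun k => 2 ^ k * R₀ with hRdef
  have hRpos : ∀ k, 0 < R k := fun k => by simp only [hRdef]; positivity
  set B : ℕ → Set ℝ := fun k => Set.Ioo (s - R k) (s + R k) with hBdef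
  have hBmeas : ∀ k, MeasurableSet (B k) := fun k => measurableSet_Ioo
  set A : ℕ → Set ℝ := fun k => if k = 0 then B 1 else B (k+1) \ B k with hAdef
  have hAmeas : ∀ k, MeasurableSet (A k) := by
    intro k
    rcases Nat.eq_zero_or_pos k with h0 | hp
    · simp only [hAdef, h0, if_pos rfl]; exact hBmeas 1
    · simp only [hAdef, if_neg hp.ne']; exact (hBmeas _).diff (hBmeas _)
  have hRmono : ∀ k, R k ≤ R (k+1) := by
    intro k
    simp only [hRdef]
    have : (2:ℝ)^k ≤ 2^(k+1) := by
      apply pow_le_pow_right₀ <;> norm_num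
    nlinarith
  have hBsub : ∀ k, B k ⊆ B (k+1) := by
    intro k
    apply Set.Ioo_subset_Ioo <;> nlinarith [hRmono k]
  have hAsub : ∀ k, A k ⊆ B (k+1) := by
    intro k
    rcases Nat.eq_zero_or_pos k with h0 | hp
    · simp only [hAdef, h0, if_pos rfl]; exact subset_rfl
    · simp only [hAdef, if_neg hp.ne']; exact Set.diff_subset
  have hcover : (Set.univ : Set ℝ) = ⋃ k, A k := by
    apply Set.eq_of_subset_of_subset _ (Set.subset_univ _)
    have hBU : ∀ n, B n ⊆ ⋃ k, A k := by
      intro n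
      induction n with
      | zero =>
          refine (hBsub 0).trans ?_
          refine Set.Subset.trans ?_ (Set.subset_iUnion A 0)
          simp only [hAdef, if_pos rfl]
          exact subset_rfl
      | succ n ih =>
          rcases Nat.eq_zero_or_pos n with h0 | hp
          · subst h0
            refine Set.Subset.trans ?_ (Set.subset_iUnion A 0)
            simp only [hAdef, if_pos rfl]
            exact subset_rfl
          · intro x hx
            by_cases hxn : x ∈ B n
            · exact ih hxn
            · refine Set.mem_iUnion.mpr ⟨n, ?_⟩
              simp only [hAdef, if_neg hp.ne']
              exact ⟨hx, hxn⟩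
    intro x _
    obtain ⟨n, hn⟩ := pow_unbounded_of_one_lt (|x - s| / R₀) (one_lt_two (α := ℝ))
    have hxB : x ∈ B n := by
      have h1 : |x - s| < R n := by
        rw [hRdef]
        calc |x - s| = (|x - s| / R₀) * R₀ := by field_simp
          _ < 2 ^ n * R₀ := by exact mul_lt_mul_of_pos_right hn hR₀
      simp only [hBdef, Set.mem_Ioo]
      rcases abs_lt.mp h1 with ⟨h2, h3⟩
      constructor <;> linarith
    exact hBU n hxB
  have hHL : ∀ k : ℕ, (∫⁻ x in B k, (‖g x‖₊ : ℝ≥0∞)) ≤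
      ENNReal.ofReal (2 * R k) * HLMax g s := by
    intro k
    have hr := hRpos k
    have hle : (ENNReal.ofReal (2 * R k))⁻¹ *
        ∫⁻ x in Set.Ioo (s - R k) (s + R k), (‖g x‖₊ : ℝ≥0∞) ≤ HLMax g s := by
      rw [HLMax]
      refine le_trans ?_ (le_iSup (fun r => ⨆ (_ : 0 < r), (ENNReal.ofReal (2*r))⁻¹ *
        ∫⁻ x in Set.Ioo (s-r) (s+r), (‖g x‖₊:ℝ≥0∞)) (R k))
      rw [iSup_pos hr]
    have hne : ENNReal.ofReal (2 * R k) ≠ 0 := (ENNReal.ofReal_pos.mpr (by linarith)).ne'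
    have hnetop : ENNReal.ofReal (2 * R k) ≠ ⊤ := ENNReal.ofReal_ne_top
    calc (∫⁻ x in B k, (‖g x‖₊ : ℝ≥0∞))
        = ENNReal.ofReal (2 * R k) * ((ENNReal.ofReal (2 * R k))⁻¹ *
          ∫⁻ x in B k, (‖g x‖₊ : ℝ≥0∞)) := by
          rw [← mul_assoc, ENNReal.mul_inv_cancel hne hnetop, one_mul]
      _ ≤ ENNReal.ofReal (2 * R k) * HLMax g s := mul_le_mul_right hle _
  -- weight bound on each annulus
  have hc : ∀ k : ℕ, ∀ x ∈ A k, W x ≤ (if k = 0 then 4 * m ^ 2 else 4 / (R k) ^ 2) := by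
    intro k x hx
    rcases Nat.eq_zero_or_pos k with h0 | hp
    · rw [if_pos h0]; exact hW1 x
    · rw [if_neg hp.ne']
      simp only [hAdef, if_neg hp.ne'] at hx
      have hxB : x ∉ B k := hx.2
      have hxs : R k ≤ |x - s| := by
        simp only [hBdef, Set.mem_Ioo, not_and_or, not_lt] at hxB
        rcases hxB with h | h
        · rw [abs_sub_comm, _root_.abs_of_nonneg (by linarith [hRpos k])]
          linarith
        · rw [_root_.abs_of_nonneg (by linarith [hRpos k])]
          linarith
      have hdR : d ≤ R k / 2 := by
        have h1 : (1:ℝ) ≤ 2 ^ k / 2 := by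
          have : (2:ℝ)^1 ≤ 2^k := by
            apply pow_le_pow_right₀ (by norm_num) hp
          simp at this ⊢
          linarith
        have : R k / 2 = (2^k / 2) * R₀ := by rw [hRdef]; ring
        rw [this]
        have h2 := mul_le_mul_of_nonneg_right h1 hR₀.le
        have h3 : 0 < 1/m := by positivity
        rw [one_mul] at h2
        have : d ≤ R₀ := by rw [hR₀def]; linarith
        linarith
      have hxa : R k / 2 ≤ |x - a| := by
        have htri : |x - s| ≤ |x - a| + d := by
          have := abs_sub_le x a s
          rw [← hd] at this
          exact this
        linarith
      have hxa0 : x ≠ a := by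
        intro h; rw [h, sub_self, abs_zero] at hxa; nlinarith [hRpos k]
      refine (hW2 x hxa0).trans ?_
      have h1 : (R k / 2) ^ 2 ≤ (x - a) ^ 2 := by
        rw [← _root_.sq_abs (x - a)]
        apply pow_le_pow_left₀ (by positivity) hxa
      have h2 : ((x - a) ^ 2)⁻¹ ≤ ((R k / 2) ^ 2)⁻¹ := by
        apply inv_anti₀ (by positivity) h1
      refine h2.trans (le_of_eq ?_)
      have hk0 : R k ≠ 0 := (hRpos k).ne'
      field_simp
      ring
  -- key real inequality per annulus
  have hkeyreal : ∀ k : ℕ, (if k = 0 then 4 * m ^ 2 else 4 / (R k) ^ 2) * (2 * R (k+1)) ≤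
      (2⁻¹:ℝ) ^ k * T := by
    intro k
    rcases Nat.eq_zero_or_pos k with h0 | hp
    · subst h0
      rw [if_pos rfl]
      simp only [hRdef, pow_zero, pow_one, one_mul]
      rw [hTdef]
      nlinarith [hR₀, hm, div_pos (by norm_num : (0:ℝ) < 64) hR₀]
    · rw [if_neg hp.ne']
      have hPk : (0:ℝ) < 2 ^ k := by positivity
      have e1 : 4 / (R k) ^ 2 * (2 * R (k+1)) = (2⁻¹:ℝ)^k * (16 / R₀) := by
        simp only [hRdef]
        rw [inv_pow]
        field_simp
        ring
      rw [e1]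
      apply mul_le_mul_of_nonneg_left _ (by positivity)
      rw [hTdef]
      have e : (64:ℝ)/R₀ = 16/R₀ + 48/R₀ := by ring
      have h48 : (0:ℝ) ≤ 48/R₀ := by positivity
      have h16 : (0:ℝ) ≤ 16 * m ^ 2 * R₀ := by positivity
      linarith
  -- per-annulus integral bound
  have hterm : ∀ k : ℕ, (∫⁻ x in A k, ENNReal.ofReal (W x) * ‖g x‖₊) ≤
      ENNReal.ofReal ((2⁻¹:ℝ) ^ k * T) * HLMax g s := by
    intro k
    set c := (if k = 0 then 4 * m ^ 2 else 4 / (R k) ^ 2) with hcdef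
    have hc0 : 0 ≤ c := by
      rw [hcdef]; split
      · positivity
      · positivity
    calc (∫⁻ x in A k, ENNReal.ofReal (W x) * ‖g x‖₊)
        ≤ ∫⁻ x in A k, ENNReal.ofReal c * ‖g x‖₊ := by
          apply setLIntegral_mono' (hAmeas k)
          intro x hx
          exact mul_le_mul_left (ENNReal.ofReal_le_ofReal (hc k x hx)) _
      _ = ENNReal.ofReal c * ∫⁻ x in A k, (‖g x‖₊ : ℝ≥0∞) :=
          lintegral_const_mul' _ _ ENNReal.ofReal_ne_top
      _ ≤ ENNReal.ofReal c * (ENNReal.ofReal (2 * R (k+1)) * HLMax g s) :=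
          mul_le_mul_right ((lintegral_mono_set (hAsub k)).trans (hHL (k+1))) _
      _ = ENNReal.ofReal (c * (2 * R (k+1))) * HLMax g s := by
          rw [← mul_assoc, ← ENNReal.ofReal_mul hc0]
      _ ≤ ENNReal.ofReal ((2⁻¹:ℝ) ^ k * T) * HLMax g s :=
          mul_le_mul_left (ENNReal.ofReal_le_ofReal (hkeyreal k)) _
  -- sum up
  have hsum : (∑' k : ℕ, ENNReal.ofReal ((2⁻¹:ℝ) ^ k * T)) = ENNReal.ofReal (2 * T) := by
    have e1 : ∀ k : ℕ, ENNReal.ofReal ((2⁻¹:ℝ) ^ k * T) =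
        (2⁻¹ : ℝ≥0∞) ^ k * ENNReal.ofReal T := by
      intro k
      rw [ENNReal.ofReal_mul (by positivity), ENNReal.ofReal_pow (by norm_num)]
      congr 1
      rw [ENNReal.ofReal_inv_of_pos (by norm_num)]
      norm_num
    simp_rw [e1]
    rw [ENNReal.tsum_mul_right, ENNReal.tsum_geometric, ENNReal.one_sub_inv_two, inv_inv]
    rw [show ((2:ℝ≥0∞) = ENNReal.ofReal (2:ℝ)) by norm_num, ← ENNReal.ofReal_mul (by norm_num)]
  calc (∫⁻ x : ℝ, ENNReal.ofReal (W x) * ‖g x‖₊)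
      = ∫⁻ x in Set.univ, ENNReal.ofReal (W x) * ‖g x‖₊ := by
        rw [Measure.restrict_univ]
    _ = ∫⁻ x in ⋃ k, A k, ENNReal.ofReal (W x) * ‖g x‖₊ := by rw [← hcover]
    _ ≤ ∑' k, ∫⁻ x in A k, ENNReal.ofReal (W x) * ‖g x‖₊ := lintegral_iUnion_le A _
    _ ≤ ∑' k, ENNReal.ofReal ((2⁻¹:ℝ) ^ k * T) * HLMax g s := ENNReal.tsum_le_tsum hterm
    _ = (∑' k, ENNReal.ofReal ((2⁻¹:ℝ) ^ k * T)) * HLMax g s := ENNReal.tsum_mul_right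
    _ = ENNReal.ofReal (2 * T) * HLMax g s := by rw [hsum]
    _ ≤ ENNReal.ofReal (32 * m ^ 2 * d + 160 * m) * HLMax g s := by
        apply mul_le_mul_left
        apply ENNReal.ofReal_le_ofReal
        rw [hTdef, hR₀def]
        have hinv : 1 / (d + 1/m) ≤ m := by
          rw [div_le_iff₀ (by positivity)]
          have : m * (1/m) = 1 := mul_one_div_cancel hm.ne'
          nlinarith
        have hmm : m ^ 2 * (1/m) = m := by field_simp
        have h64 : 64 / (d + 1/m) ≤ 64 * m := by
          rw [div_eq_mul_inv, ← one_div]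
          have := hinv
          rw [show (1:ℝ) / (d + 1/m) = (d + 1/m)⁻¹ by rw [one_div]] at this
          nlinarith
        nlinarith


/-- Single-kernel square bound. -/
lemma single_bound (t s : ℝ) (ht : 0 < t) (l : ℂ) (g : ℝ → ℂ) :
    ∫⁻ x : ℝ, ENNReal.ofReal (‖pwSinc t l ↑x‖ ^ 2) * ‖g x‖₊ ≤
      ENNReal.ofReal (512 * VV s t l) * HLMax g s := by
  set m := t / (t * |l.im| + 1) with hmdef
  have hden : (0:ℝ) < t * |l.im| + 1 := by positivity
  have hm : 0 < m := by rw [hmdef]; positivity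
  set ch := Real.cosh (t * l.im) with hchdef
  have hch0 : (0:ℝ) < ch := Real.cosh_pos _
  have hπ := Real.pi_pos
  set c := (2 * ch / Real.pi) ^ 2 with hcdef
  have hc0 : (0:ℝ) < c := by positivity
  set W : ℝ → ℝ := fun x => min (4 * m ^ 2) (((x - l.re) ^ 2 + l.im ^ 2)⁻¹) with hWdef
  have hae : ∀ᵐ x : ℝ, ENNReal.ofReal (‖pwSinc t l ↑x‖ ^ 2) * ‖g x‖₊ ≤
      ENNReal.ofReal (c * W x) * ‖g x‖₊ := by
    have hsub : {x : ℝ | ¬ (ENNReal.ofReal (‖pwSinc t l ↑x‖ ^ 2) * ‖g x‖₊ ≤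
        ENNReal.ofReal (c * W x) * ‖g x‖₊)} ⊆ {l.re} := by
      intro x hx
      simp only [Set.mem_setOf_eq] at hx
      by_contra hxa
      apply hx
      have hxa' : x ≠ l.re := by simpa [Set.mem_singleton_iff] using hxa
      -- pointwise bound for x ≠ l.re
      have hne : (↑x : ℂ) ≠ (starRingEnd ℂ) l := by
        intro hc'
        apply hxa'
        have := congrArg Complex.re hc'
        simpa using this
      set w : ℂ := ↑x - (starRingEnd ℂ) l with hwdef
      have hw0 : w ≠ 0 := sub_ne_zero.mpr hne
      have habsw : 0 < ‖w‖ := norm_pos_iff.mpr hw0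
      have hb1 : ‖pwSinc t l ↑x‖ ^ 2 ≤ c * (4 * m ^ 2) := by
        have h := pwSinc_abs_le t ht l x
        have h2 : ‖pwSinc t l ↑x‖ ^ 2 ≤
            ((2 * ch / Real.pi) * (2 * m)) ^ 2 := by
          apply pow_le_pow_left₀ (norm_nonneg _) h
        refine h2.trans (le_of_eq ?_)
        rw [hcdef]; ring
      have hb2 : ‖pwSinc t l ↑x‖ ^ 2 ≤
          c * (((x - l.re) ^ 2 + l.im ^ 2)⁻¹) := by
        have h := pwSinc_abs_mul t ht l x
        have h2 : ‖pwSinc t l ↑x‖ ≤ (2 * ch / Real.pi) / ‖w‖ :=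
          (le_div_iff₀ habsw).mpr h
        have h3 : ‖pwSinc t l ↑x‖ ^ 2 ≤
            ((2 * ch / Real.pi) / ‖w‖) ^ 2 :=
          pow_le_pow_left₀ (norm_nonneg _) h2 2
        refine h3.trans (le_of_eq ?_)
        rw [div_pow, ← aux_abs_arg l x, hcdef]
        rw [div_eq_mul_inv]
      have hmin : ‖pwSinc t l ↑x‖ ^ 2 ≤ c * W x := by
        rw [hWdef]
        rcases min_cases (4 * m ^ 2) (((x - l.re) ^ 2 + l.im ^ 2)⁻¹) with ⟨he, _⟩ | ⟨he, _⟩ <;>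
          simp only [he] <;> [exact hb1; exact hb2]
      exact mul_le_mul_left (ENNReal.ofReal_le_ofReal hmin) _
    have hnull : MeasureTheory.volume ({l.re} : Set ℝ) = 0 := Real.volume_singleton
    exact measure_mono_null hsub hnull
  have hW1 : ∀ x, W x ≤ 4 * m ^ 2 := fun x => min_le_left _ _
  have hW2 : ∀ x, x ≠ l.re → W x ≤ ((x - l.re) ^ 2)⁻¹ := by
    intro x hx
    refine (min_le_right _ _).trans ?_
    apply inv_anti₀
    · have : (x - l.re) ≠ 0 := sub_ne_zero.mpr hx
      positivity
    · nlinarith [sq_nonneg l.im]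
  have hmb := maximal_bound s l.re m hm g W hW1 hW2
  calc ∫⁻ x : ℝ, ENNReal.ofReal (‖pwSinc t l ↑x‖ ^ 2) * ‖g x‖₊
      ≤ ∫⁻ x : ℝ, ENNReal.ofReal (c * W x) * ‖g x‖₊ := lintegral_mono_ae hae
    _ = ∫⁻ x : ℝ, ENNReal.ofReal c * (ENNReal.ofReal (W x) * ‖g x‖₊) := by
        congr 1
        funext x
        rw [ENNReal.ofReal_mul hc0.le, mul_assoc]
    _ = ENNReal.ofReal c * ∫⁻ x : ℝ, ENNReal.ofReal (W x) * ‖g x‖₊ :=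
        lintegral_const_mul' _ _ ENNReal.ofReal_ne_top
    _ ≤ ENNReal.ofReal c * (ENNReal.ofReal (32 * m ^ 2 * |l.re - s| + 160 * m) *
        HLMax g s) := mul_le_mul_right hmb _
    _ = ENNReal.ofReal (c * (32 * m ^ 2 * |l.re - s| + 160 * m)) * HLMax g s := by
        rw [← mul_assoc, ← ENNReal.ofReal_mul hc0.le]
    _ ≤ ENNReal.ofReal (512 * VV s t l) * HLMax g s := by
        apply mul_le_mul_left
        apply ENNReal.ofReal_le_ofReal
        -- the real inequality
        set d := |l.re - s| with hddef
        have hd0 : (0:ℝ) ≤ d := abs_nonneg _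
        set X := XX s t l with hXdef
        have hX1 : (1:ℝ) ≤ X := le_max_left _ _
        have hXmd : m * d ≤ X := by
          have e : m * d = t * |l.re - s| / (t * |l.im| + 1) := by
            rw [hmdef, hddef]; ring
          rw [hXdef, XX, e]
          exact le_max_right _ _
        have hre := pwSinc_self_re_ge t ht l
        have hVV : X * (ch ^ 2 * m / (2 * Real.pi)) ≤ VV s t l := by
          rw [VV, ← hXdef]
          apply mul_le_mul_of_nonneg_left _ (by linarith)
          rw [hchdef, hmdef]
          exact hre
        have step1 : c * (32 * m ^ 2 * d + 160 * m) ≤ c * (192 * X * m) := by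
          apply mul_le_mul_of_nonneg_left _ hc0.le
          have h1 : 32 * m * (m * d) ≤ 32 * m * X :=
            mul_le_mul_of_nonneg_left hXmd (by positivity)
          nlinarith
        have step2 : c * (192 * X * m) ≤ 512 * (X * (ch ^ 2 * m / (2 * Real.pi))) := by
          have e1 : c * (192 * X * m) = 768 * X * ch ^ 2 * m / Real.pi ^ 2 := by
            rw [hcdef]; field_simp; ring
          have e2 : 512 * (X * (ch ^ 2 * m / (2 * Real.pi))) =
              256 * X * ch ^ 2 * m / Real.pi := by
            field_simp; ring
          rw [e1, e2, div_le_div_iff₀ (by positivity) hπ]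
          have h3 : (0:ℝ) ≤ X * ch ^ 2 * m := by positivity
          nlinarith [Real.pi_gt_three, mul_nonneg h3
            (by nlinarith [Real.pi_gt_three] : (0:ℝ) ≤ Real.pi - 3)]
        have step3 : 512 * (X * (ch ^ 2 * m / (2 * Real.pi))) ≤ 512 * VV s t l := by
          linarith
        linarith


lemma hKmeas' (t : ℝ) (l : ℂ) : Measurable (fun x : ℝ => pwSinc t l ↑x) := by
  unfold pwSinc
  refine Measurable.ite ?_ measurable_const ?_
  · exact Complex.measurable_ofReal (measurableSet_singleton ((starRingEnd ℂ) l))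
  · apply Measurable.div
    · exact Complex.continuous_sin.measurable.comp
        ((measurable_const.mul (Complex.measurable_ofReal.sub measurable_const)))
    · exact measurable_const.mul (Complex.measurable_ofReal.sub measurable_const)

/-- bilinear sinc kernel bound by the Hardy–Littlewood maximal
function. -/
theorem bilinear_sinc_kernel_bound_by_maximal :
    ∃ C : ℝ, 0 < C ∧
      ∀ (t : ℝ), 0 < t → ∀ (s : ℝ) (l z : ℂ) (g : ℝ → ℂ),
      LocallyIntegrable g →
      ENNReal.ofReal (‖∫ x : ℝ,
          pwSinc t l (x : ℂ) * (starRingEnd ℂ) (pwSinc t z (x : ℂ)) * g x‖) ≤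
        ENNReal.ofReal (C * Real.sqrt (VV s t l * VV s t z)) * HLMax g s := by
  refine ⟨512, by norm_num, ?_⟩
  intro t ht s l z g hg
  have hVl := VV_pos s t ht l
  have hVz := VV_pos s t ht z
  set α := Real.sqrt (VV s t z / VV s t l) with hαdef
  have hα0 : 0 < α := Real.sqrt_pos.mpr (by positivity)
  have hαinv : α * α⁻¹ = 1 := mul_inv_cancel₀ hα0.ne'
  -- Step 1: bound by the lintegral of the norm
  have h1 : ENNReal.ofReal (‖∫ x : ℝ,
      pwSinc t l (x : ℂ) * (starRingEnd ℂ) (pwSinc t z (x : ℂ)) * g x‖) ≤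
      ∫⁻ x : ℝ, ‖pwSinc t l (x : ℂ) * (starRingEnd ℂ) (pwSinc t z (x : ℂ)) * g x‖₊ := by
    rw [ofReal_norm]
    exact enorm_integral_le_lintegral_enorm _
  -- Step 2: pointwise AM-GM
  have h2 : ∀ x : ℝ, (‖pwSinc t l (x : ℂ) * (starRingEnd ℂ) (pwSinc t z (x : ℂ)) * g x‖₊ :
      ℝ≥0∞) ≤
      (ENNReal.ofReal (α / 2 * ‖pwSinc t l ↑x‖ ^ 2) +
        ENNReal.ofReal (α⁻¹ / 2 * ‖pwSinc t z ↑x‖ ^ 2)) * ‖g x‖₊ := by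
    intro x
    rw [nnnorm_mul, nnnorm_mul, RCLike.nnnorm_conj]
    push_cast

    apply mul_le_mul_left
    have e1 : ((‖pwSinc t l ↑x‖₊ : ℝ≥0∞)) * ‖pwSinc t z ↑x‖₊ =
        ENNReal.ofReal (‖pwSinc t l ↑x‖ * ‖pwSinc t z ↑x‖) := by
      rw [ENNReal.ofReal_mul (norm_nonneg _)]
      rw [ofReal_norm, ofReal_norm]
      rfl
    rw [e1]
    refine le_trans (ENNReal.ofReal_le_ofReal ?_) (ENNReal.ofReal_add_le)
    set p := ‖pwSinc t l ↑x‖ with hp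
    set q := ‖pwSinc t z ↑x‖ with hq
    have hp0 : 0 ≤ p := norm_nonneg _
    have hq0 : 0 ≤ q := norm_nonneg _
    nlinarith [sq_nonneg (α * p - q), mul_pos hα0 hα0, sq_nonneg p, sq_nonneg q,
      mul_nonneg (mul_nonneg hα0.le hp0) hp0]
  -- measurable halves
  have hmeasl : Measurable (fun x : ℝ =>
      ENNReal.ofReal (α / 2 * ‖pwSinc t l ↑x‖ ^ 2)) := by
    apply ENNReal.measurable_ofReal.comp
    apply Measurable.const_mul
    exact (continuous_norm.measurable.comp (hKmeas' t l)).pow_const 2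
  have hG : AEMeasurable (fun x : ℝ => (‖g x‖₊ : ℝ≥0∞)) :=
    hg.aestronglyMeasurable.enorm
  have h3 : (∫⁻ x : ℝ,
      (ENNReal.ofReal (α / 2 * ‖pwSinc t l ↑x‖ ^ 2) +
        ENNReal.ofReal (α⁻¹ / 2 * ‖pwSinc t z ↑x‖ ^ 2)) * ‖g x‖₊) =
      (∫⁻ x : ℝ, ENNReal.ofReal (α / 2 * ‖pwSinc t l ↑x‖ ^ 2) * ‖g x‖₊) +
      (∫⁻ x : ℝ, ENNReal.ofReal (α⁻¹ / 2 * ‖pwSinc t z ↑x‖ ^ 2) * ‖g x‖₊) := by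
    have e : ∀ x : ℝ, (ENNReal.ofReal (α / 2 * ‖pwSinc t l ↑x‖ ^ 2) +
        ENNReal.ofReal (α⁻¹ / 2 * ‖pwSinc t z ↑x‖ ^ 2)) * ‖g x‖₊ =
        ENNReal.ofReal (α / 2 * ‖pwSinc t l ↑x‖ ^ 2) * ‖g x‖₊ +
        ENNReal.ofReal (α⁻¹ / 2 * ‖pwSinc t z ↑x‖ ^ 2) * ‖g x‖₊ := by
      intro x; rw [add_mul]
    simp_rw [e]
    exact lintegral_add_left' (hmeasl.aemeasurable.mul hG) _
  -- bound each half via single_bound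
  have h4 : (∫⁻ x : ℝ, ENNReal.ofReal (α / 2 * ‖pwSinc t l ↑x‖ ^ 2) * ‖g x‖₊) ≤
      ENNReal.ofReal (α / 2 * (512 * VV s t l)) * HLMax g s := by
    have e : ∀ x : ℝ, ENNReal.ofReal (α / 2 * ‖pwSinc t l ↑x‖ ^ 2) * ‖g x‖₊ =
        ENNReal.ofReal (α / 2) * (ENNReal.ofReal (‖pwSinc t l ↑x‖ ^ 2) * ‖g x‖₊) := by
      intro x
      rw [ENNReal.ofReal_mul (by positivity), mul_assoc]
    simp_rw [e]
    rw [lintegral_const_mul' _ _ ENNReal.ofReal_ne_top]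
    calc ENNReal.ofReal (α / 2) * ∫⁻ x : ℝ, ENNReal.ofReal (‖pwSinc t l ↑x‖ ^ 2) * ‖g x‖₊
        ≤ ENNReal.ofReal (α / 2) * (ENNReal.ofReal (512 * VV s t l) * HLMax g s) :=
          mul_le_mul_right (single_bound t s ht l g) _
      _ = ENNReal.ofReal (α / 2 * (512 * VV s t l)) * HLMax g s := by
          rw [← mul_assoc, ← ENNReal.ofReal_mul (by positivity)]
  have h5 : (∫⁻ x : ℝ, ENNReal.ofReal (α⁻¹ / 2 * ‖pwSinc t z ↑x‖ ^ 2) * ‖g x‖₊) ≤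
      ENNReal.ofReal (α⁻¹ / 2 * (512 * VV s t z)) * HLMax g s := by
    have e : ∀ x : ℝ, ENNReal.ofReal (α⁻¹ / 2 * ‖pwSinc t z ↑x‖ ^ 2) * ‖g x‖₊ =
        ENNReal.ofReal (α⁻¹ / 2) * (ENNReal.ofReal (‖pwSinc t z ↑x‖ ^ 2) * ‖g x‖₊) := by
      intro x
      rw [ENNReal.ofReal_mul (by positivity), mul_assoc]
    simp_rw [e]
    rw [lintegral_const_mul' _ _ ENNReal.ofReal_ne_top]
    calc ENNReal.ofReal (α⁻¹ / 2) * ∫⁻ x : ℝ, ENNReal.ofReal (‖pwSinc t z ↑x‖ ^ 2) * ‖g x‖₊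
        ≤ ENNReal.ofReal (α⁻¹ / 2) * (ENNReal.ofReal (512 * VV s t z) * HLMax g s) :=
          mul_le_mul_right (single_bound t s ht z g) _
      _ = ENNReal.ofReal (α⁻¹ / 2 * (512 * VV s t z)) * HLMax g s := by
          rw [← mul_assoc, ← ENNReal.ofReal_mul (by positivity)]
  -- the sqrt identity
  have hid : α / 2 * (512 * VV s t l) + α⁻¹ / 2 * (512 * VV s t z) =
      512 * Real.sqrt (VV s t l * VV s t z) := by
    have e1 : α * VV s t l = Real.sqrt (VV s t l * VV s t z) := by
      rw [hαdef, ← Real.sqrt_sq hVl.le]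
      rw [← Real.sqrt_mul (by positivity)]
      congr 1
      field_simp
      rw [Real.sq_sqrt (by positivity)]
    have e2 : α⁻¹ * VV s t z = Real.sqrt (VV s t l * VV s t z) := by
      rw [hαdef, ← Real.sqrt_inv, inv_div, ← Real.sqrt_sq hVz.le,
        ← Real.sqrt_mul (by positivity)]
      congr 1
      field_simp
      rw [Real.sq_sqrt (by positivity)]
    nlinarith [e1, e2]
  calc ENNReal.ofReal (‖∫ x : ℝ,
      pwSinc t l (x : ℂ) * (starRingEnd ℂ) (pwSinc t z (x : ℂ)) * g x‖)
      ≤ ∫⁻ x : ℝ, ‖pwSinc t l (x : ℂ) * (starRingEnd ℂ) (pwSinc t z (x : ℂ)) * g x‖₊ := h1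
    _ ≤ ∫⁻ x : ℝ, (ENNReal.ofReal (α / 2 * ‖pwSinc t l ↑x‖ ^ 2) +
        ENNReal.ofReal (α⁻¹ / 2 * ‖pwSinc t z ↑x‖ ^ 2)) * ‖g x‖₊ :=
        lintegral_mono h2
    _ = _ + _ := h3
    _ ≤ ENNReal.ofReal (α / 2 * (512 * VV s t l)) * HLMax g s +
        ENNReal.ofReal (α⁻¹ / 2 * (512 * VV s t z)) * HLMax g s := add_le_add h4 h5
    _ = (ENNReal.ofReal (α / 2 * (512 * VV s t l)) +
        ENNReal.ofReal (α⁻¹ / 2 * (512 * VV s t z))) * HLMax g s := (add_mul _ _ _).symm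
    _ = ENNReal.ofReal (α / 2 * (512 * VV s t l) + α⁻¹ / 2 * (512 * VV s t z)) *
        HLMax g s := by
        rw [ENNReal.ofReal_add (by positivity) (by positivity)]
    _ = ENNReal.ofReal (512 * Real.sqrt (VV s t l * VV s t z)) * HLMax g s := by rw [hid]
end

section
/- (Evolution of the derivative of the inner function along a zero curve.) Let I ⊆ ℝ be an open interval, U ⊆ ℂ open, f : I → ℂ, and let θ : I × U → ℂ be twice continuously differentiable, with θ(t,·) holomorphic on U for each t, satisfying the Riccati equation ∂_t θ(t,ζ) = 2 i ζ θ(t,ζ) + f(t) − conj(f(t)) θ(t,ζ)² on I × U. Let ζ : I → U be differentiable with θ(t, ζ(t)) = 0 and ∂_ζ θ(t, ζ(t)) ≠ 0 for all t ∈ I. Then t ↦ ∂_ζ θ(t, ζ(t)) is differentiable and (d/dt) [ ∂_ζ θ(t, ζ(t)) ] = 2 i ζ(t) · ∂_ζ θ(t, ζ(t)) − f(t) · ∂²_ζ θ(t, ζ(t)) / ∂_ζ θ(t, ζ(t)). -/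
open Complex

/-- evolution of the derivative of the inner function along a zero curve:
`(d/dt) ∂_ζθ(t, ζ(t)) = 2 i ζ(t) ∂_ζθ(t, ζ(t)) − f(t) ∂²_ζθ(t, ζ(t)) / ∂_ζθ(t, ζ(t))`. -/
theorem evolution_of_derivative_along_zero_curve
    (I : Set ℝ) (hIopen : IsOpen I) (hIconn : I.OrdConnected)
    (U : Set ℂ) (hUopen : IsOpen U)
    (f : ℝ → ℂ) (θ : ℝ → ℂ → ℂ)
    (hC2 : ContDiffOn ℝ 2 (fun p : ℝ × ℂ => θ p.1 p.2) (I ×ˢ U))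
    (hhol : ∀ t ∈ I, DifferentiableOn ℂ (θ t) U)
    (hric : ∀ t ∈ I, ∀ w ∈ U,
      HasDerivAt (fun τ => θ τ w)
        (2 * Complex.I * w * θ t w + f t - (starRingEnd ℂ) (f t) * (θ t w) ^ 2) t)
    (ζ : ℝ → ℂ) (hζU : ∀ t ∈ I, ζ t ∈ U)
    (hζdiff : ∀ t ∈ I, DifferentiableAt ℝ ζ t)
    (hzero : ∀ t ∈ I, θ t (ζ t) = 0)
    (hne : ∀ t ∈ I, deriv (θ t) (ζ t) ≠ 0) :
    ∀ t ∈ I, HasDerivAt (fun τ => deriv (θ τ) (ζ τ))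
      (2 * Complex.I * ζ t * deriv (θ t) (ζ t) -
        f t * deriv (deriv (θ t)) (ζ t) / deriv (θ t) (ζ t)) t := by
  set G : ℝ × ℂ → ℂ := fun p : ℝ × ℂ => θ p.1 p.2 with hGdef
  have hSopen : IsOpen (I ×ˢ U) := hIopen.prod hUopen
  -- differentiability of G at points of I ×ˢ U
  have hGdiff : ∀ q ∈ I ×ˢ U, DifferentiableAt ℝ G q := fun q hq =>
    (hC2.differentiableOn two_ne_zero).differentiableAt (hSopen.mem_nhds hq)
  -- partial derivative of G in the z-direction
  have hpart2 : ∀ τ ∈ I, ∀ w ∈ U, ∀ v : ℂ,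
      fderiv ℝ G (τ, w) (0, v) = deriv (θ τ) w * v := by
    intro τ hτ w hw v
    have hd : HasDerivAt (θ τ) (deriv (θ τ) w) w :=
      ((hhol τ hτ).differentiableAt (hUopen.mem_nhds hw)).hasDerivAt
    have hfd : HasFDerivAt (θ τ)
        ((ContinuousLinearMap.smulRight (1 : ℂ →L[ℂ] ℂ) (deriv (θ τ) w)).restrictScalars ℝ) w :=
      hd.hasFDerivAt.restrictScalars ℝ
    have hinc : HasFDerivAt (fun w' : ℂ => (τ, w'))
        (((0 : ℂ →L[ℝ] ℝ)).prod (ContinuousLinearMap.id ℝ ℂ)) w :=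
      HasFDerivAt.prodMk (hasFDerivAt_const τ w) (hasFDerivAt_id w)
    have hcomp : HasFDerivAt (fun w' : ℂ => G (τ, w'))
        ((fderiv ℝ G (τ, w)).comp (((0 : ℂ →L[ℝ] ℝ)).prod (ContinuousLinearMap.id ℝ ℂ))) w :=
      ((hGdiff (τ, w) ⟨hτ, hw⟩).hasFDerivAt).comp w hinc
    have hcomp' : HasFDerivAt (θ τ)
        ((fderiv ℝ G (τ, w)).comp (((0 : ℂ →L[ℝ] ℝ)).prod (ContinuousLinearMap.id ℝ ℂ))) w :=
      hcomp
    have := hcomp'.unique hfd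
    have hv := DFunLike.congr_fun this v
    simpa [smul_eq_mul, mul_comm] using hv
  -- partial derivative of G in the t-direction (the Riccati equation)
  have hpart1 : ∀ τ ∈ I, ∀ w ∈ U,
      fderiv ℝ G (τ, w) (1, 0) =
        2 * Complex.I * w * θ τ w + f τ - (starRingEnd ℂ) (f τ) * (θ τ w) ^ 2 := by
    intro τ hτ w hw
    have hγ : HasDerivAt (fun τ' : ℝ => (τ', w)) ((1 : ℝ), (0 : ℂ)) τ :=
      HasDerivAt.prodMk (hasDerivAt_id τ) (hasDerivAt_const τ w)
    have hcomp : HasDerivAt (fun τ' : ℝ => G (τ', w)) (fderiv ℝ G (τ, w) (1, 0)) τ :=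
      by have := HasFDerivAt.comp_hasDerivAt (x := τ) ((hGdiff (τ, w) ⟨hτ, hw⟩).hasFDerivAt) hγ; exact this
    exact hcomp.unique (hric τ hτ w hw)
  intro t ht
  have hζt : ζ t ∈ U := hζU t ht
  have hp : (t, ζ t) ∈ I ×ˢ U := ⟨ht, hζt⟩
  set g : ℂ := deriv (θ t) (ζ t) with hgdef
  set g2 : ℂ := deriv (deriv (θ t)) (ζ t) with hg2def
  -- the field of z-derivatives
  set F : ℝ × ℂ → ℂ := fun q => fderiv ℝ G q ((0 : ℝ), (1 : ℂ)) with hFdef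
  have hFeq : ∀ τ ∈ I, ∀ w ∈ U, F (τ, w) = deriv (θ τ) w := by
    intro τ hτ w hw
    simpa using hpart2 τ hτ w hw 1
  -- H := fderiv G is C¹ on I ×ˢ U
  set H : ℝ × ℂ → (ℝ × ℂ) →L[ℝ] ℂ := fun q => fderiv ℝ G q with hHdef
  have hH : ContDiffOn ℝ 1 H (I ×ˢ U) := hC2.fderiv_of_isOpen hSopen (by norm_num)
  have hHdiff : DifferentiableAt ℝ H (t, ζ t) :=
    (hH.differentiableOn one_ne_zero).differentiableAt (hSopen.mem_nhds hp)
  set L : (ℝ × ℂ) →L[ℝ] (ℝ × ℂ) →L[ℝ] ℂ := fderiv ℝ H (t, ζ t) with hLdef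
  have hsymm : IsSymmSndFDerivAt ℝ G (t, ζ t) :=
    (hC2.contDiffAt (hSopen.mem_nhds hp)).isSymmSndFDerivAt (by norm_num)
  -- derivative of F at (t, ζ t)
  have hFder : HasFDerivAt F
      ((ContinuousLinearMap.apply ℝ ℂ ((0 : ℝ), (1 : ℂ))).comp L) (t, ζ t) :=
    ((ContinuousLinearMap.apply ℝ ℂ ((0 : ℝ), (1 : ℂ))).hasFDerivAt).comp (t, ζ t)
      hHdiff.hasFDerivAt
  -- derivative of K := t-partial of G, at (t, ζ t)
  set K : ℝ × ℂ → ℂ := fun q => fderiv ℝ G q ((1 : ℝ), (0 : ℂ)) with hKdef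
  have hKder : HasFDerivAt K
      ((ContinuousLinearMap.apply ℝ ℂ ((1 : ℝ), (0 : ℂ))).comp L) (t, ζ t) :=
    ((ContinuousLinearMap.apply ℝ ℂ ((1 : ℝ), (0 : ℂ))).hasFDerivAt).comp (t, ζ t)
      hHdiff.hasFDerivAt
  -- the inclusion w ↦ (t, w)
  have hinc : HasFDerivAt (fun w' : ℂ => ((t : ℝ), w'))
      (((0 : ℂ →L[ℝ] ℝ)).prod (ContinuousLinearMap.id ℝ ℂ)) (ζ t) :=
    HasFDerivAt.prodMk (hasFDerivAt_const t (ζ t)) (hasFDerivAt_id (ζ t))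
  have hUev : ∀ᶠ w in nhds (ζ t), w ∈ U := hUopen.eventually_mem hζt
  -- evaluate L (0,1) (1,0) : the z-derivative of the Riccati right-hand side
  have hA : L ((0 : ℝ), (1 : ℂ)) ((1 : ℝ), (0 : ℂ)) = 2 * Complex.I * ζ t * g := by
    have hKslice : HasFDerivAt (fun w : ℂ => K (t, w))
        (((ContinuousLinearMap.apply ℝ ℂ ((1 : ℝ), (0 : ℂ))).comp L).comp
          (((0 : ℂ →L[ℝ] ℝ)).prod (ContinuousLinearMap.id ℝ ℂ))) (ζ t) :=
      hKder.comp (ζ t) hinc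
    -- the Riccati right-hand side as a function of w
    have hθd : HasDerivAt (θ t) g (ζ t) :=
      ((hhol t ht).differentiableAt (hUopen.mem_nhds hζt)).hasDerivAt
    have h1 : HasDerivAt (fun w : ℂ => 2 * Complex.I * w) (2 * Complex.I) (ζ t) := by
      simpa using (hasDerivAt_id (ζ t)).const_mul (2 * Complex.I)
    have h2 : HasDerivAt (fun w : ℂ => 2 * Complex.I * w * θ t w)
        (2 * Complex.I * θ t (ζ t) + 2 * Complex.I * ζ t * g) (ζ t) := h1.mul hθd
    have h3 : HasDerivAt (fun w : ℂ => (starRingEnd ℂ) (f t) * (θ t w) ^ 2)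
        ((starRingEnd ℂ) (f t) * (2 * θ t (ζ t) ^ 1 * g)) (ζ t) := (hθd.pow 2).const_mul _
    have hR : HasDerivAt
        (fun w : ℂ => 2 * Complex.I * w * θ t w + f t - (starRingEnd ℂ) (f t) * (θ t w) ^ 2)
        (2 * Complex.I * ζ t * g) (ζ t) := by
      have := (h2.add_const (f t)).sub h3
      refine HasDerivAt.congr_deriv this ?_
      rw [hzero t ht]; ring
    have hRf : HasFDerivAt
        (fun w : ℂ => 2 * Complex.I * w * θ t w + f t - (starRingEnd ℂ) (f t) * (θ t w) ^ 2)
        ((ContinuousLinearMap.smulRight (1 : ℂ →L[ℂ] ℂ) (2 * Complex.I * ζ t * g)).restrictScalars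
          ℝ) (ζ t) := hR.hasFDerivAt.restrictScalars ℝ
    have hev : (fun w : ℂ => K (t, w)) =ᶠ[nhds (ζ t)]
        (fun w : ℂ => 2 * Complex.I * w * θ t w + f t - (starRingEnd ℂ) (f t) * (θ t w) ^ 2) := by
      filter_upwards [hUev] with w hw
      exact hpart1 t ht w hw
    have hKslice' := hKslice.congr_of_eventuallyEq hev.symm
    have huniq := hKslice'.unique hRf
    have := DFunLike.congr_fun huniq (1 : ℂ)
    simpa using this
  -- evaluate L (0, v) (0, 1) : the second complex derivative
  have hB : ∀ v : ℂ, L ((0 : ℝ), v) ((0 : ℝ), (1 : ℂ)) = v * g2 := by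
    intro v
    have hFslice : HasFDerivAt (fun w : ℂ => F (t, w))
        (((ContinuousLinearMap.apply ℝ ℂ ((0 : ℝ), (1 : ℂ))).comp L).comp
          (((0 : ℂ →L[ℝ] ℝ)).prod (ContinuousLinearMap.id ℝ ℂ))) (ζ t) :=
      hFder.comp (ζ t) hinc
    have hana : AnalyticOnNhd ℂ (θ t) U := (hhol t ht).analyticOnNhd hUopen
    have hd2 : HasDerivAt (deriv (θ t)) g2 (ζ t) :=
      ((hana.deriv (ζ t) hζt).differentiableAt).hasDerivAt
    have hd2f : HasFDerivAt (deriv (θ t))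
        ((ContinuousLinearMap.smulRight (1 : ℂ →L[ℂ] ℂ) g2).restrictScalars ℝ) (ζ t) :=
      hd2.hasFDerivAt.restrictScalars ℝ
    have hev : (fun w : ℂ => F (t, w)) =ᶠ[nhds (ζ t)] deriv (θ t) := by
      filter_upwards [hUev] with w hw
      exact hFeq t ht w hw
    have hFslice' := hFslice.congr_of_eventuallyEq hev.symm
    have huniq := hFslice'.unique hd2f
    have := DFunLike.congr_fun huniq v
    simpa [smul_eq_mul] using this
  -- the curve τ ↦ (τ, ζ τ)
  set z' : ℂ := deriv ζ t with hz'def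
  have hγ : HasDerivAt (fun τ : ℝ => (τ, ζ τ)) ((1 : ℝ), z') t :=
    HasDerivAt.prodMk (hasDerivAt_id t) (hζdiff t ht).hasDerivAt
  -- implicit differentiation of θ τ (ζ τ) = 0
  have himp : f t + g * z' = 0 := by
    have hcomp : HasDerivAt (fun τ : ℝ => G (τ, ζ τ)) (fderiv ℝ G (t, ζ t) (1, z')) t :=
      by have := HasFDerivAt.comp_hasDerivAt (x := t) ((hGdiff (t, ζ t) hp).hasFDerivAt) hγ; exact this
    have hconst : HasDerivAt (fun τ : ℝ => G (τ, ζ τ)) 0 t := by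
      have hev : (fun τ : ℝ => G (τ, ζ τ)) =ᶠ[nhds t] (fun _ => (0 : ℂ)) := by
        filter_upwards [hIopen.eventually_mem ht] with τ hτ
        exact hzero τ hτ
      exact (hasDerivAt_const t (0 : ℂ)).congr_of_eventuallyEq hev
    have h0 : fderiv ℝ G (t, ζ t) (1, z') = 0 := hcomp.unique hconst
    have hsplit : ((1 : ℝ), z') = ((1 : ℝ), (0 : ℂ)) + ((0 : ℝ), z') := by simp
    rw [hsplit, map_add, hpart1 t ht (ζ t) hζt, hpart2 t ht (ζ t) hζt, hzero t ht] at h0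
    rw [← hgdef] at h0
    calc f t + g * z' = 2 * Complex.I * ζ t * 0 + f t - (starRingEnd ℂ) (f t) * 0 ^ 2 +
        g * z' := by ring
    _ = 0 := h0
  -- the main composition
  have hmain : HasDerivAt (fun τ : ℝ => F (τ, ζ τ))
      (((ContinuousLinearMap.apply ℝ ℂ ((0 : ℝ), (1 : ℂ))).comp L) (1, z')) t :=
    by have := HasFDerivAt.comp_hasDerivAt (x := t) hFder hγ; exact this
  have hval : ((ContinuousLinearMap.apply ℝ ℂ ((0 : ℝ), (1 : ℂ))).comp L) (1, z') =
      2 * Complex.I * ζ t * g - f t * g2 / g := by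
    have hsplit : ((1 : ℝ), z') = ((1 : ℝ), (0 : ℂ)) + ((0 : ℝ), z') := by simp
    have : ((ContinuousLinearMap.apply ℝ ℂ ((0 : ℝ), (1 : ℂ))).comp L) (1, z') =
        L ((1 : ℝ), (0 : ℂ)) ((0 : ℝ), (1 : ℂ)) + L ((0 : ℝ), z') ((0 : ℝ), (1 : ℂ)) := by
      rw [ContinuousLinearMap.comp_apply, hsplit, map_add]
      simp
    rw [this, hsymm ((1 : ℝ), (0 : ℂ)) ((0 : ℝ), (1 : ℂ)), hA, hB]
    have hg : g ≠ 0 := hne t ht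
    field_simp
    linear_combination g2 * himp
  rw [hval] at hmain
  -- transfer to the original function
  have hev : (fun τ : ℝ => deriv (θ τ) (ζ τ)) =ᶠ[nhds t] (fun τ : ℝ => F (τ, ζ τ)) := by
    have hI : ∀ᶠ τ in nhds t, τ ∈ I := hIopen.eventually_mem ht
    have hU' : ∀ᶠ τ in nhds t, ζ τ ∈ U :=
      (hζdiff t ht).continuousAt.eventually_mem (hUopen.mem_nhds hζt)
    filter_upwards [hI, hU'] with τ hτ hwτ
    exact (hFeq τ hτ (ζ τ) hwτ).symm
  exact hmain.congr_of_eventuallyEq hev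
end

section
/- (A priori bounds for the nonlinear Fourier transform data.) Let x ∈ ℝ, let f : [0,∞) → ℂ be locally integrable, and let a, b : [0,∞) → ℂ be differentiable functions satisfying a'(t) = e^{2ixt} conj(f(t)) conj(b(t)), b'(t) = e^{2ixt} conj(f(t)) conj(a(t)), with a(0) = 1 and b(0) = 0. Then for every t ≥ 0, writing F(t) := ∫_0^t |f(s)| ds, one has |b(t)| ≤ sinh(F(t)) and |a(t) − 1| ≤ cosh(F(t)) − 1. -/
set_option maxHeartbeats 1000000

open MeasureTheory Set Filter Nat in

lemma nlft_pow_integral (g : ℝ → ℝ) (hm : Measurable g) (h0 : ∀ s, 0 ≤ g s)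
    (hint : ∀ T : ℝ, IntegrableOn g (Ioc 0 T)) (k : ℕ) :
    ∀ t : ℝ, 0 ≤ t →
      ∫ s in Ioc (0:ℝ) t, g s * (∫ r in Ioc (0:ℝ) s, g r) ^ k
        = (∫ s in Ioc (0:ℝ) t, g s) ^ (k + 1) / (k + 1) := by
  set G : ℝ → ℝ := fun s => ∫ r in Ioc (0:ℝ) s, g r with hG
  have hGnn : ∀ s, 0 ≤ G s := fun s => setIntegral_nonneg measurableSet_Ioc fun r _ => h0 r
  have hGmono : Monotone G := by
    intro u v huv
    exact setIntegral_mono_set (hint v) (Filter.Eventually.of_forall fun r => h0 r)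
      (HasSubset.Subset.eventuallyLE (Ioc_subset_Ioc_right huv))
  have hGmeas : Measurable G := hGmono.measurable
  have hGadd : ∀ u v : ℝ, 0 ≤ u → u ≤ v → ∫ r in Ioc u v, g r = G v - G u := by
    intro u v hu huv
    have hdisj : Disjoint (Ioc (0:ℝ) u) (Ioc u v) := Set.Ioc_disjoint_Ioc_of_le le_rfl
    have hunion : Ioc (0:ℝ) u ∪ Ioc u v = Ioc 0 v := Ioc_union_Ioc_eq_Ioc hu huv
    have := setIntegral_union hdisj measurableSet_Ioc
      ((hint u).mono_set Subset.rfl) ((hint v).mono_set (Ioc_subset_Ioc_left hu))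
    rw [hunion] at this
    simp only [hG] at *
    linarith [this]
  induction k with
  | zero =>
      intro t ht
      simp
  | succ k IH =>
      intro t ht
      set μ := volume.restrict (Ioc (0:ℝ) t) with hμ
      have hgint : Integrable g μ := hint t
      have hpowint : ∀ j : ℕ, Integrable (fun r => g r * G r ^ j) μ := by
        intro j
        refine Integrable.mono' (hgint.mul_const (G t ^ j))
          ((hm.mul ((hGmeas.pow_const j))).aestronglyMeasurable) ?_
        filter_upwards [ae_restrict_mem measurableSet_Ioc] with r hr
        rw [Real.norm_eq_abs, abs_of_nonneg (mul_nonneg (h0 r) (pow_nonneg (hGnn r) j))]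
        exact mul_le_mul_of_nonneg_left
          (pow_le_pow_left₀ (hGnn r) (hGmono hr.2) j) (h0 r)
      set F : ℝ × ℝ → ℝ :=
        fun p => Set.indicator {q : ℝ × ℝ | q.2 ≤ q.1}
          (fun q => g q.1 * (g q.2 * G q.2 ^ k)) p with hF
      have hFmeas : Measurable F := by
        apply Measurable.indicator
        · exact (hm.comp measurable_fst).mul
            ((hm.comp measurable_snd).mul ((hGmeas.comp measurable_snd).pow_const k))
        · exact measurableSet_le measurable_snd measurable_fst
      have hFint : Integrable F (μ.prod μ) := by
        refine Integrable.mono' (Integrable.mul_prod hgint (hpowint k))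
          hFmeas.aestronglyMeasurable ?_
        rw [hμ, Measure.prod_restrict]
        filter_upwards [ae_restrict_mem (measurableSet_Ioc.prod measurableSet_Ioc)] with p hp
        rw [Real.norm_eq_abs]
        simp only [hF, Set.indicator_apply, Set.mem_setOf_eq]
        split_ifs with h
        · rw [abs_of_nonneg (mul_nonneg (h0 _) (mul_nonneg (h0 _) (pow_nonneg (hGnn _) k)))]
        · rw [abs_zero]
          exact mul_nonneg (h0 _) (mul_nonneg (h0 _) (pow_nonneg (hGnn _) k))
      -- Step 1 : L = (k+1) * double integral
      have step1 : ∫ s in Ioc (0:ℝ) t, g s * G s ^ (k+1)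
          = ((k:ℝ)+1) * ∫ s, (∫ r, F (s, r) ∂μ) ∂μ := by
        rw [← integral_const_mul]
        apply setIntegral_congr_fun measurableSet_Ioc
        intro s hs
        show g s * G s ^ (k+1) = ((k:ℝ)+1) * ∫ r, F (s, r) ∂μ
        have inner : ∫ r, F (s, r) ∂μ = g s * (G s ^ (k+1) / ((k:ℝ)+1)) := by
          have : (fun r => F (s, r))
              = Set.indicator (Iic s) (fun r => g s * (g r * G r ^ k)) := by
            ext r
            simp only [hF, Set.indicator_apply, Set.mem_setOf_eq, mem_Iic]
          rw [this, integral_indicator measurableSet_Iic, hμ,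
            Measure.restrict_restrict measurableSet_Iic]
          have hset : Iic s ∩ Ioc 0 t = Ioc 0 s := by
            ext r
            simp only [mem_inter_iff, mem_Iic, mem_Ioc]
            exact ⟨fun ⟨h1, h2, h3⟩ => ⟨h2, h1⟩, fun ⟨h1, h2⟩ => ⟨h2, h1, h2.trans hs.2⟩⟩
          rw [hset, integral_const_mul, IH s (le_of_lt hs.1)]
        rw [inner]
        field_simp
      -- Step 2 : swap
      have step2 : ∫ s, (∫ r, F (s, r) ∂μ) ∂μ = ∫ r, (∫ s, F (s, r) ∂μ) ∂μ :=
        integral_integral_swap hFint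
      -- Step 3 : inner integral of swapped
      have step3 : ∫ r, (∫ s, F (s, r) ∂μ) ∂μ
          = ∫ r in Ioc (0:ℝ) t, (G t - G r) * (g r * G r ^ k) := by
        apply setIntegral_congr_fun measurableSet_Ioc
        intro r hr
        show (∫ s, F (s, r) ∂μ) = (G t - G r) * (g r * G r ^ k)
        have : (fun s => F (s, r))
            = Set.indicator (Ici r) (fun s => g s * (g r * G r ^ k)) := by
          ext s
          simp only [hF, Set.indicator_apply, Set.mem_setOf_eq, mem_Ici]
        rw [this, integral_indicator measurableSet_Ici, hμ,
          Measure.restrict_restrict measurableSet_Ici]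
        have hset : Ici r ∩ Ioc 0 t = Icc r t := by
          ext s
          simp only [mem_inter_iff, mem_Ici, mem_Ioc, mem_Icc]
          exact ⟨fun ⟨h1, _, h3⟩ => ⟨h1, h3⟩, fun ⟨h1, h2⟩ => ⟨h1, hr.1.trans_le h1, h2⟩⟩
        rw [hset, integral_Icc_eq_integral_Ioc, integral_mul_const,
          hGadd r t (le_of_lt hr.1) hr.2]
      -- put together
      have hIH' : ∫ r in Ioc (0:ℝ) t, g r * G r ^ k = G t ^ (k+1) / ((k:ℝ)+1) := IH t ht
      have split : ∫ r in Ioc (0:ℝ) t, (G t - G r) * (g r * G r ^ k)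
          = G t * (G t ^ (k+1) / ((k:ℝ)+1)) - ∫ r in Ioc (0:ℝ) t, g r * G r ^ (k+1) := by
        have e1 : ∀ r : ℝ, (G t - G r) * (g r * G r ^ k)
            = G t * (g r * G r ^ k) - g r * G r ^ (k+1) := by intro r; ring
        simp_rw [e1]
        rw [integral_sub ((hpowint k).const_mul (G t)) (hpowint (k+1)),
          integral_const_mul, hIH']
      have hk1 : ((k:ℝ)+1) ≠ 0 := by positivity
      have hk2 : ((k:ℝ)+2) ≠ 0 := by positivity
      have key : ∫ s in Ioc (0:ℝ) t, g s * G s ^ (k+1)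
          = G t ^ (k+2) - ((k:ℝ)+1) * ∫ s in Ioc (0:ℝ) t, g s * G s ^ (k+1) := by
        nth_rewrite 1 [step1]
        rw [step2, step3, split]
        field_simp
        ring
      have goal : ∫ s in Ioc (0:ℝ) t, g s * G s ^ (k+1) = G t ^ (k+2) / ((k:ℝ)+2) := by
        field_simp
        linarith [key]
      calc ∫ s in Ioc (0:ℝ) t, g s * G s ^ (k+1) = G t ^ (k+2) / ((k:ℝ)+2) := goal
        _ = G t ^ (k + 1 + 1) / (↑(k+1) + 1) := by push_cast; ring_nf


open MeasureTheory Set Filter Nat in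

open MeasureTheory Set Filter Nat in
lemma nlft_hasSum_exp (x : ℝ) : HasSum (fun n => x ^ n / n !) (Real.exp x) := by
  rw [Real.exp_eq_exp_ℝ]
  exact NormedSpace.expSeries_div_hasSum_exp x

open MeasureTheory Set Filter Nat in
lemma nlft_tendsto_odd (x : ℝ) :
    Tendsto (fun n => ∑ k ∈ Finset.range n, (if Odd k then x ^ k / k ! else 0))
      atTop (nhds (Real.sinh x)) := by
  have h1 := (nlft_hasSum_exp x).tendsto_sum_nat
  have h2 := (nlft_hasSum_exp (-x)).tendsto_sum_nat
  have h3 := (h1.sub h2).div_const 2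
  have heq : ∀ n : ℕ, ∑ k ∈ Finset.range n, (if Odd k then x ^ k / k ! else 0)
      = ((∑ k ∈ Finset.range n, x ^ k / k !) - ∑ k ∈ Finset.range n, (-x) ^ k / k !) / 2 := by
    intro n
    rw [← Finset.sum_sub_distrib, Finset.sum_div]
    apply Finset.sum_congr rfl
    intro k _
    rcases Nat.even_or_odd k with he | ho
    · rw [if_neg (by simpa using he), he.neg_pow]; ring
    · rw [if_pos ho, ho.neg_pow]; ring
  rw [Real.sinh_eq]
  simp only [heq]
  exact h3

open MeasureTheory Set Filter Nat in
lemma nlft_tendsto_even (x : ℝ) :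
    Tendsto (fun n => ∑ k ∈ Finset.range n, (if Even k then x ^ k / k ! else 0))
      atTop (nhds (Real.cosh x)) := by
  have h1 := (nlft_hasSum_exp x).tendsto_sum_nat
  have h2 := (nlft_hasSum_exp (-x)).tendsto_sum_nat
  have h3 := (h1.add h2).div_const 2
  have heq : ∀ n : ℕ, ∑ k ∈ Finset.range n, (if Even k then x ^ k / k ! else 0)
      = ((∑ k ∈ Finset.range n, x ^ k / k !) + ∑ k ∈ Finset.range n, (-x) ^ k / k !) / 2 := by
    intro n
    rw [← Finset.sum_add_distrib, Finset.sum_div]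
    apply Finset.sum_congr rfl
    intro k _
    rcases Nat.even_or_odd k with he | ho
    · rw [if_pos he, he.neg_pow]; ring
    · rw [if_neg (by simpa using ho), ho.neg_pow]; ring
  rw [Real.cosh_eq]
  simp only [heq]
  exact h3


noncomputable def nlftG (g : ℝ → ℝ) (u : ℝ) : ℝ := ∫ p in Set.Ioc (0:ℝ) u, g p

open MeasureTheory Set Filter Nat in
lemma nlft_powint (g : ℝ → ℝ) (hm : Measurable g) (h0 : ∀ s, 0 ≤ g s)
    (hint : ∀ T : ℝ, IntegrableOn g (Ioc 0 T)) (j : ℕ) (s : ℝ) :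
    IntegrableOn (fun r => g r * nlftG g r ^ j) (Ioc (0:ℝ) s) := by
  have hGnn : ∀ u, 0 ≤ nlftG g u := fun u => setIntegral_nonneg measurableSet_Ioc fun r _ => h0 r
  have hGmono : Monotone (nlftG g) := by
    intro u v huv
    exact setIntegral_mono_set (hint v) (Filter.Eventually.of_forall fun r => h0 r)
      (HasSubset.Subset.eventuallyLE (Ioc_subset_Ioc_right huv))
  refine Integrable.mono' ((hint s).mul_const (nlftG g s ^ j))
    ((hm.mul ((hGmono.measurable.pow_const j))).aestronglyMeasurable) ?_
  filter_upwards [ae_restrict_mem measurableSet_Ioc] with r hr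
  rw [Real.norm_eq_abs, abs_of_nonneg (mul_nonneg (h0 r) (pow_nonneg (hGnn r) j))]
  exact mul_le_mul_of_nonneg_left (pow_le_pow_left₀ (hGnn r) (hGmono hr.2) j) (h0 r)

open MeasureTheory Set Filter Nat in
lemma nlft_decomp (g : ℝ → ℝ) (c : ℕ → Prop) [DecidablePred c] (M : ℝ) (n : ℕ)
    (G : ℝ → ℝ) :
    (fun r => g r * ((∑ k ∈ Finset.range n, if c k then G r ^ k / k ! else 0)
        + M * (G r ^ n / n !)))
      = fun r => (∑ k ∈ Finset.range n,
          (if c k then (1 / (k ! : ℝ)) else 0) * (g r * G r ^ k))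
        + (M * (1 / (n ! : ℝ))) * (g r * G r ^ n) := by
  funext r
  rw [mul_add, Finset.mul_sum]
  congr 1
  · apply Finset.sum_congr rfl
    intro k _
    by_cases hc : c k
    · rw [if_pos hc, if_pos hc]; ring
    · rw [if_neg hc, if_neg hc]; ring
  · ring

open MeasureTheory Set Filter Nat in
lemma nlft_rhs_integrable (g : ℝ → ℝ) (hm : Measurable g) (h0 : ∀ s, 0 ≤ g s)
    (hint : ∀ T : ℝ, IntegrableOn g (Ioc 0 T)) (c : ℕ → Prop) [DecidablePred c] (M : ℝ)
    (n : ℕ) (s : ℝ) :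
    IntegrableOn (fun r => g r * ((∑ k ∈ Finset.range n,
        if c k then nlftG g r ^ k / k ! else 0)
      + M * (nlftG g r ^ n / n !))) (Ioc (0:ℝ) s) := by
  rw [nlft_decomp]
  exact (integrable_finset_sum _ (fun k _ =>
    (nlft_powint g hm h0 hint k s).const_mul _)).add
    ((nlft_powint g hm h0 hint n s).const_mul _)

open MeasureTheory Set Filter Nat in
lemma nlft_sum_integral (g : ℝ → ℝ) (hm : Measurable g) (h0 : ∀ s, 0 ≤ g s)
    (hint : ∀ T : ℝ, IntegrableOn g (Ioc 0 T)) (c : ℕ → Prop) [DecidablePred c] (M : ℝ)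
    (n : ℕ) (s : ℝ) (hs : 0 ≤ s) :
    ∫ r in Ioc (0:ℝ) s, (g r * ((∑ k ∈ Finset.range n,
        if c k then nlftG g r ^ k / k ! else 0)
      + M * (nlftG g r ^ n / n !)))
    = (∑ k ∈ Finset.range n,
        if c k then nlftG g s ^ (k+1) / (k+1)! else 0)
      + M * (nlftG g s ^ (n+1) / (n+1)!) := by
  rw [nlft_decomp]
  rw [integral_add (integrable_finset_sum _ (fun k _ =>
      (nlft_powint g hm h0 hint k s).const_mul _))
      ((nlft_powint g hm h0 hint n s).const_mul _)]
  rw [integral_finset_sum _ (fun k _ => (nlft_powint g hm h0 hint k s).const_mul _)]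
  have hterm : ∀ j : ℕ,
      ∫ r in Ioc (0:ℝ) s, (g r * nlftG g r ^ j)
        = nlftG g s ^ (j+1) / (j+1) := by
    intro j
    simp only [nlftG]
    exact nlft_pow_integral g hm h0 hint j s hs
  congr 1
  · apply Finset.sum_congr rfl
    intro k _
    rw [integral_const_mul, hterm k]
    by_cases hc : c k
    · rw [if_pos hc, if_pos hc, Nat.factorial_succ]
      push_cast
      rw [div_mul_eq_mul_div, one_mul, div_div]
    · rw [if_neg hc, if_neg hc, zero_mul]
  · rw [integral_const_mul, hterm n, Nat.factorial_succ]
    push_cast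
    rw [mul_assoc, div_mul_eq_mul_div, one_mul, div_div]

open Nat in
lemma nlft_reindex_odd (y : ℝ) (n : ℕ) :
    (∑ k ∈ Finset.range n, if Even k then y ^ (k+1) / (k+1)! else 0)
      = ∑ k ∈ Finset.range (n+1), if Odd k then y ^ k / k ! else 0 := by
  rw [Finset.sum_range_succ' (fun k => if Odd k then y ^ k / k ! else 0) n]
  simp only [Nat.odd_add_one, Nat.not_odd_iff_even]
  norm_num

open Nat in
lemma nlft_reindex_even (y : ℝ) (n : ℕ) :
    (∑ k ∈ Finset.range (n+1), if Even k then y ^ k / k ! else 0)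
      = 1 + ∑ k ∈ Finset.range n, if Odd k then y ^ (k+1) / (k+1)! else 0 := by
  rw [Finset.sum_range_succ' (fun k => if Even k then y ^ k / k ! else 0) n]
  simp only [Nat.even_add_one, Nat.not_even_iff_odd]
  norm_num
  exact add_comm _ _

open MeasureTheory Complex

/-- a priori bounds for the nonlinear Fourier transform data:
`|b(t)| ≤ sinh F(t)` and `|a(t) − 1| ≤ cosh F(t) − 1` with `F(t) = ∫₀ᵗ |f|`. -/
theorem a_priori_bounds_for_nlft_data
    (x : ℝ) (f a b : ℝ → ℂ)
    (hf : LocallyIntegrableOn f (Set.Ici 0))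
    (ha : ∀ t : ℝ, 0 ≤ t → HasDerivAt a
      (Complex.exp (2 * Complex.I * (x : ℂ) * (t : ℂ)) *
        (starRingEnd ℂ) (f t) * (starRingEnd ℂ) (b t)) t)
    (hb : ∀ t : ℝ, 0 ≤ t → HasDerivAt b
      (Complex.exp (2 * Complex.I * (x : ℂ) * (t : ℂ)) *
        (starRingEnd ℂ) (f t) * (starRingEnd ℂ) (a t)) t)
    (ha0 : a 0 = 1) (hb0 : b 0 = 0) :
    ∀ t : ℝ, 0 ≤ t →
      ‖b t‖ ≤ Real.sinh (∫ s in (0:ℝ)..t, ‖f s‖) ∧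
      ‖a t - 1‖ ≤ Real.cosh (∫ s in (0:ℝ)..t, ‖f s‖) - 1 := by
  classical
  intro t ht
  have hfm : AEStronglyMeasurable f (volume.restrict (Set.Ici 0)) := hf.aestronglyMeasurable
  have hn : AEMeasurable (fun s => ‖f s‖) (volume.restrict (Set.Ici 0)) :=
    hfm.norm.aemeasurable
  set g : ℝ → ℝ := (Set.Ici (0:ℝ)).indicator (fun s => max (hn.mk _ s) 0) with hgdef
  have hgmeas : Measurable g :=
    (hn.measurable_mk.max measurable_const).indicator measurableSet_Ici
  have hg0 : ∀ s, 0 ≤ g s := fun s => Set.indicator_nonneg (fun r _ => le_max_right _ _) s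
  have hgae : ∀ u : ℝ, (fun s => ‖f s‖) =ᵐ[volume.restrict (Set.Ioc 0 u)] g := by
    intro u
    have h1 : (fun s => ‖f s‖) =ᵐ[volume.restrict (Set.Ioc 0 u)] hn.mk _ :=
      ae_restrict_of_ae_restrict_of_subset (fun s hs => le_of_lt hs.1) hn.ae_eq_mk
    filter_upwards [h1, ae_restrict_mem measurableSet_Ioc] with s hs1 hs2
    rw [hgdef, Set.indicator_of_mem (Set.mem_Ici.2 (le_of_lt hs2.1)), ← hs1,
      max_eq_left (norm_nonneg _)]
  have hfOn : ∀ T : ℝ, IntegrableOn f (Set.Ioc 0 T) := by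
    intro T
    rcases le_or_gt T 0 with hT | hT
    · rw [Set.Ioc_eq_empty (not_lt.2 hT)]
      exact integrableOn_empty
    · exact (hf.integrableOn_compact_subset (fun s hs => hs.1) isCompact_Icc).mono_set
        Set.Ioc_subset_Icc_self
  have hgint : ∀ T : ℝ, IntegrableOn g (Set.Ioc 0 T) := by
    intro T
    exact Integrable.congr (hfOn T).norm (hgae T)
  have hGnn : ∀ u, 0 ≤ nlftG g u := fun u =>
    MeasureTheory.setIntegral_nonneg measurableSet_Ioc fun r _ => hg0 r
  have hGmono : ∀ u v : ℝ, u ≤ v → nlftG g u ≤ nlftG g v := by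
    intro u v huv
    exact MeasureTheory.setIntegral_mono_set (hgint v)
      (Filter.Eventually.of_forall fun r => hg0 r)
      (HasSubset.Subset.eventuallyLE (Set.Ioc_subset_Ioc_right huv))
  have hexp : ∀ s : ℝ, ‖Complex.exp (2 * Complex.I * (x:ℂ) * (s:ℂ))‖ = 1 := by
    intro s
    rw [Complex.norm_exp]
    norm_num
  -- FTC-based integral inequality
  have key : ∀ (p q : ℝ → ℂ), (∀ s : ℝ, 0 ≤ s → HasDerivAt p
        (Complex.exp (2 * Complex.I * (x : ℂ) * (s : ℂ)) *
          (starRingEnd ℂ) (f s) * (starRingEnd ℂ) (q s)) s) →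
      (∀ s : ℝ, 0 ≤ s → ContinuousAt q s) →
      ∀ u : ℝ, 0 ≤ u →
        ‖p u - p 0‖ ≤ ∫ r in Set.Ioc (0:ℝ) u, g r * ‖q r‖ := by
    intro p q hp hqc u hu
    set dp : ℝ → ℂ := fun s => Complex.exp (2 * Complex.I * (x:ℂ) * (s:ℂ)) *
      (starRingEnd ℂ) (f s) * (starRingEnd ℂ) (q s) with hdp
    have hqcon : ContinuousOn q (Set.Icc 0 u) := fun s hs => (hqc s hs.1).continuousWithinAt
    obtain ⟨C, hC⟩ := (isCompact_Icc : IsCompact (Set.Icc (0:ℝ) u)).exists_bound_of_continuousOn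
      hqcon
    have hdpm : AEStronglyMeasurable dp (volume.restrict (Set.Ioc 0 u)) := by
      refine AEStronglyMeasurable.mul (AEStronglyMeasurable.mul ?_ ?_) ?_
      · exact (Complex.continuous_exp.comp
          ((continuous_const.mul Complex.continuous_ofReal))).aestronglyMeasurable
      · exact Complex.continuous_conj.comp_aestronglyMeasurable
          (hfm.mono_set (fun s hs => le_of_lt hs.1))
      · exact Complex.continuous_conj.comp_aestronglyMeasurable
          ((hqcon.mono Set.Ioc_subset_Icc_self).aestronglyMeasurable measurableSet_Ioc)
    have hnorm : ∀ s : ℝ, ‖dp s‖ = ‖f s‖ * ‖q s‖ := by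
      intro s
      rw [hdp]
      simp only [norm_mul, hexp s, one_mul, RCLike.norm_conj]
    have hdpi : IntervalIntegrable dp volume 0 u := by
      rw [intervalIntegrable_iff_integrableOn_Ioc_of_le hu]
      refine Integrable.mono' (((hfOn u).norm.mul_const C)) hdpm ?_
      filter_upwards [ae_restrict_mem measurableSet_Ioc] with s hs
      rw [hnorm s]
      exact mul_le_mul_of_nonneg_left (hC s ⟨hs.1.le, hs.2⟩) (norm_nonneg _)
    have hFTC : ∫ s in (0:ℝ)..u, dp s = p u - p 0 := by
      apply intervalIntegral.integral_eq_sub_of_hasDerivAt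
      · intro s hs
        rw [Set.uIcc_of_le hu] at hs
        exact hp s hs.1
      · exact hdpi
    calc ‖p u - p 0‖ = ‖∫ s in (0:ℝ)..u, dp s‖ := by
          rw [hFTC]
      _ ≤ ∫ s in (0:ℝ)..u, ‖dp s‖ := intervalIntegral.norm_integral_le_integral_norm hu
      _ = ∫ s in Set.Ioc (0:ℝ) u, ‖dp s‖ := by rw [intervalIntegral.integral_of_le hu]
      _ = ∫ r in Set.Ioc (0:ℝ) u, g r * ‖q r‖ := by
          apply integral_congr_ae
          filter_upwards [hgae u] with s hs
          rw [hnorm s, hs]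
  have hBb : ∀ u : ℝ, 0 ≤ u →
      ‖b u‖ ≤ ∫ r in Set.Ioc (0:ℝ) u, g r * ‖a r‖ := by
    intro u hu
    have := key b a hb (fun s hs => (ha s hs).continuousAt) u hu
    rwa [hb0, sub_zero] at this
  have hBa : ∀ u : ℝ, 0 ≤ u →
      ‖a u - 1‖ ≤ ∫ r in Set.Ioc (0:ℝ) u, g r * ‖b r‖ := by
    intro u hu
    have := key a b ha (fun s hs => (hb s hs).continuousAt) u hu
    rwa [ha0] at this
  -- uniform bound on [0, t]
  have hconta : ContinuousOn a (Set.Icc 0 t) := fun s hs =>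
    ((ha s hs.1).continuousAt).continuousWithinAt
  have hcontb : ContinuousOn b (Set.Icc 0 t) := fun s hs =>
    ((hb s hs.1).continuousAt).continuousWithinAt
  obtain ⟨Ca, hCa⟩ :=
    (isCompact_Icc : IsCompact (Set.Icc (0:ℝ) t)).exists_bound_of_continuousOn hconta
  obtain ⟨Cb, hCb⟩ :=
    (isCompact_Icc : IsCompact (Set.Icc (0:ℝ) t)).exists_bound_of_continuousOn hcontb
  set M : ℝ := max Ca 0 + max Cb 0 with hM
  have hMa : ∀ s ∈ Set.Icc (0:ℝ) t, ‖a s‖ ≤ M := by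
    intro s hs
    have h1 : ‖a s‖ ≤ Ca := hCa s hs
    have h2 : (0:ℝ) ≤ max Cb 0 := le_max_right Cb 0
    have h3 : Ca ≤ max Ca 0 := le_max_left _ _
    rw [hM]; linarith
  have hMb : ∀ s ∈ Set.Icc (0:ℝ) t, ‖b s‖ ≤ M := by
    intro s hs
    have h1 : ‖b s‖ ≤ Cb := hCb s hs
    have h2 : (0:ℝ) ≤ max Ca 0 := le_max_right Ca 0
    have h3 : Cb ≤ max Cb 0 := le_max_left _ _
    rw [hM]; linarith
  -- integrability of g * |a|, g * |b|
  have hIa : ∀ s : ℝ, 0 ≤ s → s ≤ t →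
      IntegrableOn (fun r => g r * ‖a r‖) (Set.Ioc 0 s) := by
    intro s hs0 hst
    refine Integrable.mono' ((hgint s).mul_const M) ?_ ?_
    · exact hgmeas.aestronglyMeasurable.mul
        ((continuous_norm.comp_continuousOn
          (hconta.mono (fun r hr => ⟨hr.1.le, hr.2.trans hst⟩))).aestronglyMeasurable
          measurableSet_Ioc)
    · filter_upwards [ae_restrict_mem measurableSet_Ioc] with r hr
      rw [Real.norm_eq_abs, _root_.abs_of_nonneg (mul_nonneg (hg0 r) (norm_nonneg _))]
      exact mul_le_mul_of_nonneg_left (hMa r ⟨hr.1.le, hr.2.trans hst⟩) (hg0 r)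
  have hIb : ∀ s : ℝ, 0 ≤ s → s ≤ t →
      IntegrableOn (fun r => g r * ‖b r‖) (Set.Ioc 0 s) := by
    intro s hs0 hst
    refine Integrable.mono' ((hgint s).mul_const M) ?_ ?_
    · exact hgmeas.aestronglyMeasurable.mul
        ((continuous_norm.comp_continuousOn
          (hcontb.mono (fun r hr => ⟨hr.1.le, hr.2.trans hst⟩))).aestronglyMeasurable
          measurableSet_Ioc)
    · filter_upwards [ae_restrict_mem measurableSet_Ioc] with r hr
      rw [Real.norm_eq_abs, _root_.abs_of_nonneg (mul_nonneg (hg0 r) (norm_nonneg _))]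
      exact mul_le_mul_of_nonneg_left (hMb r ⟨hr.1.le, hr.2.trans hst⟩) (hg0 r)
  -- the main induction
  have main : ∀ n : ℕ, ∀ s ∈ Set.Icc (0:ℝ) t,
      ‖a s‖ ≤ (∑ k ∈ Finset.range n,
          if Even k then nlftG g s ^ k / (Nat.factorial k) else 0)
        + M * (nlftG g s ^ n / (Nat.factorial n)) ∧
      ‖b s‖ ≤ (∑ k ∈ Finset.range n,
          if Odd k then nlftG g s ^ k / (Nat.factorial k) else 0)
        + M * (nlftG g s ^ n / (Nat.factorial n)) := by
    intro n
    induction n with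
    | zero =>
      intro s hs
      constructor
      · simpa using hMa s hs
      · simpa using hMb s hs
    | succ n IH =>
      intro s hs
      have hs0 := hs.1
      have hst := hs.2
      have monoa : (∫ r in Set.Ioc (0:ℝ) s, g r * ‖a r‖)
          ≤ ∫ r in Set.Ioc (0:ℝ) s, (g r * ((∑ k ∈ Finset.range n,
              if Even k then nlftG g r ^ k / (Nat.factorial k) else 0)
            + M * (nlftG g r ^ n / (Nat.factorial n)))) := by
        refine MeasureTheory.setIntegral_mono_on (hIa s hs0 hst)
          (nlft_rhs_integrable g hgmeas hg0 hgint Even M n s) measurableSet_Ioc ?_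
        intro r hr
        exact mul_le_mul_of_nonneg_left ((IH r ⟨hr.1.le, hr.2.trans hst⟩).1) (hg0 r)
      have monob : (∫ r in Set.Ioc (0:ℝ) s, g r * ‖b r‖)
          ≤ ∫ r in Set.Ioc (0:ℝ) s, (g r * ((∑ k ∈ Finset.range n,
              if Odd k then nlftG g r ^ k / (Nat.factorial k) else 0)
            + M * (nlftG g r ^ n / (Nat.factorial n)))) := by
        refine MeasureTheory.setIntegral_mono_on (hIb s hs0 hst)
          (nlft_rhs_integrable g hgmeas hg0 hgint Odd M n s) measurableSet_Ioc ?_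
        intro r hr
        exact mul_le_mul_of_nonneg_left ((IH r ⟨hr.1.le, hr.2.trans hst⟩).2) (hg0 r)
      have suma := nlft_sum_integral g hgmeas hg0 hgint Even M n s hs0
      have sumb := nlft_sum_integral g hgmeas hg0 hgint Odd M n s hs0
      constructor
      · have htri : ‖a s‖ ≤ ‖a s - 1‖ + 1 := by
          have h := norm_add_le (a s - 1) 1
          rwa [sub_add_cancel, norm_one] at h
        have h1 := hBa s hs0
        have h2 : ‖a s‖
            ≤ ((∑ k ∈ Finset.range n,
                if Odd k then nlftG g s ^ (k+1) / (Nat.factorial (k+1)) else 0)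
              + M * (nlftG g s ^ (n+1) / (Nat.factorial (n+1)))) + 1 := by
          rw [← sumb]
          linarith
        have h3 := nlft_reindex_even (nlftG g s) n
        rw [h3]
        linarith
      · have h1 := hBb s hs0
        have h2 : ‖b s‖
            ≤ (∑ k ∈ Finset.range n,
                if Even k then nlftG g s ^ (k+1) / (Nat.factorial (k+1)) else 0)
              + M * (nlftG g s ^ (n+1) / (Nat.factorial (n+1))) := by
          rw [← suma]
          linarith
        have h3 := nlft_reindex_odd (nlftG g s) n
        rw [← h3]
        exact h2
  -- identify F(t) with nlftG g t
  have hFt : (∫ s in (0:ℝ)..t, ‖f s‖) = nlftG g t := by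
    rw [intervalIntegral.integral_of_le ht]
    apply integral_congr_ae
    filter_upwards [hgae t] with s hs
    rw [← hs]
  have hrem : Filter.Tendsto (fun n : ℕ => M * (nlftG g t ^ n / (Nat.factorial n)))
      Filter.atTop (nhds 0) := by
    have h := FloorSemiring.tendsto_pow_div_factorial_atTop (nlftG g t)
    simpa using h.const_mul M
  constructor
  · rw [hFt]
    have hlim : Filter.Tendsto (fun n : ℕ => (∑ k ∈ Finset.range n,
        if Odd k then nlftG g t ^ k / (Nat.factorial k) else 0)
          + M * (nlftG g t ^ n / (Nat.factorial n)))
        Filter.atTop (nhds (Real.sinh (nlftG g t))) := by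
      simpa using (nlft_tendsto_odd (nlftG g t)).add hrem
    exact ge_of_tendsto' hlim (fun n => (main n t ⟨ht, le_refl t⟩).2)
  · rw [hFt]
    have hseq : ∀ n : ℕ, ‖a t - 1‖ ≤
        ((∑ k ∈ Finset.range (n+1),
            if Even k then nlftG g t ^ k / (Nat.factorial k) else 0) - 1)
          + M * (nlftG g t ^ (n+1) / (Nat.factorial (n+1))) := by
      intro n
      have h1 := hBa t ht
      have h2 : (∫ r in Set.Ioc (0:ℝ) t, g r * ‖b r‖)
          ≤ ∫ r in Set.Ioc (0:ℝ) t, (g r * ((∑ k ∈ Finset.range n,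
              if Odd k then nlftG g r ^ k / (Nat.factorial k) else 0)
            + M * (nlftG g r ^ n / (Nat.factorial n)))) := by
        refine MeasureTheory.setIntegral_mono_on (hIb t ht (le_refl t))
          (nlft_rhs_integrable g hgmeas hg0 hgint Odd M n t) measurableSet_Ioc ?_
        intro r hr
        exact mul_le_mul_of_nonneg_left ((main n r ⟨hr.1.le, hr.2⟩).2) (hg0 r)
      have h3 := nlft_sum_integral g hgmeas hg0 hgint Odd M n t ht
      have h4 := nlft_reindex_even (nlftG g t) n
      rw [h4]
      rw [h3] at h2
      linarith
    have hlim2 : Filter.Tendsto (fun n : ℕ => ((∑ k ∈ Finset.range (n+1),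
        if Even k then nlftG g t ^ k / (Nat.factorial k) else 0) - 1)
          + M * (nlftG g t ^ (n+1) / (Nat.factorial (n+1))))
        Filter.atTop (nhds (Real.cosh (nlftG g t) - 1)) := by
      have h4 := (nlft_tendsto_even (nlftG g t)).comp
        (Filter.tendsto_add_atTop_nat 1)
      have h5 := hrem.comp (Filter.tendsto_add_atTop_nat 1)
      simpa [Function.comp] using (h4.sub tendsto_const_nhds).add h5
    exact ge_of_tendsto' hlim2 hseq
end
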